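/- arXiv:1811.02490 — 4 statements merged into one kernel-verified Lean document; each statement's English description precedes it below -/
import Mathlib

section
/- For any indexed root ideals (Ψ,μ) and (Φ,ν), the t = 1 specializations of Catalan functions multiply as H(Ψ;μ)(x;1) · H(Φ;ν)(x;1) = H(Ψ⊎Φ;μν)(x;1). -/
open scoped BigOperators Classical

noncomputable section

/-- The coefficient ring `ℤ[t]`, with `t = Polynomial.X`. -/
abbrev CR : Type := Polynomial ℤ

/-- The ring of symmetric functions `Λ = ℤ[t][h₁,h₂,…]`, modeled as the polynomial
ring over `ℤ[t]` in countably many variables, where the variable `X n`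
represents the complete homogeneous symmetric function `h_{n+1}`. -/
abbrev SymF : Type := MvPolynomial ℕ CR

/-- `t` as an element of `Λ`. -/
def tC : SymF := MvPolynomial.C Polynomial.X

/-- The complete homogeneous symmetric function `h_d` for `d : ℤ`:
`h_0 = 1` and `h_d = 0` for `d < 0`. -/
def hh (d : ℤ) : SymF :=
  if d < 0 then 0 else if d = 0 then 1 else MvPolynomial.X (d.toNat - 1)

/-- The (possibly non-partition-indexed) Schur function
`s_γ = det (h_{γ_i + j - i})_{1 ≤ i,j ≤ ℓ}`. -/
def schur {ℓ : ℕ} (γ : Fin ℓ → ℤ) : SymF :=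
  (Matrix.of fun i j : Fin ℓ => hh (γ i + (j : ℤ) - (i : ℤ))).det

/-- The poset of positive roots `Δ⁺_ℓ = {(i,j) : 1 ≤ i < j ≤ ℓ}` (0-based here). -/
def Dplus (ℓ : ℕ) : Finset (Fin ℓ × Fin ℓ) := Finset.univ.filter fun p => p.1 < p.2

/-- `Ψ` is a root ideal: an upper order ideal of `Δ⁺_ℓ`, where
`(a,b) ≤ (c,d)` iff `a ≥ c` and `b ≤ d`. -/
def IsRootIdeal {ℓ : ℕ} (Ψ : Finset (Fin ℓ × Fin ℓ)) : Prop :=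
  Ψ ⊆ Dplus ℓ ∧ ∀ p ∈ Ψ, ∀ q ∈ Dplus ℓ, q.1 ≤ p.1 → p.2 ≤ q.2 → q ∈ Ψ

/-- The Catalan function `H(Ψ;γ) = ∏_{(i,j) ∈ Ψ} (1 - t R_{ij})⁻¹ s_γ`, written out
as the (finitely supported) sum over all ways `n` of applying raising operators
`R_{ij}` with `(i,j) ∈ Ψ`. -/
def catalanFn {ℓ : ℕ} (Ψ : Finset (Fin ℓ × Fin ℓ)) (γ : Fin ℓ → ℤ) : SymF :=
  ∑ᶠ n : Fin ℓ × Fin ℓ → ℕ,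
    if ∀ p, p ∉ Ψ → n p = 0 then
      tC ^ (∑ p : Fin ℓ × Fin ℓ, n p) *
        schur (fun a => γ a + ∑ p : Fin ℓ × Fin ℓ,
          (n p : ℤ) * ((if p.1 = a then 1 else 0) - (if p.2 = a then 1 else 0)))
    else 0

/-- `nr(Ψ)_i`: the number of non-roots of `Ψ` in row `i` (0-based row index,
extended by `0` out of range). -/
def nrN {ℓ : ℕ} (Ψ : Finset (Fin ℓ × Fin ℓ)) (i : ℕ) : ℕ :=
  ((Dplus ℓ \ Ψ).filter fun p => (p.1 : ℕ) = i).card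

/-- `μ ∈ Par^k_ℓ`: a partition with at most `ℓ` parts, all of size at most `k`. -/
def IsPartitionK (k : ℕ) {ℓ : ℕ} (μ : Fin ℓ → ℕ) : Prop :=
  (∀ i j : Fin ℓ, i ≤ j → μ j ≤ μ i) ∧ ∀ i, μ i ≤ k

/-- The root ideal `Δᵏ(μ) = {(i,j) ∈ Δ⁺_ℓ : k - μ_i + i < j}` (1-based), here with
0-based indices. -/
def Dk (k : ℕ) {ℓ : ℕ} (μ : Fin ℓ → ℕ) : Finset (Fin ℓ × Fin ℓ) :=
  (Dplus ℓ).filter fun p => (k : ℤ) - μ p.1 + (p.1 : ℤ) < (p.2 : ℤ)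

/-- The `k`-Schur Catalan function `s^{(k)}_μ = H(Δᵏ(μ); μ)`. -/
def kSchur (k : ℕ) {ℓ : ℕ} (μ : Fin ℓ → ℕ) : SymF :=
  catalanFn (Dk k μ) fun i => (μ i : ℤ)

/-- The modified Hall–Littlewood polynomial `H_μ(x;t) = H(Δ⁺;μ)`. -/
def hallLittlewood {ℓ : ℕ} (μ : Fin ℓ → ℕ) : SymF :=
  catalanFn (Dplus ℓ) fun i => (μ i : ℤ)

/-- `Λᵏ`, the `ℤ[t]`-span of the modified Hall–Littlewood polynomials `H_μ`
for `μ ∈ Par^k`. -/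
def LambdaK (k : ℕ) : Submodule CR SymF :=
  Submodule.span CR {f | ∃ (ℓ : ℕ) (μ : Fin ℓ → ℕ),
    IsPartitionK k μ ∧ (∀ i, 0 < μ i) ∧ f = hallLittlewood μ}

/-- Extend a finite tuple by zeros. -/
def extendFin {ℓ : ℕ} (μ : Fin ℓ → ℕ) : ℕ → ℕ := fun i => if h : i < ℓ then μ ⟨i, h⟩ else 0

/-- Extend a finite integer tuple by zeros. -/
def extendFinZ {ℓ : ℕ} (γ : Fin ℓ → ℤ) : ℕ → ℤ := fun i => if h : i < ℓ then γ ⟨i, h⟩ else 0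

/-- `style(Ψ,γ)_i = nr(Ψ)_i + γ_i` (0-based row index `i`). -/
def styleZN {ℓ : ℕ} (Ψ : Finset (Fin ℓ × Fin ℓ)) (γ : Fin ℓ → ℤ) (i : ℕ) : ℤ :=
  (nrN Ψ i : ℤ) + extendFinZ γ i


section Operators

/-- The generating series `∑_j (h_j^⊥ f) u^j` of the skewing operators `h_j^⊥`
(the adjoints of multiplication by `h_j` for the Hall inner product), as the
`ℤ[t]`-algebra map determined by `h_n ↦ ∑_{j=0}^{n} h_{n-j} u^j`. -/
def hPerpSeries : SymF →ₐ[CR] Polynomial SymF :=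
  MvPolynomial.aeval fun n : ℕ =>
    ∑ j ∈ Finset.range (n + 2), Polynomial.C (hh ((n : ℤ) + 1 - j)) * Polynomial.X ^ j

/-- The skewing operator `h_j^⊥`. -/
def hPerp (j : ℕ) (f : SymF) : SymF := (hPerpSeries f).coeff j

/-- The generating series `∑_i (e_i^⊥ f) u^i` of the skewing operators `e_i^⊥`
(the adjoints of multiplication by the elementary symmetric functions `e_i`),
as the `ℤ[t]`-algebra map determined by `h_n ↦ h_n + h_{n-1} u`. -/
def ePerpSeries : SymF →ₐ[CR] Polynomial SymF :=
  MvPolynomial.aeval fun n : ℕ =>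
    Polynomial.C (hh ((n : ℤ) + 1)) + Polynomial.C (hh (n : ℤ)) * Polynomial.X

/-- The skewing operator `e_i^⊥`. -/
def ePerp (i : ℕ) (f : SymF) : SymF := (ePerpSeries f).coeff i

/-- The Garsia–Jing vertex operator `B_m = ∑_{i,j ≥ 0} (-1)^i t^j h_{m+i+j} e_i^⊥ h_j^⊥`. -/
def GJ (m : ℤ) (f : SymF) : SymF :=
  ∑ᶠ (i : ℕ) (j : ℕ), (-1 : SymF) ^ i * tC ^ j * hh (m + i + j) * ePerp i (hPerp j f)

/-- `B̃_γ = B_{γ_1} B_{γ_2} ⋯ B_{γ_ℓ}` (composition of Garsia–Jing operators). -/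
def GJt {ℓ : ℕ} (γ : Fin ℓ → ℤ) (f : SymF) : SymF := (List.ofFn γ).foldr GJ f

/-- The Catalan operator `H^Ψ_γ = ∏_{(i,j) ∈ Δ⁺_ℓ \ Ψ} (1 - t 𝐑_{ij}) B̃_γ`,
expanded as a finite signed sum over subsets of `Δ⁺_ℓ \ Ψ`. -/
def catalanOp {ℓ : ℕ} (Ψ : Finset (Fin ℓ × Fin ℓ)) (γ : Fin ℓ → ℤ) (f : SymF) : SymF :=
  ∑ S ∈ (Dplus ℓ \ Ψ).powerset, (-1 : SymF) ^ S.card * tC ^ S.card *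
    GJt (fun a => γ a + ∑ p ∈ S,
      ((if p.1 = a then 1 else 0) - (if p.2 = a then (1 : ℤ) else 0))) f

/-- The generalized Hall–Littlewood vertex operator
`B_γ = ∏_{(i,j) ∈ Δ⁺_ℓ} (1 - t 𝐑_{ij}) B̃_γ = H^∅_γ`. -/
def vertexB {ℓ : ℕ} (γ : Fin ℓ → ℤ) : SymF → SymF :=
  catalanOp (∅ : Finset (Fin ℓ × Fin ℓ)) γ

/-- The root ideal `Ψ ⊎ Φ ⊆ Δ⁺_{r+m}`, determined by
`Δ⁺_{r+m} \ (Ψ ⊎ Φ) = (Δ⁺_r \ Ψ) ⊔ {(i+r, j+r) : (i,j) ∈ Δ⁺_m \ Φ}`. -/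
def uplus {r m : ℕ} (Ψ : Finset (Fin r × Fin r)) (Φ : Finset (Fin m × Fin m)) :
    Finset (Fin (r + m) × Fin (r + m)) :=
  (Dplus (r + m)).filter fun p =>
    ¬((∃ q : Fin r × Fin r, q ∉ Ψ ∧ q.1 < q.2 ∧
          (p.1 : ℕ) = (q.1 : ℕ) ∧ (p.2 : ℕ) = (q.2 : ℕ)) ∨
      (∃ q : Fin m × Fin m, q ∉ Φ ∧ q.1 < q.2 ∧
          (p.1 : ℕ) = (q.1 : ℕ) + r ∧ (p.2 : ℕ) = (q.2 : ℕ) + r))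

/-- `Λ_ℤ = ℤ[h₁,h₂,…] = Λ/(t-1)`. -/
abbrev SymFZ : Type := MvPolynomial ℕ ℤ

/-- The specialization `t = 1`, i.e. the canonical projection `Λ → Λ/(t-1) = Λ_ℤ`. -/
def specT1 : SymF →+* SymFZ := MvPolynomial.map (Polynomial.evalRingHom 1)

end Operators

namespace CatAux

abbrev Rt (ℓ : ℕ) := Fin ℓ × Fin ℓ

/-- `h_d` in `Λ_ℤ`. -/
def h' (d : ℤ) : SymFZ := if d < 0 then 0 else if d = 0 then 1 else MvPolynomial.X (d.toNat - 1)

lemma specT1_hh (d : ℤ) : specT1 (hh d) = h' d := by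
  unfold hh h' specT1; split_ifs <;> simp

lemma specT1_tC : specT1 tC = 1 := by
  unfold tC specT1; simp

def sh {ℓ : ℕ} (n : Rt ℓ → ℕ) : Fin ℓ → ℤ := fun a =>
  ∑ p : Rt ℓ, (n p : ℤ) * ((if p.1 = a then 1 else 0) - (if p.2 = a then 1 else 0))

def chi {ℓ : ℕ} (S : Finset (Rt ℓ)) : Rt ℓ → ℕ := fun p => if p ∈ S then 1 else 0

def Hp {ℓ : ℕ} (ν : Fin ℓ → ℤ) : SymFZ := ∏ i, h' (ν i)

def Sc {ℓ : ℕ} (ν : Fin ℓ → ℤ) : SymFZ := specT1 (schur ν)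

lemma sh_add {ℓ} (n m : Rt ℓ → ℕ) : sh (n + m) = sh n + sh m := by
  funext a
  simp only [sh, Pi.add_apply, Nat.cast_add, add_mul, Finset.sum_add_distrib]

lemma sh_chi {ℓ} (S : Finset (Rt ℓ)) (a : Fin ℓ) :
    sh (chi S) a = ∑ p ∈ S, ((if p.1 = a then 1 else 0) - (if p.2 = a then (1:ℤ) else 0)) := by
  rw [sh, ← Finset.sum_filter_add_sum_filter_not Finset.univ (· ∈ S)]
  have h1 : Finset.filter (· ∈ S) Finset.univ = S := by
    ext p; simp
  rw [h1]
  have h2 : ∀ p ∈ Finset.filter (· ∉ S) Finset.univ,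
      ((chi S p : ℤ)) * ((if p.1 = a then 1 else 0) - (if p.2 = a then 1 else 0)) = 0 := by
    intro p hp
    simp only [Finset.mem_filter] at hp
    simp [chi, hp.2]
  rw [Finset.sum_eq_zero h2, add_zero]
  apply Finset.sum_congr rfl
  intro p hp; simp [chi, hp]

lemma hh_eq_zero {d : ℤ} (h : d < 0) : hh d = 0 := by simp [hh, h]

lemma h'_eq_zero {d : ℤ} (h : d < 0) : h' d = 0 := by simp [h', h]

lemma schur_eq_zero {ℓ} (ν : Fin ℓ → ℤ) (i : Fin ℓ) (h : ν i < (i:ℤ) + 1 - ℓ) :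
    schur ν = 0 := by
  apply Matrix.det_eq_zero_of_row_eq_zero i
  intro j
  apply hh_eq_zero
  have hj : (j:ℤ) ≤ (ℓ:ℤ) - 1 := by
    have := j.isLt; omega
  omega

lemma Hp_eq_zero {ℓ} {ν : Fin ℓ → ℤ} (i : Fin ℓ) (h : ν i < 0) : Hp ν = 0 :=
  Finset.prod_eq_zero (Finset.mem_univ i) (h'_eq_zero h)

/-- bound used for finiteness of supports -/
def Cb {ℓ : ℕ} (γ : Fin ℓ → ℤ) : ℤ := ∑ i : Fin ℓ, (i:ℤ) * (γ i + ℓ - 1 - i)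

lemma nval_le {ℓ} (γ : Fin ℓ → ℤ) (n : Rt ℓ → ℕ) (hs : ∀ p : Rt ℓ, ¬ p.1 < p.2 → n p = 0)
    (h : ∀ i : Fin ℓ, (i:ℤ) + 1 - ℓ ≤ γ i + sh n i) (q : Rt ℓ) :
    (n q : ℤ) ≤ Cb γ := by
  have step1 : ∑ i : Fin ℓ, (i:ℤ) * (- sh n i) = ∑ p : Rt ℓ, (n p : ℤ) * ((p.2:ℤ) - (p.1:ℤ)) := by
    simp only [sh, ← Finset.sum_neg_distrib, Finset.mul_sum]
    rw [Finset.sum_comm]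
    apply Finset.sum_congr rfl
    intro p _
    have : ∀ b : Fin ℓ, ∑ i : Fin ℓ, (i:ℤ) * -((n p : ℤ) *
        ((if p.1 = i then 1 else 0) - (if p.2 = i then 1 else 0))) =
        (n p : ℤ) * ((p.2:ℤ) - (p.1:ℤ)) := by
      intro b
      have : ∀ i : Fin ℓ, (i:ℤ) * -((n p : ℤ) *
          ((if p.1 = i then 1 else 0) - (if p.2 = i then 1 else 0))) =
          (n p : ℤ) * ((if p.2 = i then (i:ℤ) else 0) - (if p.1 = i then (i:ℤ) else 0)) := by
        intro i; split_ifs <;> ring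
      rw [Finset.sum_congr rfl (fun i _ => this i)]
      rw [← Finset.mul_sum, Finset.sum_sub_distrib]
      rw [Finset.sum_ite_eq Finset.univ p.2 (fun i => (i:ℤ)),
        Finset.sum_ite_eq Finset.univ p.1 (fun i => (i:ℤ))]
      simp
    exact this p.1
  have step2 : (n q : ℤ) ≤ ∑ p : Rt ℓ, (n p : ℤ) * ((p.2:ℤ) - (p.1:ℤ)) := by
    calc (n q : ℤ) ≤ ∑ p : Rt ℓ, (n p : ℤ) := by
          exact Finset.single_le_sum (f := fun p => ((n p : ℕ) : ℤ))
            (fun p _ => by positivity) (Finset.mem_univ q)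
      _ ≤ _ := by
          apply Finset.sum_le_sum
          intro p _
          by_cases hp : p.1 < p.2
          · have : (p.1:ℤ) + 1 ≤ (p.2:ℤ) := by exact_mod_cast hp
            nlinarith [Int.natCast_nonneg (n p)]
          · simp [hs p hp]
  have step3 : ∑ i : Fin ℓ, (i:ℤ) * (- sh n i) ≤ Cb γ := by
    apply Finset.sum_le_sum
    intro i _
    have h1 : - sh n i ≤ γ i + ℓ - 1 - i := by have := h i; omega
    have h2 : (0:ℤ) ≤ (i:ℤ) := Int.natCast_nonneg _
    exact mul_le_mul_of_nonneg_left h1 h2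
  omega

lemma support_finite {ℓ} (γ : Fin ℓ → ℤ) :
    {n : Rt ℓ → ℕ | (∀ p : Rt ℓ, ¬ p.1 < p.2 → n p = 0) ∧
      ∀ i : Fin ℓ, (i:ℤ) + 1 - ℓ ≤ γ i + sh n i}.Finite := by
  apply Set.Finite.subset (Set.finite_Icc (0 : Rt ℓ → ℕ) (fun _ => (Cb γ).toNat))
  rintro n ⟨h1, h2⟩
  constructor
  · exact fun p => Nat.zero_le _
  · intro q
    have := Int.toNat_le_toNat (nval_le γ n h1 h2 q)
    simpa using this

end CatAux
namespace CatAux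

section VDM

variable {ℓ : ℕ}

abbrev GA (ℓ : ℕ) := AddMonoidAlgebra ℤ (Fin ℓ → ℤ)

def zz (i : Fin ℓ) : GA ℓ := AddMonoidAlgebra.single (Pi.single i (1:ℤ)) 1

lemma prod_single {α : Type*} (s : Finset α) (g : α → (Fin ℓ → ℤ)) :
    ∏ x ∈ s, (AddMonoidAlgebra.single (g x) (1:ℤ) : GA ℓ) =
      AddMonoidAlgebra.single (∑ x ∈ s, g x) 1 := by
  classical
  induction s using Finset.cons_induction with
  | empty => simp [AddMonoidAlgebra.one_def]
  | cons a s ha ih =>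
      rw [Finset.prod_cons, ih, AddMonoidAlgebra.single_mul_single, Finset.sum_cons, one_mul]

lemma single_unit (a : Fin ℓ → ℤ) :
    (AddMonoidAlgebra.single a (1:ℤ) : GA ℓ) * AddMonoidAlgebra.single (-a) 1 = 1 := by
  rw [AddMonoidAlgebra.single_mul_single]
  simp [AddMonoidAlgebra.one_def]

lemma mul_single_cancel {X Y : GA ℓ} (a : Fin ℓ → ℤ)
    (h : X * AddMonoidAlgebra.single a 1 = Y * AddMonoidAlgebra.single a 1) : X = Y := by
  have := congrArg (· * (AddMonoidAlgebra.single (-a) (1:ℤ) : GA ℓ)) h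
  simpa [mul_assoc, single_unit] using this

def rho (ℓ : ℕ) : Fin ℓ → ℤ := fun a => (a : ℤ)

lemma card_filter_snd (a : Fin ℓ) :
    (((Dplus ℓ).filter fun p => p.2 = a).card : ℤ) = (a : ℤ) := by
  have : ((Dplus ℓ).filter fun p => p.2 = a) =
      (Finset.Iio a).map ⟨fun i => (i, a), fun i j h => by simpa [Prod.ext_iff] using h⟩ := by
    ext p
    simp only [Finset.mem_filter, Dplus, Finset.mem_map, Finset.mem_Iio,
      Function.Embedding.coeFn_mk, Finset.mem_univ, true_and]
    constructor
    · rintro ⟨h1, h2⟩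
      exact ⟨p.1, by simpa [← h2] using h1, by simp [← h2]⟩
    · rintro ⟨i, hi, rfl⟩
      exact ⟨hi, rfl⟩
  rw [this, Finset.card_map, Fin.card_Iio]

lemma sum_single_snd :
    ∑ p ∈ Dplus ℓ, (Pi.single p.2 (1:ℤ) : Fin ℓ → ℤ) = rho ℓ := by
  funext a
  rw [Finset.sum_apply]
  have h : ∀ p ∈ Dplus ℓ, (Pi.single p.2 (1:ℤ) : Fin ℓ → ℤ) a = if p.2 = a then 1 else 0 := by
    intro p _; simp [Pi.single_apply, eq_comm]
  rw [Finset.sum_congr rfl h, Finset.sum_boole]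
  exact card_filter_snd a

lemma prod_Dplus {M : Type*} [CommMonoid M] (f : Rt ℓ → M) :
    ∏ p ∈ Dplus ℓ, f p = ∏ i : Fin ℓ, ∏ j ∈ Finset.Ioi i, f (i, j) := by
  rw [Dplus, Finset.prod_filter, Fintype.prod_prod_type]
  apply Finset.prod_congr rfl
  intro i _
  rw [← Finset.prod_filter]
  congr 1
  exact Finset.filter_lt_eq_Ioi

lemma prod_zz_pow (σ : Equiv.Perm (Fin ℓ)) :
    ∏ i : Fin ℓ, (zz i : GA ℓ) ^ ((σ i : ℕ)) =
      AddMonoidAlgebra.single (fun a => ((σ a : ℕ) : ℤ)) 1 := by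
  have h1 : ∀ i : Fin ℓ, (zz i : GA ℓ) ^ ((σ i : ℕ)) =
      AddMonoidAlgebra.single (((σ i : ℕ) • Pi.single i (1:ℤ) : Fin ℓ → ℤ)) 1 := by
    intro i
    rw [zz, AddMonoidAlgebra.single_pow, one_pow]
  rw [Finset.prod_congr rfl fun i _ => h1 i, prod_single]
  congr 1
  funext a
  rw [Finset.sum_apply]
  have h2 : ∀ i : Fin ℓ, ((σ i : ℕ) • (Pi.single i (1:ℤ) : Fin ℓ → ℤ)) a =
      if a = i then ((σ i : ℕ) : ℤ) else 0 := by
    intro i; simp [Pi.single_apply]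
  rw [Finset.sum_congr rfl fun i _ => h2 i, Finset.sum_ite_eq Finset.univ a]
  simp

/-- The key Vandermonde-type identity in the group algebra. -/
lemma vdm_identity :
    ∑ S ∈ (Dplus ℓ).powerset, ((-1:ℤ)^S.card • AddMonoidAlgebra.single (sh (chi S)) (1:ℤ) : GA ℓ) =
      ∑ σ : Equiv.Perm (Fin ℓ), ((Equiv.Perm.sign σ : ℤ) •
        AddMonoidAlgebra.single (fun a => ((σ a : ℕ) : ℤ) - (a : ℤ)) (1:ℤ) : GA ℓ) := by
  classical
  apply mul_single_cancel (rho ℓ)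
  have lhs_eq : (∑ S ∈ (Dplus ℓ).powerset,
        ((-1:ℤ)^S.card • AddMonoidAlgebra.single (sh (chi S)) (1:ℤ) : GA ℓ)) *
        AddMonoidAlgebra.single (rho ℓ) 1 =
      ∏ p ∈ Dplus ℓ, (zz p.2 - zz p.1) := by
    have expand : ∏ p ∈ Dplus ℓ, (zz p.2 - zz p.1) =
        ∑ S ∈ (Dplus ℓ).powerset, (∏ p ∈ S, (- zz p.1)) * ∏ p ∈ Dplus ℓ \ S, zz p.2 := by
      have h : ∀ p ∈ Dplus ℓ, zz p.2 - zz p.1 = (- zz p.1) + zz p.2 := by intros; ring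
      rw [Finset.prod_congr rfl h, Finset.prod_add]
    rw [expand, Finset.sum_mul]
    apply Finset.sum_congr rfl
    intro S hS
    rw [Finset.mem_powerset] at hS
    have e1 : ∏ p ∈ S, (- zz p.1) = ((-1:ℤ)^S.card : ℤ) • ∏ p ∈ S, zz p.1 := by
      have : ∀ p ∈ S, - zz p.1 = (-1 : GA ℓ) * zz p.1 := by intros; ring
      rw [Finset.prod_congr rfl this, Finset.prod_mul_distrib, Finset.prod_const,
        zsmul_eq_mul]
      push_cast
      ring
    have e2 : (∏ p ∈ S, zz p.1) * ∏ p ∈ Dplus ℓ \ S, zz p.2 =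
        AddMonoidAlgebra.single (sh (chi S) + rho ℓ) 1 := by
      unfold zz
      rw [prod_single, prod_single, AddMonoidAlgebra.single_mul_single, one_mul]
      congr 1
      have hsplit : ∑ p ∈ Dplus ℓ, (Pi.single p.2 (1:ℤ) : Fin ℓ → ℤ) =
          (∑ p ∈ S, (Pi.single p.2 (1:ℤ) : Fin ℓ → ℤ)) +
            ∑ p ∈ Dplus ℓ \ S, (Pi.single p.2 (1:ℤ) : Fin ℓ → ℤ) := by
        rw [add_comm, Finset.sum_sdiff hS]
      funext a
      have h1 : sh (chi S) a = (∑ p ∈ S, (Pi.single p.1 (1:ℤ) : Fin ℓ → ℤ) a) -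
          ∑ p ∈ S, (Pi.single p.2 (1:ℤ) : Fin ℓ → ℤ) a := by
        rw [sh_chi, Finset.sum_sub_distrib]
        congr 1 <;> exact Finset.sum_congr rfl fun p _ => by simp [Pi.single_apply, eq_comm]
      have h2 := congrFun hsplit a
      have h3 := congrFun (sum_single_snd (ℓ := ℓ)) a
      simp only [Pi.add_apply, Finset.sum_apply] at h1 h2 h3 ⊢
      omega
    rw [e1, smul_mul_assoc, smul_mul_assoc, e2, AddMonoidAlgebra.single_mul_single, one_mul]
  have det_exp : (Matrix.vandermonde (fun i : Fin ℓ => zz i)).det =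
      ∑ σ : Equiv.Perm (Fin ℓ), Equiv.Perm.sign σ • ∏ i : Fin ℓ, (zz i : GA ℓ) ^ ((σ i : ℕ)) := by
    rw [← Matrix.det_transpose, Matrix.det_apply]
    apply Finset.sum_congr rfl
    intro σ _
    simp [Matrix.vandermonde, Matrix.transpose_apply]
  have rhs_eq : (∑ σ : Equiv.Perm (Fin ℓ), ((Equiv.Perm.sign σ : ℤ) •
        AddMonoidAlgebra.single (fun a => ((σ a : ℕ) : ℤ) - (a : ℤ)) (1:ℤ) : GA ℓ)) *
        AddMonoidAlgebra.single (rho ℓ) 1 =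
      ∏ p ∈ Dplus ℓ, (zz p.2 - zz p.1) := by
    rw [prod_Dplus (fun p => zz p.2 - zz p.1)]
    rw [← Matrix.det_vandermonde (fun i : Fin ℓ => zz i), det_exp, Finset.sum_mul]
    apply Finset.sum_congr rfl
    intro σ _
    rw [prod_zz_pow σ, smul_mul_assoc, AddMonoidAlgebra.single_mul_single, one_mul]
    rw [Units.smul_def]
    congr 2
    funext a
    simp [rho]
  rw [lhs_eq, rhs_eq]

end VDM

end CatAux
namespace CatAux

lemma Sc_expand {ℓ} (ν : Fin ℓ → ℤ) :
    Sc ν = ∑ σ : Equiv.Perm (Fin ℓ), (Equiv.Perm.sign σ : ℤ) •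
      Hp (fun a => ν a + (((σ a : ℕ) : ℤ) - (a : ℤ))) := by
  unfold Sc schur
  rw [RingHom.map_det, ← Matrix.det_transpose, Matrix.det_apply]
  apply Finset.sum_congr rfl
  intro σ _
  rw [Units.smul_def]
  congr 1
  unfold Hp
  apply Finset.prod_congr rfl
  intro i _
  simp only [Matrix.transpose_apply, RingHom.mapMatrix_apply, Matrix.map_apply,
    Matrix.of_apply, specT1_hh]
  congr 1
  ring

lemma JT {ℓ} (ν : Fin ℓ → ℤ) :
    Sc ν = ∑ S ∈ (Dplus ℓ).powerset, (-1:ℤ)^S.card • Hp (fun a => ν a + sh (chi S) a) := by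
  classical
  set Θ : ((Fin ℓ → ℤ) →₀ ℤ) →ₗ[ℤ] SymFZ :=
    Finsupp.lsum ℤ (fun δ => LinearMap.toSpanSingleton ℤ SymFZ (Hp (fun a => ν a + δ a)))
    with hΘ
  have hsingle : ∀ δ : Fin ℓ → ℤ, Θ (AddMonoidAlgebra.single δ 1).coeff = Hp (fun a => ν a + δ a) := by
    intro δ
    rw [hΘ]
    simp [AddMonoidAlgebra.coeff_single, LinearMap.toSpanSingleton_apply]
  have key := congrArg (fun x : GA ℓ => Θ x.coeff) (vdm_identity (ℓ := ℓ))
  simp only [AddMonoidAlgebra.coeff_sum, AddMonoidAlgebra.coeff_smul] at key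
  rw [map_sum, map_sum] at key
  simp only [LinearMap.map_smul, hsingle] at key
  rw [Sc_expand ν]
  rw [← key]
end CatAux
namespace CatAux

lemma prod_ind {α : Type*} (s : Finset α) (P : α → Prop) :
    (∏ x ∈ s, if P x then (1:ℤ) else 0) = if ∀ x ∈ s, P x then 1 else 0 := by
  split_ifs with h
  · exact Finset.prod_eq_one fun x hx => by simp [h x hx]
  · push_neg at h
    obtain ⟨x, hx, hPx⟩ := h
    exact Finset.prod_eq_zero hx (by simp [hPx])

lemma chi_le_one {ℓ} (S : Finset (Rt ℓ)) (p : Rt ℓ) : chi S p ≤ 1 := by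
  unfold chi; split_ifs <;> omega

section Coeff

variable {ℓ : ℕ} (Ψ : Finset (Rt ℓ)) (mm : Rt ℓ → ℕ)

/-- the left coefficient, as a product -/
lemma coeff_left (hΨ : Ψ ⊆ Dplus ℓ) (hD : ∀ p : Rt ℓ, ¬ p.1 < p.2 → mm p = 0) :
    ∑ S ∈ (Dplus ℓ).powerset,
        (if (∀ p ∈ S, 1 ≤ mm p) ∧ (∀ p, p ∉ Ψ → mm p = chi S p) then (-1:ℤ)^S.card else 0) =
      ∏ p ∈ Dplus ℓ,
        ((if 1 ≤ mm p ∧ (p ∈ Ψ ∨ mm p = 1) then (-1:ℤ) else 0) +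
          (if p ∈ Ψ ∨ mm p = 0 then (1:ℤ) else 0)) := by
  classical
  rw [Finset.prod_add]
  apply Finset.sum_congr rfl
  intro S hS
  rw [Finset.mem_powerset] at hS
  set A : Rt ℓ → ℤ := fun p => if 1 ≤ mm p ∧ (p ∈ Ψ ∨ mm p = 1) then (-1:ℤ) else 0 with hA
  set B : Rt ℓ → ℤ := fun p => if p ∈ Ψ ∨ mm p = 0 then (1:ℤ) else 0 with hB
  by_cases hc : (∀ p ∈ S, 1 ≤ mm p) ∧ (∀ p, p ∉ Ψ → mm p = chi S p)
  · rw [if_pos hc]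
    have hA1 : ∀ p ∈ S, A p = -1 := by
      intro p hp
      have h1 : 1 ≤ mm p := hc.1 p hp
      have h2 : p ∈ Ψ ∨ mm p = 1 := by
        by_cases hpΨ : p ∈ Ψ
        · exact Or.inl hpΨ
        · exact Or.inr (by rw [hc.2 p hpΨ]; simp [chi, hp])
      simp [hA, h1, h2]
    have hB1 : ∀ p ∈ Dplus ℓ \ S, B p = 1 := by
      intro p hp
      rw [Finset.mem_sdiff] at hp
      have : p ∈ Ψ ∨ mm p = 0 := by
        by_cases hpΨ : p ∈ Ψ
        · exact Or.inl hpΨ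
        · refine Or.inr ?_
          rw [hc.2 p hpΨ]; simp [chi, hp.2]
      simp [hB, this]
    rw [Finset.prod_congr rfl hA1, Finset.prod_congr rfl hB1, Finset.prod_const,
      Finset.prod_const_one, mul_one]
  · rw [if_neg hc]
    rw [not_and_or] at hc
    rcases hc with hc | hc
    · push_neg at hc
      obtain ⟨p, hp, hmp⟩ := hc
      refine (mul_eq_zero.mpr (Or.inl (Finset.prod_eq_zero hp ?_))).symm
      simp [hA, hmp]
    · push_neg at hc
      obtain ⟨p, hpΨ, hmp⟩ := hc
      by_cases hpS : p ∈ S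
      · refine (mul_eq_zero.mpr (Or.inl (Finset.prod_eq_zero hpS ?_))).symm
        have : mm p ≠ 1 := by simpa [chi, hpS] using hmp
        simp [hA, hpΨ, this]
      · have hp0 : mm p ≠ 0 := by simpa [chi, hpS] using hmp
        have hpD : p ∈ Dplus ℓ := by
          by_contra hpD
          exact hp0 (hD p (by simpa [Dplus] using hpD))
        refine (mul_eq_zero.mpr (Or.inr (Finset.prod_eq_zero
          (Finset.mem_sdiff.mpr ⟨hpD, hpS⟩) ?_))).symm
        simp [hB, hpΨ, hp0]

/-- the right coefficient, as a product -/
lemma coeff_right (hD : ∀ p : Rt ℓ, ¬ p.1 < p.2 → mm p = 0) :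
    ∑ T ∈ (Dplus ℓ \ Ψ).powerset, (if chi T = mm then (-1:ℤ)^T.card else 0) =
      (if ∀ p ∈ Ψ, mm p = 0 then (1:ℤ) else 0) *
        ∏ p ∈ Dplus ℓ \ Ψ,
          ((if mm p = 1 then (-1:ℤ) else 0) + (if mm p = 0 then (1:ℤ) else 0)) := by
  classical
  rw [Finset.prod_add, Finset.mul_sum]
  apply Finset.sum_congr rfl
  intro T hT
  rw [Finset.mem_powerset] at hT
  by_cases hc : chi T = mm
  · rw [if_pos hc]
    have hglob : (∀ p ∈ Ψ, mm p = 0) := by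
      intro p hp
      have hpT : p ∉ T := fun hpT => (Finset.mem_sdiff.mp (hT hpT)).2 hp
      rw [← hc]; simp [chi, hpT]
    rw [if_pos hglob, one_mul]
    have hA1 : ∀ p ∈ T, (if mm p = 1 then (-1:ℤ) else 0) = -1 := by
      intro p hp
      have : mm p = 1 := by rw [← hc]; simp [chi, hp]
      simp [this]
    have hB1 : ∀ p ∈ (Dplus ℓ \ Ψ) \ T, (if mm p = 0 then (1:ℤ) else 0) = 1 := by
      intro p hp
      have hpT : p ∉ T := (Finset.mem_sdiff.mp hp).2
      have : mm p = 0 := by rw [← hc]; simp [chi, hpT]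
      simp [this]
    rw [Finset.prod_congr rfl hA1, Finset.prod_congr rfl hB1, Finset.prod_const,
      Finset.prod_const_one, mul_one]
  · rw [if_neg hc]
    have hex : ∃ p : Rt ℓ, chi T p ≠ mm p := by
      by_contra h
      push_neg at h
      exact hc (funext h)
    obtain ⟨p, hp⟩ := hex
    by_cases hpT : p ∈ T
    · refine (mul_eq_zero.mpr (Or.inr (mul_eq_zero.mpr (Or.inl
        (Finset.prod_eq_zero hpT ?_))))).symm
      have : mm p ≠ 1 := fun h => hp (by simp [chi, hpT, h])
      simp [this]
    · have hmp : mm p ≠ 0 := fun h => hp (by simp [chi, hpT, h])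
      have hpD : p ∈ Dplus ℓ := by
        by_contra hpD
        exact hmp (hD p (by simpa [Dplus] using hpD))
      by_cases hpΨ : p ∈ Ψ
      · have : ¬ (∀ q ∈ Ψ, mm q = 0) := fun h => hmp (h p hpΨ)
        rw [if_neg this, zero_mul]
      · refine (mul_eq_zero.mpr (Or.inr (mul_eq_zero.mpr (Or.inr
          (Finset.prod_eq_zero (Finset.mem_sdiff.mpr
            ⟨Finset.mem_sdiff.mpr ⟨hpD, hpΨ⟩, hpT⟩) ?_))))).symm
        simp [hmp]

end Coeff

end CatAux
namespace CatAux

lemma coeff_eq {ℓ} (Ψ : Finset (Rt ℓ)) (mm : Rt ℓ → ℕ) (hΨ : Ψ ⊆ Dplus ℓ)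
    (hD : ∀ p : Rt ℓ, ¬ p.1 < p.2 → mm p = 0) :
    (∑ S ∈ (Dplus ℓ).powerset,
        if (∀ p ∈ S, 1 ≤ mm p) ∧ (∀ p, p ∉ Ψ → mm p = chi S p) then (-1:ℤ)^S.card else 0) =
      ∑ T ∈ (Dplus ℓ \ Ψ).powerset, (if chi T = mm then (-1:ℤ)^T.card else 0) := by
  classical
  rw [coeff_left Ψ mm hΨ hD, coeff_right Ψ mm hD, ← Finset.prod_sdiff hΨ]
  have hΨpart : (∏ p ∈ Ψ,
      ((if 1 ≤ mm p ∧ (p ∈ Ψ ∨ mm p = 1) then (-1:ℤ) else 0) +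
        (if p ∈ Ψ ∨ mm p = 0 then (1:ℤ) else 0))) =
      if ∀ p ∈ Ψ, mm p = 0 then (1:ℤ) else 0 := by
    split_ifs with h
    · apply Finset.prod_eq_one
      intro p hp
      have h0 := h p hp
      simp [h0, hp]
    · push_neg at h
      obtain ⟨p, hp, h0⟩ := h
      apply Finset.prod_eq_zero hp
      have h1 : 1 ≤ mm p := by omega
      simp [hp, h1]
  have hDpart : ∀ p ∈ Dplus ℓ \ Ψ,
      ((if 1 ≤ mm p ∧ (p ∈ Ψ ∨ mm p = 1) then (-1:ℤ) else 0) +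
        (if p ∈ Ψ ∨ mm p = 0 then (1:ℤ) else 0)) =
      ((if mm p = 1 then (-1:ℤ) else 0) + (if mm p = 0 then (1:ℤ) else 0)) := by
    intro p hp
    have hpΨ : p ∉ Ψ := (Finset.mem_sdiff.mp hp).2
    have h1 : (1 ≤ mm p ∧ (p ∈ Ψ ∨ mm p = 1)) ↔ mm p = 1 := by
      constructor
      · rintro ⟨h1, h2 | h2⟩
        · exact absurd h2 hpΨ
        · exact h2
      · intro h; exact ⟨by omega, Or.inr h⟩
    have h2 : (p ∈ Ψ ∨ mm p = 0) ↔ mm p = 0 := by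
      constructor
      · rintro (h | h)
        · exact absurd h hpΨ
        · exact h
      · exact Or.inr
    rw [if_congr h1 rfl rfl, if_congr h2 rfl rfl]
  rw [Finset.prod_congr rfl hDpart, hΨpart, mul_comm]

lemma fiber_bij {ℓ} (Ψ : Finset (Rt ℓ)) (γ : Fin ℓ → ℤ) (mm : Rt ℓ → ℕ)
    (hbox : ∀ p, mm p ≤ (Cb γ).toNat) :
    ∑ q ∈ (((Finset.Icc (0 : Rt ℓ → ℕ) (fun _ => (Cb γ).toNat)).filter
          (fun n => ∀ p, p ∉ Ψ → n p = 0)) ×ˢ (Dplus ℓ).powerset).filter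
        (fun q => q.1 + chi q.2 = mm), (-1:ℤ)^(q.2.card) =
      ∑ S ∈ (Dplus ℓ).powerset,
        if (∀ p ∈ S, 1 ≤ mm p) ∧ (∀ p, p ∉ Ψ → mm p = chi S p) then (-1:ℤ)^S.card else 0 := by
  classical
  rw [← Finset.sum_filter]
  apply Finset.sum_bij (fun q _ => q.2)
  · rintro ⟨n, S⟩ hq
    simp only [Finset.mem_filter, Finset.mem_product, Finset.mem_powerset, Finset.mem_Icc] at hq
    obtain ⟨⟨⟨⟨hn0, hnK⟩, hnΨ⟩, hS⟩, heq⟩ := hq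
    have hval : ∀ p, n p + chi S p = mm p := by
      intro p
      have := congrFun heq p
      simpa using this
    refine Finset.mem_filter.mpr ⟨Finset.mem_powerset.mpr hS, ?_, ?_⟩
    · intro p hp
      show 1 ≤ mm p
      have h1 := hval p
      have h2 : chi S p = 1 := by simp [chi, hp]
      omega
    · intro p hp
      show mm p = chi S p
      have h0 := hnΨ p hp
      have h1 := hval p
      omega
  · rintro ⟨n, S⟩ h1 ⟨n', S'⟩ h2 h
    simp only at h
    subst h
    simp only [Finset.mem_filter, Finset.mem_product] at h1 h2
    have hn : n = n' := by
      funext p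
      have e1 := congrFun h1.2 p
      have e2 := congrFun h2.2 p
      simp only [Pi.add_apply] at e1 e2
      omega
    rw [hn]
  · intro S hS
    simp only [Finset.mem_filter, Finset.mem_powerset] at hS
    obtain ⟨hSD, hc1, hc2⟩ := hS
    have hle : ∀ p, chi S p ≤ mm p := by
      intro p
      by_cases hp : p ∈ S
      · have := hc1 p hp; simpa [chi, hp] using this
      · simp [chi, hp]
    refine ⟨(fun p => mm p - chi S p, S), ?_, rfl⟩
    refine Finset.mem_filter.mpr ⟨Finset.mem_product.mpr ⟨Finset.mem_filter.mpr
      ⟨Finset.mem_Icc.mpr ⟨fun p => Nat.zero_le _, fun p => ?_⟩, ?_⟩,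
      Finset.mem_powerset.mpr hSD⟩, ?_⟩
    · show mm p - chi S p ≤ (Cb γ).toNat
      have := hbox p
      omega
    · intro p hp
      show mm p - chi S p = 0
      have := hc2 p hp
      omega
    · funext p
      have := hle p
      show (mm p - chi S p) + chi S p = mm p
      omega
  · intro q hq
    rfl

end CatAux
namespace CatAux

lemma mem_Nbox {ℓ} (γ : Fin ℓ → ℤ) (Ψ : Finset (Rt ℓ)) (hΨ : Ψ ⊆ Dplus ℓ) (n : Rt ℓ → ℕ)
    (h1 : ∀ p, p ∉ Ψ → n p = 0) (h2 : ∀ i : Fin ℓ, (i:ℤ) + 1 - ℓ ≤ γ i + sh n i) :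
    n ∈ Finset.Icc (0 : Rt ℓ → ℕ) (fun _ => (Cb γ).toNat) := by
  rw [Finset.mem_Icc]
  constructor
  · intro p; exact Nat.zero_le _
  · intro q
    have hs : ∀ p : Rt ℓ, ¬ p.1 < p.2 → n p = 0 := by
      intro p hp
      refine h1 p fun hpΨ => hp ?_
      have := hΨ hpΨ
      simpa [Dplus] using this
    have := Int.toNat_le_toNat (nval_le γ n hs h2 q)
    simpa using this

lemma specT1_catalan {ℓ} (Ψ : Finset (Rt ℓ)) (hΨ : Ψ ⊆ Dplus ℓ) (γ : Fin ℓ → ℤ) :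
    specT1 (catalanFn Ψ γ) =
      ∑ T ∈ (Dplus ℓ \ Ψ).powerset, (-1:ℤ)^T.card • Hp (fun a => γ a + sh (chi T) a) := by
  classical
  have hDsupp : ∀ (n : Rt ℓ → ℕ), (∀ p, p ∉ Ψ → n p = 0) →
      ∀ p : Rt ℓ, ¬ p.1 < p.2 → n p = 0 := by
    intro n h p hp
    refine h p fun hpΨ => hp ?_
    have := hΨ hpΨ
    simpa [Dplus] using this
  -- step 1
  have step1 : specT1 (catalanFn Ψ γ) =
      ∑ n ∈ (Finset.Icc (0 : Rt ℓ → ℕ) (fun _ => (Cb γ).toNat)).filter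
        (fun n => ∀ p, p ∉ Ψ → n p = 0), Sc (fun a => γ a + sh n a) := by
    have hfun : catalanFn Ψ γ = ∑ᶠ n : Rt ℓ → ℕ,
        (if (∀ p, p ∉ Ψ → n p = 0) then
          tC ^ (∑ p : Rt ℓ, n p) * schur (fun a => γ a + sh n a) else 0) := rfl
    have hsub : Function.support (fun n : Rt ℓ → ℕ =>
        if (∀ p, p ∉ Ψ → n p = 0) then
          tC ^ (∑ p : Rt ℓ, n p) * schur (fun a => γ a + sh n a) else 0) ⊆
        ↑(Finset.Icc (0 : Rt ℓ → ℕ) (fun _ => (Cb γ).toNat)) := by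
      intro n hn
      simp only [Function.mem_support] at hn
      by_cases hc : ∀ p, p ∉ Ψ → n p = 0
      case neg => rw [if_neg hc] at hn; exact absurd rfl hn
      rw [if_pos hc] at hn
      have hschur : schur (fun a => γ a + sh n a) ≠ 0 := fun h => hn (by rw [h, mul_zero])
      have h2 : ∀ i : Fin ℓ, (i:ℤ) + 1 - ℓ ≤ γ i + sh n i := by
        intro i
        by_contra hlt
        push_neg at hlt
        exact hschur (schur_eq_zero _ i hlt)
      exact mem_Nbox γ Ψ hΨ n hc h2
    rw [hfun, finsum_eq_finset_sum_of_support_subset _ hsub, map_sum, Finset.sum_filter]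
    apply Finset.sum_congr rfl
    intro n _
    split_ifs with hc
    · rw [map_mul, map_pow, specT1_tC, one_pow, one_mul]; rfl
    · exact map_zero _
  rw [step1]
  -- step 2 : JT
  have step2 : (∑ n ∈ (Finset.Icc (0 : Rt ℓ → ℕ) (fun _ => (Cb γ).toNat)).filter
        (fun n => ∀ p, p ∉ Ψ → n p = 0), Sc (fun a => γ a + sh n a)) =
      ∑ n ∈ (Finset.Icc (0 : Rt ℓ → ℕ) (fun _ => (Cb γ).toNat)).filter
        (fun n => ∀ p, p ∉ Ψ → n p = 0), ∑ S ∈ (Dplus ℓ).powerset,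
          (-1:ℤ)^S.card • Hp (fun a => γ a + sh (n + chi S) a) := by
    apply Finset.sum_congr rfl
    intro n _
    rw [JT (fun a => γ a + sh n a)]
    apply Finset.sum_congr rfl
    intro S _
    have harg : (fun a => γ a + sh n a + sh (chi S) a) =
        (fun a => γ a + sh (n + chi S) a) := by
      funext a
      have h := congrFun (sh_add n (chi S)) a
      simp only [Pi.add_apply] at h
      rw [h]
      ring
    rw [harg]
  rw [step2]
  -- step 3 : to a product, then fiberwise over Mbox
  have step3 : (∑ n ∈ (Finset.Icc (0 : Rt ℓ → ℕ) (fun _ => (Cb γ).toNat)).filter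
        (fun n => ∀ p, p ∉ Ψ → n p = 0), ∑ S ∈ (Dplus ℓ).powerset,
          (-1:ℤ)^S.card • Hp (fun a => γ a + sh (n + chi S) a)) =
      ∑ q ∈ ((Finset.Icc (0 : Rt ℓ → ℕ) (fun _ => (Cb γ).toNat)).filter
          (fun n => ∀ p, p ∉ Ψ → n p = 0)) ×ˢ (Dplus ℓ).powerset,
        (-1:ℤ)^(q.2.card) • Hp (fun a => γ a + sh (q.1 + chi q.2) a) :=
    (Finset.sum_product' _ _ _).symm
  rw [step3]
  have hmaps : ∀ q ∈ ((Finset.Icc (0 : Rt ℓ → ℕ) (fun _ => (Cb γ).toNat)).filter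
      (fun n => ∀ p, p ∉ Ψ → n p = 0)) ×ˢ (Dplus ℓ).powerset,
      q.1 + chi q.2 ∈ Finset.Icc (0 : Rt ℓ → ℕ) (fun _ => (Cb γ).toNat + 1) := by
    rintro ⟨n, S⟩ hq
    simp only [Finset.mem_product, Finset.mem_filter, Finset.mem_Icc] at hq
    rw [Finset.mem_Icc]
    constructor
    · intro p; exact Nat.zero_le _
    · intro p
      have h1 := hq.1.1.2 p
      have h2 := chi_le_one S p
      show n p + chi S p ≤ (Cb γ).toNat + 1
      simp only at h1
      omega
  have step4 : (∑ q ∈ ((Finset.Icc (0 : Rt ℓ → ℕ) (fun _ => (Cb γ).toNat)).filter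
        (fun n => ∀ p, p ∉ Ψ → n p = 0)) ×ˢ (Dplus ℓ).powerset,
        (-1:ℤ)^(q.2.card) • Hp (fun a => γ a + sh (q.1 + chi q.2) a)) =
      ∑ mm ∈ Finset.Icc (0 : Rt ℓ → ℕ) (fun _ => (Cb γ).toNat + 1),
        ∑ q ∈ (((Finset.Icc (0 : Rt ℓ → ℕ) (fun _ => (Cb γ).toNat)).filter
            (fun n => ∀ p, p ∉ Ψ → n p = 0)) ×ˢ (Dplus ℓ).powerset).filter
          (fun q => q.1 + chi q.2 = mm),
        (-1:ℤ)^(q.2.card) • Hp (fun a => γ a + sh (q.1 + chi q.2) a) :=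
    (Finset.sum_fiberwise_of_maps_to hmaps _).symm
  rw [step4]
  -- step 5 : pull out Hp
  have step5 : ∀ mm ∈ Finset.Icc (0 : Rt ℓ → ℕ) (fun _ => (Cb γ).toNat + 1),
      (∑ q ∈ (((Finset.Icc (0 : Rt ℓ → ℕ) (fun _ => (Cb γ).toNat)).filter
            (fun n => ∀ p, p ∉ Ψ → n p = 0)) ×ˢ (Dplus ℓ).powerset).filter
          (fun q => q.1 + chi q.2 = mm),
        (-1:ℤ)^(q.2.card) • Hp (fun a => γ a + sh (q.1 + chi q.2) a)) =
      (∑ q ∈ (((Finset.Icc (0 : Rt ℓ → ℕ) (fun _ => (Cb γ).toNat)).filter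
            (fun n => ∀ p, p ∉ Ψ → n p = 0)) ×ˢ (Dplus ℓ).powerset).filter
          (fun q => q.1 + chi q.2 = mm),
        (-1:ℤ)^(q.2.card)) • Hp (fun a => γ a + sh mm a) := by
    intro mm _
    rw [Finset.sum_smul]
    apply Finset.sum_congr rfl
    intro q hq
    have := (Finset.mem_filter.mp hq).2
    rw [this]
  rw [Finset.sum_congr rfl step5]
  -- step 6 : the RHS, fiberwise
  have hmaps2 : ∀ T ∈ (Dplus ℓ \ Ψ).powerset,
      chi T ∈ Finset.Icc (0 : Rt ℓ → ℕ) (fun _ => (Cb γ).toNat + 1) := by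
    intro T _
    rw [Finset.mem_Icc]
    refine ⟨fun p => Nat.zero_le _, fun p => ?_⟩
    show chi T p ≤ (Cb γ).toNat + 1
    have := chi_le_one T p
    omega
  have step6 : (∑ T ∈ (Dplus ℓ \ Ψ).powerset,
        (-1:ℤ)^T.card • Hp (fun a => γ a + sh (chi T) a)) =
      ∑ mm ∈ Finset.Icc (0 : Rt ℓ → ℕ) (fun _ => (Cb γ).toNat + 1),
        (∑ T ∈ (Dplus ℓ \ Ψ).powerset.filter (fun T => chi T = mm), (-1:ℤ)^T.card) •
          Hp (fun a => γ a + sh mm a) := by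
    rw [← Finset.sum_fiberwise_of_maps_to hmaps2
      (fun T => (-1:ℤ)^T.card • Hp (fun a => γ a + sh (chi T) a))]
    apply Finset.sum_congr rfl
    intro mm _
    rw [Finset.sum_smul]
    apply Finset.sum_congr rfl
    intro T hT
    have := (Finset.mem_filter.mp hT).2
    rw [this]
  rw [step6]
  -- step 7 : coefficients agree
  apply Finset.sum_congr rfl
  intro mm _
  by_cases hD : ∀ p : Rt ℓ, ¬ p.1 < p.2 → mm p = 0
  · by_cases h0 : Hp (fun a => γ a + sh mm a) = 0
    · rw [h0, smul_zero, smul_zero]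
    · have h2 : ∀ i : Fin ℓ, (i:ℤ) + 1 - ℓ ≤ γ i + sh mm i := by
        intro i
        by_contra hlt
        push_neg at hlt
        refine h0 (Hp_eq_zero i ?_)
        have hi : (i:ℤ) < (ℓ:ℤ) := by exact_mod_cast i.isLt
        omega
      have hbox : ∀ p, mm p ≤ (Cb γ).toNat := by
        intro q
        have := Int.toNat_le_toNat (nval_le γ mm hD h2 q)
        simpa using this
      have hcoeff := (fiber_bij Ψ γ mm hbox).trans (coeff_eq Ψ mm hΨ hD)
      rw [hcoeff, ← Finset.sum_filter]
  · push_neg at hD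
    obtain ⟨p, hp12, hp0⟩ := hD
    have hp12' : ¬ p.1 < p.2 := not_lt.mpr hp12
    have hL : ((((Finset.Icc (0 : Rt ℓ → ℕ) (fun _ => (Cb γ).toNat)).filter
          (fun n => ∀ p, p ∉ Ψ → n p = 0)) ×ˢ (Dplus ℓ).powerset).filter
        (fun q => q.1 + chi q.2 = mm)) = ∅ := by
      apply Finset.eq_empty_of_forall_notMem
      rintro ⟨n, S⟩ hq
      simp only [Finset.mem_filter, Finset.mem_product, Finset.mem_Icc] at hq
      obtain ⟨⟨⟨_, hnΨ⟩, hS⟩, heq⟩ := hq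
      have hn0 : n p = 0 := hDsupp n hnΨ p hp12'
      have hc0 : chi S p = 0 := by
        have hpS : p ∉ S := by
          intro hpS
          have := Finset.mem_powerset.mp hS hpS
          simp only [Dplus, Finset.mem_filter] at this
          exact hp12' this.2
        simp [chi, hpS]
      have := congrFun heq p
      simp only [Pi.add_apply] at this
      omega
    have hR : ((Dplus ℓ \ Ψ).powerset.filter (fun T => chi T = mm)) = ∅ := by
      apply Finset.eq_empty_of_forall_notMem
      intro T hT
      simp only [Finset.mem_filter, Finset.mem_powerset] at hT
      obtain ⟨hTD, heq⟩ := hT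
      have hpT : p ∉ T := by
        intro hpT
        have := hTD hpT
        simp only [Finset.mem_sdiff, Dplus, Finset.mem_filter] at this
        exact hp12' this.1.2
      have := congrFun heq p
      simp [chi, hpT] at this
      omega
    rw [hL, hR]
    simp

end CatAux
namespace CatAux

section Assemble

variable {r m : ℕ}

def E1 (r m : ℕ) : Rt r ↪ Rt (r + m) :=
  ⟨fun q => (Fin.castAdd m q.1, Fin.castAdd m q.2), by
    intro a b h
    rw [Prod.ext_iff] at h ⊢
    exact ⟨Fin.castAdd_injective r m h.1, Fin.castAdd_injective r m h.2⟩⟩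

def E2 (r m : ℕ) : Rt m ↪ Rt (r + m) :=
  ⟨fun q => (Fin.natAdd r q.1, Fin.natAdd r q.2), by
    intro a b h
    rw [Prod.ext_iff] at h ⊢
    refine ⟨Fin.ext ?_, Fin.ext ?_⟩
    · have := congrArg Fin.val h.1; simp [Fin.coe_natAdd] at this; omega
    · have := congrArg Fin.val h.2; simp [Fin.coe_natAdd] at this; omega⟩

lemma E1_apply (q : Rt r) : E1 r m q = (Fin.castAdd m q.1, Fin.castAdd m q.2) := rfl
lemma E2_apply (q : Rt m) : E2 r m q = (Fin.natAdd r q.1, Fin.natAdd r q.2) := rfl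

lemma E1_ne_E2 (q : Rt r) (q' : Rt m) : E1 r m q ≠ E2 r m q' := by
  intro h
  rw [E1_apply, E2_apply, Prod.ext_iff] at h
  have := congrArg Fin.val h.1
  simp only [Fin.coe_castAdd, Fin.coe_natAdd] at this
  have := q.1.isLt
  omega

lemma disjE (A : Finset (Rt r)) (B : Finset (Rt m)) :
    Disjoint (A.map (E1 r m)) (B.map (E2 r m)) := by
  rw [Finset.disjoint_left]
  intro p hp1 hp2
  rw [Finset.mem_map] at hp1 hp2
  obtain ⟨q, _, hq⟩ := hp1
  obtain ⟨q', _, hq'⟩ := hp2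
  exact E1_ne_E2 q q' (hq.trans hq'.symm)

lemma mem_Dplus_iff {ℓ : ℕ} (p : Rt ℓ) : p ∈ Dplus ℓ ↔ p.1 < p.2 := by
  simp [Dplus]

lemma decomp (Ψ : Finset (Rt r)) (Φ : Finset (Rt m)) :
    Dplus (r + m) \ uplus Ψ Φ = (Dplus r \ Ψ).map (E1 r m) ∪ (Dplus m \ Φ).map (E2 r m) := by
  classical
  ext p
  simp only [Finset.mem_sdiff, uplus, Finset.mem_filter, Finset.mem_union, Finset.mem_map]
  constructor
  · rintro ⟨hpD, hnot⟩
    have hc : (∃ q : Fin r × Fin r, q ∉ Ψ ∧ q.1 < q.2 ∧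
          (p.1 : ℕ) = (q.1 : ℕ) ∧ (p.2 : ℕ) = (q.2 : ℕ)) ∨
        (∃ q : Fin m × Fin m, q ∉ Φ ∧ q.1 < q.2 ∧
          (p.1 : ℕ) = (q.1 : ℕ) + r ∧ (p.2 : ℕ) = (q.2 : ℕ) + r) := by
      by_contra hcon
      exact hnot ⟨hpD, hcon⟩
    rcases hc with ⟨q, hq1, hq2, hq3, hq4⟩ | ⟨q, hq1, hq2, hq3, hq4⟩
    · left
      refine ⟨q, ⟨(mem_Dplus_iff q).mpr hq2, hq1⟩, ?_⟩
      exact Prod.ext_iff.mpr ⟨Fin.ext (show ((Fin.castAdd m q.1 : Fin (r+m)) : ℕ) = (p.1 : ℕ) by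
          simp only [Fin.coe_castAdd]; omega),
        Fin.ext (show ((Fin.castAdd m q.2 : Fin (r+m)) : ℕ) = (p.2 : ℕ) by
          simp only [Fin.coe_castAdd]; omega)⟩
    · right
      refine ⟨q, ⟨(mem_Dplus_iff q).mpr hq2, hq1⟩, ?_⟩
      exact Prod.ext_iff.mpr ⟨Fin.ext (show ((Fin.natAdd r q.1 : Fin (r+m)) : ℕ) = (p.1 : ℕ) by
          simp only [Fin.coe_natAdd]; omega),
        Fin.ext (show ((Fin.natAdd r q.2 : Fin (r+m)) : ℕ) = (p.2 : ℕ) by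
          simp only [Fin.coe_natAdd]; omega)⟩
  · rintro (⟨q, hq, rfl⟩ | ⟨q, hq, rfl⟩)
    · have hqlt : q.1 < q.2 := (mem_Dplus_iff q).mp hq.1
      have hvlt : (q.1 : ℕ) < (q.2 : ℕ) := hqlt
      constructor
      · refine (mem_Dplus_iff _).mpr ?_
        show Fin.castAdd m q.1 < Fin.castAdd m q.2
        rw [Fin.lt_def]
        simpa only [Fin.coe_castAdd] using hvlt
      · rintro ⟨-, hno⟩
        refine hno (Or.inl ⟨q, hq.2, hqlt, ?_, ?_⟩)
        · show ((Fin.castAdd m q.1 : Fin (r+m)) : ℕ) = (q.1 : ℕ)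
          simp only [Fin.coe_castAdd]
        · show ((Fin.castAdd m q.2 : Fin (r+m)) : ℕ) = (q.2 : ℕ)
          simp only [Fin.coe_castAdd]
    · have hqlt : q.1 < q.2 := (mem_Dplus_iff q).mp hq.1
      have hvlt : (q.1 : ℕ) < (q.2 : ℕ) := hqlt
      constructor
      · refine (mem_Dplus_iff _).mpr ?_
        show Fin.natAdd r q.1 < Fin.natAdd r q.2
        rw [Fin.lt_def]
        simp only [Fin.coe_natAdd]
        omega
      · rintro ⟨-, hno⟩
        refine hno (Or.inr ⟨q, hq.2, hqlt, ?_, ?_⟩)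
        · show ((Fin.natAdd r q.1 : Fin (r+m)) : ℕ) = (q.1 : ℕ) + r
          simp only [Fin.coe_natAdd]
          omega
        · show ((Fin.natAdd r q.2 : Fin (r+m)) : ℕ) = (q.2 : ℕ) + r
          simp only [Fin.coe_natAdd]
          omega

lemma sh_union_cast (T₁ : Finset (Rt r)) (T₂ : Finset (Rt m)) (a : Fin r) :
    sh (chi (T₁.map (E1 r m) ∪ T₂.map (E2 r m))) (Fin.castAdd m a) = sh (chi T₁) a := by
  rw [sh_chi, sh_chi, Finset.sum_union (disjE T₁ T₂), Finset.sum_map, Finset.sum_map]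
  have h2 : (∑ q ∈ T₂, ((if (E2 r m q).1 = Fin.castAdd m a then (1:ℤ) else 0) -
      (if (E2 r m q).2 = Fin.castAdd m a then 1 else 0))) = 0 := by
    apply Finset.sum_eq_zero
    intro q _
    have e1 : (E2 r m q).1 ≠ Fin.castAdd m a := by
      intro h
      have := congrArg Fin.val h
      simp only [E2_apply, Fin.coe_natAdd, Fin.coe_castAdd] at this
      have := a.isLt; omega
    have e2 : (E2 r m q).2 ≠ Fin.castAdd m a := by
      intro h
      have := congrArg Fin.val h
      simp only [E2_apply, Fin.coe_natAdd, Fin.coe_castAdd] at this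
      have := a.isLt; omega
    simp [e1, e2]
  rw [h2, add_zero]
  apply Finset.sum_congr rfl
  intro q _
  have e1 : ((E1 r m q).1 = Fin.castAdd m a) ↔ (q.1 = a) := by
    rw [E1_apply]
    exact ⟨fun h => Fin.castAdd_injective r m h, fun h => by rw [h]⟩
  have e2 : ((E1 r m q).2 = Fin.castAdd m a) ↔ (q.2 = a) := by
    rw [E1_apply]
    exact ⟨fun h => Fin.castAdd_injective r m h, fun h => by rw [h]⟩
  rw [if_congr e1 rfl rfl, if_congr e2 rfl rfl]

lemma sh_union_nat (T₁ : Finset (Rt r)) (T₂ : Finset (Rt m)) (a : Fin m) :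
    sh (chi (T₁.map (E1 r m) ∪ T₂.map (E2 r m))) (Fin.natAdd r a) = sh (chi T₂) a := by
  rw [sh_chi, sh_chi, Finset.sum_union (disjE T₁ T₂), Finset.sum_map, Finset.sum_map]
  have h1 : (∑ q ∈ T₁, ((if (E1 r m q).1 = Fin.natAdd r a then (1:ℤ) else 0) -
      (if (E1 r m q).2 = Fin.natAdd r a then 1 else 0))) = 0 := by
    apply Finset.sum_eq_zero
    intro q _
    have e1 : (E1 r m q).1 ≠ Fin.natAdd r a := by
      intro h
      have := congrArg Fin.val h
      simp only [E1_apply, Fin.coe_natAdd, Fin.coe_castAdd] at this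
      have := q.1.isLt; omega
    have e2 : (E1 r m q).2 ≠ Fin.natAdd r a := by
      intro h
      have := congrArg Fin.val h
      simp only [E1_apply, Fin.coe_natAdd, Fin.coe_castAdd] at this
      have := q.2.isLt; omega
    simp [e1, e2]
  rw [h1, zero_add]
  apply Finset.sum_congr rfl
  intro q _
  have hinj : ∀ x y : Fin m, Fin.natAdd r x = Fin.natAdd r y → x = y := by
    intro x y h
    have := congrArg Fin.val h
    simp only [Fin.coe_natAdd] at this
    exact Fin.ext (by omega)
  have e1 : ((E2 r m q).1 = Fin.natAdd r a) ↔ (q.1 = a) := by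
    rw [E2_apply]
    exact ⟨fun h => hinj _ _ h, fun h => by rw [h]⟩
  have e2 : ((E2 r m q).2 = Fin.natAdd r a) ↔ (q.2 = a) := by
    rw [E2_apply]
    exact ⟨fun h => hinj _ _ h, fun h => by rw [h]⟩
  rw [if_congr e1 rfl rfl, if_congr e2 rfl rfl]

end Assemble

end CatAux

open CatAux in
/-- For any indexed root ideals `(Ψ,μ)` and `(Φ,ν)`, the
`t = 1` specializations of Catalan functions multiply as
`H(Ψ;μ)(x;1) · H(Φ;ν)(x;1) = H(Ψ⊎Φ; μν)(x;1)`. -/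
theorem catalanFn_t1_mul (r m : ℕ)
    (Ψ : Finset (Fin r × Fin r)) (hΨ : IsRootIdeal Ψ)
    (Φ : Finset (Fin m × Fin m)) (hΦ : IsRootIdeal Φ)
    (μ : Fin r → ℤ) (ν : Fin m → ℤ) :
    specT1 (catalanFn Ψ μ) * specT1 (catalanFn Φ ν) =
      specT1 (catalanFn (uplus Ψ Φ) (Fin.append μ ν)) := by
  classical
  have hU : uplus Ψ Φ ⊆ Dplus (r + m) := Finset.filter_subset _ _
  rw [specT1_catalan Ψ hΨ.1 μ, specT1_catalan Φ hΦ.1 ν,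
    specT1_catalan (uplus Ψ Φ) hU (Fin.append μ ν),
    decomp Ψ Φ, Finset.sum_mul_sum, ← Finset.sum_product']
  apply Finset.sum_nbij'
    (i := fun q : Finset (Rt r) × Finset (Rt m) =>
      q.1.map (E1 r m) ∪ q.2.map (E2 r m))
    (j := fun T => ((Dplus r \ Ψ).filter (fun x => E1 r m x ∈ T),
      (Dplus m \ Φ).filter (fun x => E2 r m x ∈ T)))
  · rintro ⟨T₁, T₂⟩ hq
    simp only [Finset.mem_product, Finset.mem_powerset] at hq
    rw [Finset.mem_powerset]
    refine Finset.union_subset ?_ ?_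
    · exact (Finset.map_subset_map.mpr hq.1).trans Finset.subset_union_left
    · exact (Finset.map_subset_map.mpr hq.2).trans Finset.subset_union_right
  · intro T _
    simp only [Finset.mem_product, Finset.mem_powerset]
    exact ⟨Finset.filter_subset _ _, Finset.filter_subset _ _⟩
  · rintro ⟨T₁, T₂⟩ hq
    simp only [Finset.mem_product, Finset.mem_powerset] at hq
    have h1 : (Dplus r \ Ψ).filter
        (fun x => E1 r m x ∈ T₁.map (E1 r m) ∪ T₂.map (E2 r m)) = T₁ := by
      ext x
      simp only [Finset.mem_filter, Finset.mem_union]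
      constructor
      · rintro ⟨hx, hmem | hmem⟩
        · exact (Finset.mem_map' _).mp hmem
        · obtain ⟨y, _, hy⟩ := Finset.mem_map.mp hmem
          exact absurd hy.symm (E1_ne_E2 x y)
      · intro hx
        exact ⟨hq.1 hx, Or.inl ((Finset.mem_map' _).mpr hx)⟩
    have h2 : (Dplus m \ Φ).filter
        (fun x => E2 r m x ∈ T₁.map (E1 r m) ∪ T₂.map (E2 r m)) = T₂ := by
      ext x
      simp only [Finset.mem_filter, Finset.mem_union]
      constructor
      · rintro ⟨hx, hmem | hmem⟩
        · obtain ⟨y, _, hy⟩ := Finset.mem_map.mp hmem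
          exact absurd hy (E1_ne_E2 y x)
        · exact (Finset.mem_map' _).mp hmem
      · intro hx
        exact ⟨hq.2 hx, Or.inr ((Finset.mem_map' _).mpr hx)⟩
    exact Prod.ext_iff.mpr ⟨h1, h2⟩
  · intro T hT
    rw [Finset.mem_powerset] at hT
    ext y
    simp only [Finset.mem_union, Finset.mem_map, Finset.mem_filter]
    constructor
    · rintro (⟨x, ⟨_, hxT⟩, rfl⟩ | ⟨x, ⟨_, hxT⟩, rfl⟩) <;> exact hxT
    · intro hy
      rcases Finset.mem_union.mp (hT hy) with h | h
      · obtain ⟨x, hx, rfl⟩ := Finset.mem_map.mp h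
        exact Or.inl ⟨x, ⟨hx, hy⟩, rfl⟩
      · obtain ⟨x, hx, rfl⟩ := Finset.mem_map.mp h
        exact Or.inr ⟨x, ⟨hx, hy⟩, rfl⟩
  · rintro ⟨T₁, T₂⟩ hq
    dsimp only
    rw [smul_mul_smul_comm]
    have hcard : (T₁.map (E1 r m) ∪ T₂.map (E2 r m)).card = T₁.card + T₂.card := by
      rw [Finset.card_union_of_disjoint (disjE T₁ T₂), Finset.card_map, Finset.card_map]
    congr 1
    · rw [hcard, pow_add]
    · rw [Hp, Hp, Hp, Fin.prod_univ_add (f := fun i =>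
        h' (Fin.append μ ν i + sh (chi (T₁.map (E1 r m) ∪ T₂.map (E2 r m))) i))]
      congr 1
      · apply Finset.prod_congr rfl
        intro i _
        rw [Fin.append_left, sh_union_cast]
      · apply Finset.prod_congr rfl
        intro i _
        rw [Fin.append_right, sh_union_nat]

end
end

section
/- Let w ∈ S_{k+1} and set (I_1,…,I_{k+1}) = Inv(w₀w). For each i ∈ [k−1], the number n_i of parts of size i in θ(w) satisfies: n_i = I_i − I_{i+1} − 1 if i ∉ D(w), and n_i = k − i + I_i − I_{i+1} if i ∈ D(w). Moreover, writing w in its unique factorization w = c_k^{m_0} c_{k−1}^{m_1} ⋯ c_1^{m_{k−1}} with 0 ≤ m_i ≤ k−i for all i, where c_i = s_{k+1−i}⋯s_k (products of adjacent transpositions), one has n_i = m_i for all i ∈ [k−1]. (This determines θ(w) completely since θ(w) is irreducible and thus has only parts of size ≤ k−1.) -/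
open scoped BigOperators Classical

noncomputable section

/-- The longest element `w₀` of `S_{k+1}` (0-based one-line notation `i ↦ k - i`). -/
def w0 (k : ℕ) : Equiv.Perm (Fin (k + 1)) := Fin.revPerm

/-- The inversion sequence: `Inv_i(v) = #{j > i : v_i > v_j}` for `1 ≤ i ≤ k+1`
(1-based positions). -/
def invOf (k : ℕ) (v : Equiv.Perm (Fin (k + 1))) (i : ℕ) : ℕ :=
  if h : 1 ≤ i ∧ i ≤ k + 1 then
    (Finset.univ.filter fun j : Fin (k + 1) =>
      i - 1 < (j : ℕ) ∧ v j < v ⟨i - 1, by omega⟩).card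
  else 0

/-- `i ∈ D(w)`: `w` has a descent at (1-based) position `i`, i.e. `w_i > w_{i+1}`. -/
def isDescent (k : ℕ) (w : Equiv.Perm (Fin (k + 1))) (i : ℕ) : Prop :=
  ∃ h : 1 ≤ i ∧ i ≤ k, w ⟨i, by omega⟩ < w ⟨i - 1, by omega⟩

/-- The length of the `i`-th column (1 ≤ i ≤ k) of the partition `ζ(w)`:
`binom(k+1-i, 2) + Inv_i(w₀ w)`. -/
def zetaCol (k : ℕ) (w : Equiv.Perm (Fin (k + 1))) (i : ℕ) : ℕ :=
  if 1 ≤ i ∧ i ≤ k then Nat.choose (k + 1 - i) 2 + invOf k (w0 k * w) i else 0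

/-- The number of parts of size `i` of `ζ(w)`. -/
def nZeta (k : ℕ) (w : Equiv.Perm (Fin (k + 1))) (i : ℕ) : ℕ :=
  zetaCol k w i - zetaCol k w (i + 1)

/-- The number of parts of size `i` of `θ(w) = ζ(w)↓`, the irreducible partition
obtained from `ζ(w)` by removing as many `k`-rectangles `R_i = (i^{k+1-i})` as
possible: the multiplicity of `i` is reduced modulo `k + 1 - i`. -/
def nTheta (k : ℕ) (w : Equiv.Perm (Fin (k + 1))) (i : ℕ) : ℕ :=
  nZeta k w i % (k + 1 - i)

/-- The length of the `c`-th column of `θ(w)`, i.e. the number of parts of `θ(w)`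
of size `≥ c`. -/
def thetaCol (k : ℕ) (w : Equiv.Perm (Fin (k + 1))) (c : ℕ) : ℕ :=
  ∑ x ∈ Finset.Icc c k, nTheta k w x

/-- The adjacent transposition `s_j ∈ S_{k+1}` swapping (1-based) positions `j, j+1`. -/
def sTrans (k : ℕ) (j : ℕ) : Equiv.Perm (Fin (k + 1)) :=
  if h : 1 ≤ j ∧ j ≤ k then Equiv.swap ⟨j - 1, by omega⟩ ⟨j, by omega⟩ else 1

/-- The cycle `c_i = s_{k+1-i} s_{k+2-i} ⋯ s_k`. -/
def cPerm (k : ℕ) (i : ℕ) : Equiv.Perm (Fin (k + 1)) :=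
  ((List.range i).map fun t => sTrans k (k + 1 - i + t)).prod



lemma sTrans_apply (k j : ℕ) (h1 : 1 ≤ j) (h2 : j ≤ k) (x : Fin (k+1)) :
    ((sTrans k j) x : ℕ) = if (x:ℕ) = j - 1 then j else if (x:ℕ) = j then j - 1 else x := by
  rw [sTrans, dif_pos ⟨h1, h2⟩]
  rcases eq_or_ne x ⟨j-1, by omega⟩ with h | h
  · subst h; rw [Equiv.swap_apply_left]
    simp only [Fin.val_mk]
    split_ifs <;> omega
  rcases eq_or_ne x ⟨j, by omega⟩ with h' | h'
  · subst h'; rw [Equiv.swap_apply_right]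
    simp only [Fin.val_mk]
    split_ifs <;> omega
  · rw [Equiv.swap_apply_of_ne_of_ne h h']
    have hj : (x:ℕ) ≠ j - 1 := fun e => h (Fin.ext e)
    have hj' : (x:ℕ) ≠ j := fun e => h' (Fin.ext e)
    split_ifs <;> omega

lemma prodS_apply (k a n : ℕ) (ha : 1 ≤ a) (han : a + n ≤ k + 1) (x : Fin (k+1)) :
    ((((List.range n).map fun t => sTrans k (a+t)).prod x : Fin (k+1)) : ℕ) =
    if (x:ℕ) < a - 1 ∨ a + n - 1 < (x:ℕ) then (x:ℕ)
    else if (x:ℕ) = a + n - 1 then a - 1 else (x:ℕ)+1 := by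
  induction n generalizing x with
  | zero =>
    simp only [List.range_zero, List.map_nil, List.prod_nil, Equiv.Perm.one_apply]
    split_ifs <;> omega
  | succ n ih =>
    rw [List.range_succ, List.map_append, List.prod_append]
    simp only [List.map_cons, List.map_nil, List.prod_cons, List.prod_nil, mul_one,
      Equiv.Perm.mul_apply]
    have hs := sTrans_apply k (a+n) (by omega) (by omega) x
    have ihs := ih (by omega) (sTrans k (a+n) x)
    rw [hs] at ihs
    rw [ihs]
    have hx := x.isLt
    split_ifs <;> omega

lemma cPerm_apply (k i : ℕ) (h1 : 1 ≤ i) (h2 : i ≤ k) (x : Fin (k+1)) :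
    ((cPerm k i) x : ℕ) =
    if (x:ℕ) < k - i then (x:ℕ) else if (x:ℕ) = k then k - i else (x:ℕ)+1 := by
  rw [cPerm, prodS_apply k (k+1-i) i (by omega) (by omega) x]
  have hx := x.isLt
  split_ifs <;> omega

lemma cPow_apply (k i : ℕ) (h1 : 1 ≤ i) (h2 : i ≤ k) (m : ℕ) (x : Fin (k+1)) :
    (((cPerm k i)^m) x : ℕ) =
    if (x:ℕ) < k - i then (x:ℕ) else (k-i) + (((x:ℕ)-(k-i)+m) % (i+1)) := by
  induction m generalizing x with
  | zero =>
    simp only [pow_zero, Equiv.Perm.one_apply]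
    split_ifs with h3
    · rfl
    · have := Nat.mod_eq_of_lt (show (x:ℕ)-(k-i)+0 < i+1 by omega); omega
  | succ m ih =>
    rw [pow_succ, Equiv.Perm.mul_apply, ih (cPerm k i x)]
    have hc := cPerm_apply k i h1 h2 x
    have hx := x.isLt
    by_cases h3 : (x:ℕ) < k - i
    · rw [if_pos (by rw [hc]; split_ifs <;> omega), hc, if_pos h3, if_pos h3]
    · have hcv : ((cPerm k i) x : ℕ) = (k-i) + (((x:ℕ) - (k-i) + 1) % (i+1)) := by
        rw [hc]
        by_cases h4 : (x:ℕ) = k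
        · rw [if_neg h3, if_pos h4]
          have e : (x:ℕ) - (k-i) + 1 = i + 1 := by omega
          rw [e, Nat.mod_self]; omega
        · rw [if_neg h3, if_neg h4, Nat.mod_eq_of_lt (by omega)]; omega
      rw [if_neg h3, if_neg (by rw [hcv]; omega), hcv]
      have e : (k - i + ((x:ℕ) - (k-i) + 1) % (i+1)) - (k-i) = ((x:ℕ) - (k-i) + 1) % (i+1) := by
        omega
      rw [e, Nat.add_comm m, Nat.mod_add_mod]
      congr 2
      omega

def rnk (k : ℕ) (h : Equiv.Perm (Fin (k+1))) (a : ℕ) (z : Fin (k+1)) : ℕ :=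
  (Finset.univ.filter fun y : Fin (k+1) => a ≤ (y:ℕ) ∧ h y < z).card

lemma card_tail (k a : ℕ) :
    (Finset.univ.filter fun y : Fin (k+1) => a ≤ (y:ℕ)).card = k+1-a := by
  rw [← Finset.card_range (k+1-a)]
  refine Finset.card_bij (fun (y : Fin (k+1)) _ => (y:ℕ) - a) ?_ ?_ ?_
  · intro y hy
    simp only [Finset.mem_filter, Finset.mem_univ, true_and] at hy
    have := y.isLt
    simp only [Finset.mem_range]; omega
  · intro y1 h1 y2 h2 e
    simp only [Finset.mem_filter, Finset.mem_univ, true_and] at h1 h2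
    exact Fin.ext (by omega)
  · intro b hb
    simp only [Finset.mem_range] at hb
    refine ⟨⟨a+b, by omega⟩, ?_, ?_⟩
    · simp only [Finset.mem_filter, Finset.mem_univ, true_and, Fin.val_mk]; omega
    · show a + b - a = b
      omega

lemma rnk_le (k : ℕ) (h : Equiv.Perm (Fin (k+1))) (a : ℕ) (z : Fin (k+1)) :
    rnk k h a z ≤ k+1-a := by
  rw [rnk, ← card_tail k a]
  exact Finset.card_le_card (fun y hy => by
    simp only [Finset.mem_filter, Finset.mem_univ, true_and] at hy ⊢; exact hy.1)

lemma rnk_mono (k : ℕ) (h : Equiv.Perm (Fin (k+1))) (a : ℕ) {z1 z2 : Fin (k+1)}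
    (hz : z1 ≤ z2) : rnk k h a z1 ≤ rnk k h a z2 :=
  Finset.card_le_card (fun y hy => by
    simp only [Finset.mem_filter, Finset.mem_univ, true_and] at hy ⊢
    exact ⟨hy.1, lt_of_lt_of_le hy.2 hz⟩)

lemma rnk_lt (k : ℕ) (h : Equiv.Perm (Fin (k+1))) (a : ℕ) {x : Fin (k+1)} {z : Fin (k+1)}
    (hx : a ≤ (x:ℕ)) (hz : h x < z) : rnk k h a (h x) < rnk k h a z := by
  have hsub : insert x (Finset.univ.filter fun y : Fin (k+1) => a ≤ (y:ℕ) ∧ h y < h x)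
      ⊆ Finset.univ.filter fun y : Fin (k+1) => a ≤ (y:ℕ) ∧ h y < z := by
    intro y hy
    rcases Finset.mem_insert.mp hy with rfl | hy
    · simp only [Finset.mem_filter, Finset.mem_univ, true_and]; exact ⟨hx, hz⟩
    · simp only [Finset.mem_filter, Finset.mem_univ, true_and] at hy ⊢
      exact ⟨hy.1, lt_trans hy.2 hz⟩
  have hnm : x ∉ (Finset.univ.filter fun y : Fin (k+1) => a ≤ (y:ℕ) ∧ h y < h x) := by
    simp only [Finset.mem_filter, Finset.mem_univ, true_and]
    exact fun hc => lt_irrefl _ hc.2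
  have := Finset.card_le_card hsub
  rw [Finset.card_insert_of_notMem hnm] at this
  rw [rnk, rnk]; omega

lemma rnk_shrink (k : ℕ) (h : Equiv.Perm (Fin (k+1))) (a : ℕ) (ha : a ≤ k) (z : Fin (k+1)) :
    rnk k h a z = rnk k h (a+1) z + (if h ⟨a, by omega⟩ < z then 1 else 0) := by
  rw [rnk, rnk]
  have hsplit : (Finset.univ.filter fun y : Fin (k+1) => a ≤ (y:ℕ) ∧ h y < z) =
      (Finset.univ.filter fun y : Fin (k+1) => a+1 ≤ (y:ℕ) ∧ h y < z) ∪
      (Finset.univ.filter fun y : Fin (k+1) => (y:ℕ) = a ∧ h y < z) := by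
    ext y
    simp only [Finset.mem_filter, Finset.mem_union, Finset.mem_univ, true_and]
    constructor
    · rintro ⟨h1, h2⟩
      rcases Nat.eq_or_lt_of_le h1 with h3 | h3
      · exact Or.inr ⟨h3.symm, h2⟩
      · exact Or.inl ⟨h3, h2⟩
    · rintro (⟨h1, h2⟩ | ⟨h1, h2⟩) <;> exact ⟨by omega, h2⟩
  rw [hsplit, Finset.card_union_of_disjoint]
  · congr 1
    by_cases hc : h ⟨a, by omega⟩ < z
    · rw [if_pos hc]
      rw [Finset.card_eq_one]
      exact ⟨⟨a, by omega⟩, by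
        ext y
        simp only [Finset.mem_filter, Finset.mem_univ, true_and, Finset.mem_singleton]
        constructor
        · rintro ⟨h1, h2⟩; exact Fin.ext h1
        · rintro rfl; exact ⟨rfl, hc⟩⟩
    · rw [if_neg hc]
      rw [Finset.card_eq_zero]
      ext y
      simp only [Finset.mem_filter, Finset.mem_univ, true_and, Finset.notMem_empty,
        iff_false, not_and]
      intro h1 h2
      exact hc (by rwa [show (⟨a, by omega⟩ : Fin (k+1)) = y from Fin.ext h1.symm])
  · rw [Finset.disjoint_left]
    intro y h1 h2
    simp only [Finset.mem_filter, Finset.mem_univ, true_and] at h1 h2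
    omega

lemma fix_lt (k : ℕ) (g : Equiv.Perm (Fin (k+1))) (a : ℕ)
    (hg : ∀ x : Fin (k+1), (x:ℕ) < a → g x = x) (j : Fin (k+1)) (hj : ((g j : Fin (k+1)):ℕ) < a) :
    (j:ℕ) < a := by
  have := hg (g j) hj
  have := g.injective this
  rw [← this]; exact hj

lemma card_reindex (k : ℕ) (h g : Equiv.Perm (Fin (k+1))) (a : ℕ)
    (hg : ∀ x : Fin (k+1), (x:ℕ) < a → g x = x) (z : Fin (k+1)) :
    (Finset.univ.filter fun j : Fin (k+1) => a ≤ (j:ℕ) ∧ h (g j) < z).card = rnk k h a z := by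
  rw [rnk]
  refine Finset.card_bij (fun (j : Fin (k+1)) _ => g j) ?_ ?_ ?_
  · intro j hj
    simp only [Finset.mem_filter, Finset.mem_univ, true_and] at hj ⊢
    refine ⟨?_, hj.2⟩
    by_contra hc
    exact absurd (fix_lt k g a hg j (by omega)) (by omega)
  · intro j1 h1 j2 h2 e
    exact g.injective e
  · intro y hy
    simp only [Finset.mem_filter, Finset.mem_univ, true_and] at hy
    refine ⟨g⁻¹ y, ?_, by simp⟩
    simp only [Finset.mem_filter, Finset.mem_univ, true_and]
    constructor
    · by_contra hc
      have h1 : g (g⁻¹ y) = g⁻¹ y := hg (g⁻¹ y) (by omega)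
      rw [← Equiv.Perm.mul_apply, mul_inv_cancel, Equiv.Perm.one_apply] at h1
      rw [h1] at hy
      omega
    · rw [show g (g⁻¹ y) = y from by rw [← Equiv.Perm.mul_apply, mul_inv_cancel, Equiv.Perm.one_apply]]; exact hy.2

def hPf (k : ℕ) (m : ℕ → ℕ) (s : ℕ) : Equiv.Perm (Fin (k+1)) :=
  ((List.range s).map fun t => cPerm k (k-t) ^ m t).prod

def tPf (k : ℕ) (m : ℕ → ℕ) (s : ℕ) : Equiv.Perm (Fin (k+1)) :=
  ((List.range (k-s)).map fun t => cPerm k (k-(s+t)) ^ m (s+t)).prod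

lemma cPow_fix (k : ℕ) (t mt : ℕ) (ht : t ≤ k - 1) (hk : 1 ≤ k) (x : Fin (k+1))
    (hx : (x:ℕ) < t) : (cPerm k (k-t) ^ mt) x = x := by
  apply Fin.ext
  rw [cPow_apply k (k-t) (by omega) (by omega) mt x, if_pos (by omega)]

lemma prod_fix (k : ℕ) (L : List (Equiv.Perm (Fin (k+1)))) (x : Fin (k+1))
    (hL : ∀ p ∈ L, p x = x) : L.prod x = x := by
  induction L with
  | nil => simp
  | cons p L ih =>
    rw [List.prod_cons, Equiv.Perm.mul_apply, ih (fun q hq => hL q (List.mem_cons_of_mem p hq)),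
      hL p List.mem_cons_self]

lemma tPf_fix (k : ℕ) (m : ℕ → ℕ) (s : ℕ) (hk : 1 ≤ k) (x : Fin (k+1)) (hx : (x:ℕ) < s) :
    tPf k m s x = x := by
  apply prod_fix
  intro p hp
  simp only [tPf, List.mem_map, List.mem_range] at hp
  obtain ⟨t, ht, rfl⟩ := hp
  exact cPow_fix k (s+t) (m (s+t)) (by omega) hk x (by omega)

lemma hPf_split (k : ℕ) (m : ℕ → ℕ) (s : ℕ) (hs : s ≤ k) :
    hPf k m k = hPf k m s * tPf k m s := by
  have hr : List.range k = List.range s ++ List.map (fun t => s + t) (List.range (k-s)) := by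
    rw [← List.range_add]; congr 1; omega
  rw [hPf, hPf, tPf, hr, List.map_append, List.prod_append, List.map_map]
  congr 1

lemma hPf_succ (k : ℕ) (m : ℕ → ℕ) (s : ℕ) :
    hPf k m (s+1) = hPf k m s * cPerm k (k-s) ^ m s := by
  rw [hPf, hPf, List.range_succ, List.map_append, List.prod_append]
  simp

lemma tPf_succ (k : ℕ) (m : ℕ → ℕ) (s : ℕ) (hs : s ≤ k - 1) (hk : 1 ≤ k) :
    tPf k m s = cPerm k (k-s) ^ m s * tPf k m (s+1) := by
  rw [tPf, show k - s = (k - (s+1)) + 1 by omega, List.range_succ_eq_map,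
    List.map_cons, List.prod_cons, List.map_map, tPf]
  congr 1
  · rw [show k - (s+0) = k - (s+1) + 1 from by omega]
    norm_num
  · congr 1
    apply List.map_congr_left
    intro t _
    simp only [Function.comp_apply]
    rw [show s + Nat.succ t = (s+1)+t by omega]

lemma tPf_val (k : ℕ) (m : ℕ → ℕ) (i : ℕ) (hi : i ≤ k - 1) (hk : 1 ≤ k)
    (hmi : m i ≤ k - i) :
    ((tPf k m i ⟨i, by omega⟩ : Fin (k+1)) : ℕ) = i + m i := by
  rw [tPf_succ k m i hi hk, Equiv.Perm.mul_apply, tPf_fix k m (i+1) hk _ (by simp),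
    cPow_apply k (k-i) (by omega) (by omega)]
  simp only [Fin.val_mk]
  rw [if_neg (by omega), show k - (k-i) = i by omega]
  have h5 := Nat.mod_eq_of_lt (show i - i + m i < (k-i)+1 by omega)
  omega

set_option maxHeartbeats 1000000 in
lemma rot_step (k : ℕ) (m : ℕ → ℕ) (s : ℕ) (hs : s < k) (c : ℕ)
    (H : ∀ x : Fin (k+1), s ≤ (x:ℕ) →
      rnk k (hPf k m s) s ((hPf k m s) x) = (((x:ℕ) - s) + c) % (k+1-s)) :
    ∀ x : Fin (k+1), s ≤ (x:ℕ) →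
      rnk k (hPf k m (s+1)) s ((hPf k m (s+1)) x) = (((x:ℕ) - s) + (m s + c)) % (k+1-s) := by
  intro x hx
  set h := hPf k m s with hh
  set r := cPerm k (k-s) ^ m s with hr
  have hfix : ∀ y : Fin (k+1), (y:ℕ) < s → r y = y := fun y hy =>
    cPow_fix k s (m s) (by omega) (by omega) y hy
  have happ : ∀ y : Fin (k+1), (hPf k m (s+1)) y = h (r y) := by
    intro y; rw [hPf_succ, Equiv.Perm.mul_apply]
  have hrnk : ∀ z : Fin (k+1), rnk k (hPf k m (s+1)) s z = rnk k h s z := by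
    intro z
    rw [rnk]
    have := card_reindex k h r s hfix z
    rw [← this]
    congr 1
    ext j
    simp only [Finset.mem_filter, Finset.mem_univ, true_and, happ]
  have hrx : ((r x : Fin (k+1)) : ℕ) = s + (((x:ℕ) - s + m s) % (k+1-s)) := by
    rw [hr, cPow_apply k (k-s) (by omega) (by omega)]
    rw [if_neg (by omega), show k - (k-s) = s by omega, show k - s + 1 = k + 1 - s by omega]
  have hxle := x.isLt
  rw [hrnk, happ, H (r x) (by omega), hrx]
  have e1 : s + ((x:ℕ) - s + m s) % (k+1-s) - s = ((x:ℕ) - s + m s) % (k+1-s) := by omega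
  rw [e1, Nat.mod_add_mod]
  congr 1
  omega

set_option maxHeartbeats 1000000 in
lemma shrink_step (k : ℕ) (h : Equiv.Perm (Fin (k+1))) (s : ℕ) (hs : s ≤ k - 1) (hk : 1 ≤ k)
    (c : ℕ)
    (H : ∀ x : Fin (k+1), s ≤ (x:ℕ) → rnk k h s (h x) = (((x:ℕ) - s) + c) % (k+1-s)) :
    (∀ x : Fin (k+1), s+1 ≤ (x:ℕ) →
      rnk k h (s+1) (h x) = (((x:ℕ) - (s+1)) + c % (k+1-s)) % (k-s)) ∧
    rnk k h (s+1) (h ⟨s, by omega⟩) = c % (k+1-s) := by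
  set N := k + 1 - s with hN
  have hN2 : 2 ≤ N := by omega
  set c0 := c % N with hc0
  have hc0lt : c0 < N := Nat.mod_lt _ (by omega)
  have h2 : rnk k h s (h ⟨s, by omega⟩) = c0 := by
    rw [H ⟨s, by omega⟩ (by simp), Fin.val_mk, Nat.sub_self, Nat.zero_add]
  have hs0 : rnk k h (s+1) (h ⟨s, by omega⟩) = c0 := by
    have h3 := rnk_shrink k h s (by omega) (h ⟨s, by omega⟩)
    rw [if_neg (lt_irrefl _)] at h3
    omega
  refine ⟨?_, hs0⟩
  intro x hx
  have hxle := x.isLt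
  set j' := (x:ℕ) - (s+1) with hj'
  have hj'le : j' ≤ N - 2 := by omega
  have h1 : rnk k h s (h x) = (j' + 1 + c0) % N := by
    rw [H x (by omega), Nat.add_mod ((x:ℕ) - s) c N, Nat.mod_add_mod, ← hc0]
    congr 1
    omega
  have h3 := rnk_shrink k h s (by omega) (h x)
  have hiff : h ⟨s, by omega⟩ < h x ↔ c0 < (j' + 1 + c0) % N := by
    constructor
    · intro hlt
      have h9 := rnk_lt k h s (x := (⟨s, by omega⟩ : Fin (k+1))) (z := h x) (le_refl s) hlt
      rw [h2] at h9
      rw [h1] at h9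
      exact h9
    · intro hlt
      by_contra hnot
      have hne : h x ≠ h ⟨s, by omega⟩ := by
        intro e
        have := h.injective e
        have : (x:ℕ) = s := by rw [this]
        omega
      have hlt2 : h x < h ⟨s, by omega⟩ := lt_of_le_of_ne (le_of_not_gt hnot) hne
      have h9 := rnk_lt k h s (x := x) (z := h ⟨s, by omega⟩) (by omega) hlt2
      rw [h2] at h9
      rw [h1] at h9
      omega
  by_cases hA : j' + 1 + c0 < N
  · have hval : (j' + 1 + c0) % N = j' + 1 + c0 := Nat.mod_eq_of_lt hA
    have hcond : h ⟨s, by omega⟩ < h x := hiff.2 (by omega)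
    rw [if_pos hcond] at h3
    have hval2 : (j' + c0) % (k - s) = j' + c0 := Nat.mod_eq_of_lt (by omega)
    omega
  · have hlt2 : j' + 1 + c0 - N < N := by omega
    have hval : (j' + 1 + c0) % N = j' + 1 + c0 - N := by
      rw [Nat.mod_eq_sub_mod (by omega), Nat.mod_eq_of_lt hlt2]
    have hcond : ¬ (h ⟨s, by omega⟩ < h x) := fun hl => by
      have := hiff.1 hl
      omega
    rw [if_neg hcond] at h3
    have hval2 : (j' + c0) % (k - s) = j' + c0 - (k - s) := by
      rw [Nat.mod_eq_sub_mod (by omega), Nat.mod_eq_of_lt (by omega)]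
    omega

lemma rankQ (k : ℕ) (m : ℕ → ℕ) : ∀ s, s ≤ k → ∃ c, ∀ x : Fin (k+1), s ≤ (x:ℕ) →
    rnk k (hPf k m s) s ((hPf k m s) x) = (((x:ℕ) - s) + c) % (k+1-s) := by
  intro s
  induction s with
  | zero =>
    intro _
    refine ⟨0, fun x _ => ?_⟩
    have h1 : hPf k m 0 = 1 := by rw [hPf]; simp
    rw [h1]
    simp only [Equiv.Perm.one_apply, Nat.sub_zero, Nat.add_zero]
    rw [Nat.mod_eq_of_lt (by omega), rnk]
    rw [← Finset.card_range (x:ℕ)]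
    refine Finset.card_bij (fun (y : Fin (k+1)) _ => (y:ℕ)) ?_ ?_ ?_
    · intro y hy
      simp only [Finset.mem_filter, Finset.mem_univ, true_and] at hy
      simp only [Finset.mem_range]
      exact hy.2
    · intro y1 h1 y2 h2 e
      exact Fin.ext e
    · intro b hb
      simp only [Finset.mem_range] at hb
      have hxle := x.isLt
      refine ⟨⟨b, by omega⟩, ?_, rfl⟩
      simp only [Finset.mem_filter, Finset.mem_univ, true_and, Fin.val_mk]
      exact ⟨Nat.zero_le _, by rw [Fin.lt_def]; simpa using hb⟩
  | succ s ih =>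
    intro hs1
    obtain ⟨c, hc⟩ := ih (by omega)
    have hrot := rot_step k m s (by omega) c hc
    have hshr := shrink_step k (hPf k m (s+1)) s (by omega) (by omega) (m s + c) hrot
    exact ⟨(m s + c) % (k+1-s), fun x hx => by
      rw [(hshr.1 x hx)]
      congr 1
      omega⟩

lemma invOf_eq_rnk (k : ℕ) (v : Equiv.Perm (Fin (k+1))) (i : ℕ) (hi1 : 1 ≤ i) (hi2 : i ≤ k+1) :
    invOf k v i = rnk k v i (v ⟨i-1, by omega⟩) := by
  rw [invOf, dif_pos ⟨hi1, hi2⟩, rnk]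
  congr 1
  ext j
  simp only [Finset.mem_filter, Finset.mem_univ, true_and]
  exact ⟨fun ⟨a, b⟩ => ⟨by omega, b⟩, fun ⟨a, b⟩ => ⟨by omega, b⟩⟩

lemma invOf_le (k : ℕ) (v : Equiv.Perm (Fin (k+1))) (i : ℕ) (hi1 : 1 ≤ i) (hi2 : i ≤ k+1) :
    invOf k v i ≤ k+1-i := by
  rw [invOf_eq_rnk k v i hi1 hi2]
  exact rnk_le _ _ _ _

lemma invOf_succ_eq_rnk (k : ℕ) (v : Equiv.Perm (Fin (k+1))) (i : ℕ) (hi1 : 1 ≤ i)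
    (hi2 : i ≤ k) : invOf k v (i+1) = rnk k v i (v ⟨i, by omega⟩) := by
  rw [invOf_eq_rnk k v (i+1) (by omega) (by omega)]
  have e : (⟨i+1-1, by omega⟩ : Fin (k+1)) = ⟨i, by omega⟩ := rfl
  rw [e, rnk_shrink k v i (by omega) (v ⟨i, by omega⟩), if_neg (lt_irrefl _)]
  exact (Nat.add_zero _).symm

lemma invOf_compl (k : ℕ) (w : Equiv.Perm (Fin (k+1))) (i : ℕ) (hi1 : 1 ≤ i) (hi2 : i ≤ k+1) :
    invOf k (w0 k * w) i + invOf k w i = k+1-i := by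
  rw [invOf, dif_pos ⟨hi1, hi2⟩, invOf, dif_pos ⟨hi1, hi2⟩]
  set x : Fin (k+1) := ⟨i-1, by omega⟩ with hxdef
  have hrev : ∀ y : Fin (k+1), (w0 k * w) y = (w y).rev := fun y => rfl
  have hcond : ∀ j : Fin (k+1), (w0 k * w) j < (w0 k * w) x ↔ w x < w j := by
    intro j
    rw [hrev, hrev, Fin.rev_lt_rev]
  have hsplit : (Finset.univ.filter fun j : Fin (k+1) => i - 1 < (j:ℕ) ∧ (w0 k * w) j < (w0 k * w) x) ∪
      (Finset.univ.filter fun j : Fin (k+1) => i - 1 < (j:ℕ) ∧ w j < w x) =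
      (Finset.univ.filter fun j : Fin (k+1) => i ≤ (j:ℕ)) := by
    ext j
    simp only [Finset.mem_union, Finset.mem_filter, Finset.mem_univ, true_and]
    constructor
    · rintro (⟨a, b⟩ | ⟨a, b⟩) <;> omega
    · intro hj
      have hne : w j ≠ w x := by
        intro e
        have := w.injective e
        have : (j:ℕ) = i - 1 := by rw [this]
        omega
      rcases lt_or_gt_of_ne hne with hlt | hlt
      · exact Or.inr ⟨by omega, hlt⟩
      · exact Or.inl ⟨by omega, (hcond j).mpr hlt⟩
  have hdisj : Disjoint
      (Finset.univ.filter fun j : Fin (k+1) => i - 1 < (j:ℕ) ∧ (w0 k * w) j < (w0 k * w) x)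
      (Finset.univ.filter fun j : Fin (k+1) => i - 1 < (j:ℕ) ∧ w j < w x) := by
    rw [Finset.disjoint_left]
    intro j h1 h2
    simp only [Finset.mem_filter, Finset.mem_univ, true_and] at h1 h2
    have := (hcond j).mp h1.2
    exact absurd h2.2 (asymm this)
  have := Finset.card_union_of_disjoint hdisj
  rw [hsplit, card_tail] at this
  omega

lemma J_rec (k : ℕ) (m : ℕ → ℕ) (i : ℕ) (hk : 1 ≤ k) (hi1 : 1 ≤ i) (hi2 : i ≤ k-1)
    (hmi : m i ≤ k - i) :
    invOf k (hPf k m k) (i+1) = (m i + invOf k (hPf k m k) i) % (k+1-i) := by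
  set w := hPf k m k with hwdef
  set h := hPf k m i with hhdef
  set g := tPf k m i with hgdef
  have hw : w = h * g := hPf_split k m i (by omega)
  have hgfix : ∀ y : Fin (k+1), (y:ℕ) < i → g y = y := fun y hy => tPf_fix k m i hk y hy
  have hgi : ((g ⟨i, by omega⟩ : Fin (k+1)) : ℕ) = i + m i := tPf_val k m i hi2 hk hmi
  have happ : ∀ y : Fin (k+1), w y = h (g y) := by
    intro y; rw [hw, Equiv.Perm.mul_apply]
  -- invariant data
  obtain ⟨c, hc⟩ := rankQ k m (i-1) (by omega)
  have hrot := rot_step k m (i-1) (by omega) c hc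
  have e1 : i - 1 + 1 = i := by omega
  rw [e1] at hrot
  have hshr := shrink_step k h (i-1) (by omega) hk (m (i-1) + c) hrot
  set c0 := (m (i-1) + c) % (k+1-(i-1)) with hc0def
  have hshr1 : ∀ x : Fin (k+1), i ≤ (x:ℕ) →
      rnk k h i (h x) = (((x:ℕ) - i) + c0) % (k+1-i) := by
    intro x hx
    have h5 := hshr.1 x (by omega)
    rw [e1, show k - (i-1) = k+1-i by omega] at h5
    exact h5
  have hshr2 : rnk k h i (h ⟨i-1, by omega⟩) = c0 := by
    have h5 := hshr.2
    have e2 : rnk k h (i-1+1) = rnk k h i := by rw [e1]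
    rw [e2] at h5
    exact h5
  have hwrnk : ∀ z : Fin (k+1), rnk k w i z = rnk k h i z := by
    intro z
    rw [rnk, ← card_reindex k h g i hgfix z]
    congr 1
    ext j
    simp only [Finset.mem_filter, Finset.mem_univ, true_and, happ]
  -- J_i
  have hJi : invOf k w i = c0 := by
    rw [invOf_eq_rnk k w i (by omega) (by omega), hwrnk]
    have hgx : g ⟨i-1, by omega⟩ = ⟨i-1, by omega⟩ := hgfix _ (by omega : i - 1 < i)
    have hz : w ⟨i-1, by omega⟩ = h ⟨i-1, by omega⟩ := (happ _).trans (congrArg _ hgx)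
    rw [hz]
    exact hshr2
  -- J_{i+1}
  have hJi1 : invOf k w (i+1) = (m i + c0) % (k+1-i) := by
    have hgx1 : g ⟨i, by omega⟩ = ⟨i + m i, by omega⟩ := Fin.ext hgi
    have hz : w ⟨i, by omega⟩ = h ⟨i + m i, by omega⟩ := (happ _).trans (congrArg _ hgx1)
    rw [invOf_succ_eq_rnk k w i (by omega) (by omega), hwrnk, hz,
      hshr1 ⟨i + m i, by omega⟩ (by omega : i ≤ i + m i)]
    congr 1
    omega
  rw [hJi, hJi1]

set_option maxHeartbeats 1000000 in
/-- Let `w ∈ S_{k+1}` and set `(I_1,…,I_{k+1}) = Inv(w₀ w)`.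
For each `i ∈ [k-1]`, the number `n_i` of parts of size `i` in `θ(w)` satisfies
`n_i = I_i - I_{i+1} - 1` if `i ∉ D(w)`, and `n_i = k - i + I_i - I_{i+1}` if
`i ∈ D(w)`.  Moreover, writing `w` in its unique factorization
`w = c_k^{m_0} c_{k-1}^{m_1} ⋯ c_1^{m_{k-1}}` with `0 ≤ m_i ≤ k - i` for all `i`,
where `c_i = s_{k+1-i} ⋯ s_k`, one has `n_i = m_i` for all `i ∈ [k-1]`. -/
theorem nTheta_formula (k : ℕ) (hk : 1 ≤ k) (w : Equiv.Perm (Fin (k + 1))) :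
    (∀ i, 1 ≤ i → i ≤ k - 1 →
      (¬ isDescent k w i →
        (nTheta k w i : ℤ) =
          (invOf k (w0 k * w) i : ℤ) - (invOf k (w0 k * w) (i + 1) : ℤ) - 1) ∧
      (isDescent k w i →
        (nTheta k w i : ℤ) =
          (k : ℤ) - i + (invOf k (w0 k * w) i : ℤ) - (invOf k (w0 k * w) (i + 1) : ℤ))) ∧
    (∀ m : ℕ → ℕ, (∀ i, i ≤ k - 1 → m i ≤ k - i) →
      w = ((List.range k).map fun i => cPerm k (k - i) ^ m i).prod →
      ∀ i, 1 ≤ i → i ≤ k - 1 → nTheta k w i = m i) := by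
  constructor
  · intro i hi1 hi2
    have hik : i ≤ k := by omega
    have hA_le : invOf k (w0 k * w) i ≤ k+1-i := invOf_le k _ i (by omega) (by omega)
    have hB_le' : invOf k (w0 k * w) (i+1) ≤ k+1-(i+1) := invOf_le k _ (i+1) (by omega) (by omega)
    have hB_le : invOf k (w0 k * w) (i+1) ≤ k-i := by omega
    have hz1 : zetaCol k w i = Nat.choose ((k-i)+1) 2 + invOf k (w0 k * w) i := by
      rw [zetaCol, if_pos ⟨hi1, hik⟩, show k+1-i = (k-i)+1 by omega]
    have hz2 : zetaCol k w (i+1) = Nat.choose (k-i) 2 + invOf k (w0 k * w) (i+1) := by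
      rw [zetaCol, if_pos ⟨by omega, by omega⟩, show k+1-(i+1) = k-i by omega]
    have hch : ((k-i)+1).choose 2 = (k-i).choose 1 + (k-i).choose 2 := Nat.choose_succ_succ (k-i) 1
    rw [Nat.choose_one_right] at hch
    have hnzeq : nZeta k w i = zetaCol k w i - zetaCol k w (i+1) := rfl
    constructor
    · intro hnd
      have hwne : w ⟨i, by omega⟩ ≠ w ⟨i-1, by omega⟩ := by
        intro e
        have := w.injective e
        simp only [Fin.mk.injEq] at this
        omega
      have hnlt : ¬ (w ⟨i, by omega⟩ < w ⟨i-1, by omega⟩) := fun hc => hnd ⟨⟨hi1, hik⟩, hc⟩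
      have hwlt : w ⟨i-1, by omega⟩ < w ⟨i, by omega⟩ :=
        lt_of_le_of_ne (le_of_not_gt hnlt) (Ne.symm hwne)
      have hmul : ∀ y : Fin (k+1), (w0 k * w) y = (w y).rev := fun y => rfl
      have hvlt : (w0 k * w) ⟨i, by omega⟩ < (w0 k * w) ⟨i-1, by omega⟩ := by
        rw [hmul, hmul]
        exact Fin.rev_lt_rev.mpr hwlt
      have hBA : invOf k (w0 k * w) (i+1) < invOf k (w0 k * w) i := by
        rw [invOf_succ_eq_rnk k (w0 k * w) i hi1 hik,
          invOf_eq_rnk k (w0 k * w) i hi1 (by omega)]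
        exact rnk_lt k (w0 k * w) i (x := ⟨i, by omega⟩)
          (z := (w0 k * w) ⟨i-1, by omega⟩) (le_refl i) hvlt
      have hge : k+1-i ≤ nZeta k w i := by omega
      have hlt2 : nZeta k w i - (k+1-i) < k+1-i := by omega
      have hmod : nTheta k w i = nZeta k w i - (k+1-i) := by
        show nZeta k w i % (k+1-i) = _
        rw [Nat.mod_eq_sub_mod hge, Nat.mod_eq_of_lt hlt2]
      omega
    · intro hd
      obtain ⟨hcond, hlt⟩ := hd
      have hmul : ∀ y : Fin (k+1), (w0 k * w) y = (w y).rev := fun y => rfl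
      have hvlt : (w0 k * w) ⟨i-1, by omega⟩ < (w0 k * w) ⟨i, by omega⟩ := by
        rw [hmul, hmul]
        exact Fin.rev_lt_rev.mpr hlt
      have hAB : invOf k (w0 k * w) i ≤ invOf k (w0 k * w) (i+1) := by
        rw [invOf_succ_eq_rnk k (w0 k * w) i hi1 hik,
          invOf_eq_rnk k (w0 k * w) i hi1 (by omega)]
        exact rnk_mono k (w0 k * w) i (le_of_lt hvlt)
      have hlt2 : nZeta k w i < k+1-i := by omega
      have hmod : nTheta k w i = nZeta k w i := by
        show nZeta k w i % (k+1-i) = _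
        rw [Nat.mod_eq_of_lt hlt2]
      omega
  · intro m hm hprod i hi1 hi2
    have hw : w = hPf k m k := hprod
    subst hw
    have hrec := J_rec k m i hk hi1 hi2 (hm i hi2)
    have hc1 := invOf_compl k (hPf k m k) i (by omega) (by omega)
    have hc2 := invOf_compl k (hPf k m k) (i+1) (by omega) (by omega)
    have hz1 : zetaCol k (hPf k m k) i
        = Nat.choose ((k-i)+1) 2 + invOf k (w0 k * hPf k m k) i := by
      rw [zetaCol, if_pos ⟨hi1, by omega⟩, show k+1-i = (k-i)+1 by omega]
    have hz2 : zetaCol k (hPf k m k) (i+1)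
        = Nat.choose (k-i) 2 + invOf k (w0 k * hPf k m k) (i+1) := by
      rw [zetaCol, if_pos ⟨by omega, by omega⟩, show k+1-(i+1) = k-i by omega]
    have hch : ((k-i)+1).choose 2 = (k-i).choose 1 + (k-i).choose 2 := Nat.choose_succ_succ (k-i) 1
    rw [Nat.choose_one_right] at hch
    have hnzeq : nZeta k (hPf k m k) i = zetaCol k (hPf k m k) i - zetaCol k (hPf k m k) (i+1) :=
      rfl
    have hnz : nZeta k (hPf k m k) i
        = (k+1-i) - invOf k (hPf k m k) i + invOf k (hPf k m k) (i+1) := by omega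
    have hJ1le : invOf k (hPf k m k) i ≤ k+1-i := by omega
    show nZeta k (hPf k m k) i % (k+1-i) = m i
    rw [hnz, hrec, Nat.add_comm ((k+1-i) - invOf k (hPf k m k) i), Nat.mod_add_mod,
      show (m i + invOf k (hPf k m k) i) + ((k+1-i) - invOf k (hPf k m k) i)
        = m i + (k+1-i) from by omega,
      Nat.add_mod_right, Nat.mod_eq_of_lt (by have := hm i hi2; omega)]

end
end

section
/- Let u ∈ S_{k+1} have exactly one descent, at position j. Then the conjugate partition of θ(u) is θ(u)' = (k+1−j−Inv_1(u), k+1−j−Inv_2(u), …, k+1−j−Inv_j(u)). -/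
open scoped BigOperators Classical

noncomputable section

/-! ### Auxiliary lemmas -/

lemma card_filter_gt (k m : ℕ) (hm : m ≤ k) :
    (Finset.univ.filter fun l : Fin (k+1) => m < (l:ℕ)).card = k - m := by
  have h : (Finset.univ.filter fun l : Fin (k+1) => m < (l:ℕ))
      = Finset.Ioi ⟨m, by omega⟩ := by
    ext l; simp [Finset.mem_Ioi, Fin.lt_def]
  rw [h, Fin.card_Ioi]; simp

lemma invOf_def (k : ℕ) (v : Equiv.Perm (Fin (k + 1))) (i : ℕ) (h1 : 1 ≤ i) (h2 : i ≤ k + 1) :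
    invOf k v i = (Finset.univ.filter fun l : Fin (k + 1) =>
      i - 1 < (l : ℕ) ∧ v l < v ⟨i - 1, by omega⟩).card := by
  rw [invOf, dif_pos ⟨h1, h2⟩]

/-- Complement relation: `Inv_i(w₀u) + Inv_i(u) = k+1-i`. -/
lemma invW_add_inv (k : ℕ) (u : Equiv.Perm (Fin (k+1))) (i : ℕ)
    (h1 : 1 ≤ i) (h2 : i ≤ k + 1) :
    invOf k (w0 k * u) i + invOf k u i = k + 1 - i := by
  rw [invOf_def k _ i h1 h2, invOf_def k u i h1 h2]
  set p : Fin (k+1) := ⟨i - 1, by omega⟩ with hp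
  have hw : ∀ x : Fin (k+1), (w0 k * u) x = Fin.rev (u x) := fun _ => rfl
  have hfil : (Finset.univ.filter fun l : Fin (k+1) =>
        i - 1 < (l:ℕ) ∧ (w0 k * u) l < (w0 k * u) p)
      = Finset.univ.filter fun l : Fin (k+1) =>
        (i - 1 < (l:ℕ) ∧ ¬ (u l < u p)) := by
    apply Finset.filter_congr
    intro l _
    simp only [hw, Fin.rev_lt_rev]
    constructor
    · rintro ⟨hl, hlt⟩
      exact ⟨hl, fun h => absurd hlt (asymm h)⟩
    · rintro ⟨hl, hle⟩
      refine ⟨hl, lt_of_le_of_ne (not_lt.mp hle) ?_⟩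
      intro he
      have : l = p := u.injective he.symm
      rw [this] at hl
      simp [hp] at hl
  rw [hfil]
  have hsplit := Finset.card_filter_add_card_filter_not
    (s := Finset.univ.filter (fun l : Fin (k+1) => i - 1 < (l:ℕ)))
    (p := fun l => u l < u p)
  simp only [Finset.filter_filter] at hsplit
  rw [card_filter_gt k (i-1) (by omega)] at hsplit
  omega

lemma invOf_top (k : ℕ) (u : Equiv.Perm (Fin (k+1))) : invOf k u (k + 1) = 0 := by
  rw [invOf_def k u (k+1) (by omega) (le_refl _), Finset.card_eq_zero,
    Finset.filter_eq_empty_iff]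
  intro l _
  simp only [not_and]
  intro hl
  omega

section SingleDescent

variable {k : ℕ} {u : Equiv.Perm (Fin (k + 1))} {j : ℕ}
variable (hj : isDescent k u j) (huniq : ∀ i, isDescent k u i → i = j)

include huniq in
lemma ascent_of_ne (i : ℕ) (h1 : 1 ≤ i) (h2 : i ≤ k) (hij : i ≠ j) :
    u ⟨i - 1, by omega⟩ < u ⟨i, by omega⟩ := by
  by_contra h
  push_neg at h
  have hne : u ⟨i, by omega⟩ ≠ u ⟨i - 1, by omega⟩ := by
    intro he
    have : (⟨i, by omega⟩ : Fin (k+1)) = ⟨i - 1, by omega⟩ := u.injective he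
    simp [Fin.mk.injEq] at this
    omega
  exact hij (huniq i ⟨⟨h1, h2⟩, lt_of_le_of_ne h hne⟩)

include huniq in
lemma mono_chain (a b : ℕ) (ha : a ≤ k) (hb : b ≤ k) (hab : a ≤ b)
    (hm : ∀ m, a ≤ m → m < b → m + 1 ≠ j) :
    u ⟨a, by omega⟩ ≤ u ⟨b, by omega⟩ := by
  induction b, hab using Nat.le_induction with
  | base => exact le_refl _
  | succ b hab ih =>
    have hbk : b ≤ k := by omega
    have h1 : u ⟨a, by omega⟩ ≤ u ⟨b, by omega⟩ :=
      ih hbk (fun m hm1 hm2 => hm m hm1 (by omega))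
    have h2 : u ⟨b, by omega⟩ < u ⟨b + 1, by omega⟩ := by
      have := ascent_of_ne huniq (b+1) (by omega) (by omega) (hm b hab (by omega))
      have he : (⟨b + 1 - 1, by omega⟩ : Fin (k+1)) = ⟨b, by omega⟩ := by simp
      rwa [he] at this
    exact le_of_lt (lt_of_le_of_lt h1 h2)

include huniq in
lemma invOf_eq_zero_of_gt (i : ℕ) (h1 : 1 ≤ i) (h2 : i ≤ k + 1) (hij : j < i) :
    invOf k u i = 0 := by
  rw [invOf_def k u i h1 h2, Finset.card_eq_zero, Finset.filter_eq_empty_iff]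
  intro l _
  simp only [not_and, not_lt]
  intro hl
  have hle : u ⟨i - 1, by omega⟩ ≤ u ⟨(l : ℕ), l.isLt⟩ :=
    mono_chain huniq (i-1) (l:ℕ) (by omega) (by omega) (by omega)
      (fun m hm1 _ => by omega)
  simpa using hle

include huniq in
lemma invOf_le_of_le (hj1 : 1 ≤ j) (c : ℕ) (h1 : 1 ≤ c) (hcj : c ≤ j) (hjk : j ≤ k) :
    invOf k u c ≤ k + 1 - j := by
  rw [invOf_def k u c h1 (by omega)]
  calc (Finset.univ.filter fun l : Fin (k + 1) =>
        c - 1 < (l : ℕ) ∧ u l < u ⟨c - 1, by omega⟩).card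
      ≤ (Finset.univ.filter fun l : Fin (k+1) => j - 1 < (l:ℕ)).card := by
        apply Finset.card_le_card
        intro l hl
        simp only [Finset.mem_filter, Finset.mem_univ, true_and] at hl ⊢
        by_contra hcon
        push_neg at hcon
        have hlj : (l : ℕ) < j := by omega
        have hle : u ⟨c - 1, by omega⟩ ≤ u ⟨(l : ℕ), l.isLt⟩ :=
          mono_chain huniq (c-1) (l:ℕ) (by omega) (by omega) (by omega)
            (fun m hm1 hm2 => by omega)
        simp only [Fin.eta] at hle
        exact absurd hl.2 (not_lt.mpr hle)
    _ = k + 1 - j := by rw [card_filter_gt k (j-1) (by omega)]; omega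

include huniq in
lemma invOf_mono (i : ℕ) (h1 : 1 ≤ i) (hij : i < j) (hjk : j ≤ k) :
    invOf k u i ≤ invOf k u (i + 1) := by
  rw [invOf_def k u i h1 (by omega), invOf_def k u (i+1) (by omega) (by omega)]
  apply Finset.card_le_card
  intro l hl
  simp only [Finset.mem_filter, Finset.mem_univ, true_and] at hl ⊢
  obtain ⟨hl1, hl2⟩ := hl
  have hasc : u ⟨i - 1, by omega⟩ < u ⟨i, by omega⟩ :=
    ascent_of_ne huniq i h1 (by omega) (by omega)
  have hne : (l:ℕ) ≠ i := by
    intro he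
    have hlf : l = ⟨i, by omega⟩ := Fin.ext he
    rw [hlf] at hl2
    exact absurd (lt_trans hl2 hasc) (lt_irrefl _)
  exact ⟨by omega, lt_trans hl2 hasc⟩

include hj in
lemma invOf_pos_at_descent : 1 ≤ invOf k u j := by
  obtain ⟨⟨hj1, hj2⟩, hdesc⟩ := hj
  rw [invOf_def k u j hj1 (by omega)]
  refine Nat.one_le_iff_ne_zero.mpr
    (Nat.pos_iff_ne_zero.mp (Finset.card_pos.mpr ⟨⟨j, by omega⟩, ?_⟩))
  simp only [Finset.mem_filter, Finset.mem_univ, true_and]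
  exact ⟨by omega, hdesc⟩

/-- The key computation: `nZeta_i = (k+1-i) + Inv_{i+1}(u) - Inv_i(u)`. -/
lemma nZeta_eq (i : ℕ) (h1 : 1 ≤ i) (h2 : i ≤ k) :
    nZeta k u i = (k + 1 - i) + invOf k u (i + 1) - invOf k u i := by
  have hE1 : invOf k (w0 k * u) i + invOf k u i = k + 1 - i :=
    invW_add_inv k u i h1 (by omega)
  rcases eq_or_lt_of_le h2 with hik | hik
  · -- i = k
    have htop : invOf k u (i + 1) = 0 := by rw [hik]; exact invOf_top k u
    rw [nZeta, zetaCol, zetaCol, if_pos ⟨h1, h2⟩, if_neg (by omega), htop]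
    have hch : Nat.choose (k + 1 - i) 2 = 0 := by
      rw [show k + 1 - i = 1 by omega]
      decide
    omega
  · -- i < k
    have hE2 : invOf k (w0 k * u) (i+1) + invOf k u (i+1) = k + 1 - (i+1) :=
      invW_add_inv k u (i+1) (by omega) (by omega)
    rw [nZeta, zetaCol, zetaCol, if_pos ⟨h1, h2⟩, if_pos (⟨by omega, by omega⟩ : 1 ≤ i + 1 ∧ i + 1 ≤ k)]
    have hki : k + 1 - i = (k - i) + 1 := by omega
    have hki2 : k + 1 - (i + 1) = k - i := by omega
    rw [hki, hki2] at *
    have hch : Nat.choose ((k - i) + 1) 2 = Nat.choose (k - i) 2 + (k - i) := by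
      have := Nat.choose_succ_succ (k - i) 1
      simpa [Nat.choose_one_right, Nat.add_comm] using this
    omega

include hj huniq in
lemma nTheta_of_gt (i : ℕ) (hji : j < i) (hik : i ≤ k) :
    nTheta k u i = 0 := by
  obtain ⟨⟨hj1, hj2⟩, -⟩ := id hj
  have h0 : invOf k u i = 0 := invOf_eq_zero_of_gt huniq i (by omega) (by omega) hji
  have h0' : invOf k u (i+1) = 0 := invOf_eq_zero_of_gt huniq (i+1) (by omega) (by omega) (by omega)
  have hz : nZeta k u i = k + 1 - i := by
    rw [nZeta_eq i (by omega) hik, h0, h0']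
    omega
  rw [nTheta, hz, Nat.mod_self]

include hj huniq in
lemma nTheta_at_descent : nTheta k u j = (k + 1 - j) - invOf k u j := by
  obtain ⟨⟨hj1, hj2⟩, -⟩ := id hj
  have h0 : invOf k u (j+1) = 0 :=
    invOf_eq_zero_of_gt huniq (j+1) (by omega) (by omega) (by omega)
  have hpos : 1 ≤ invOf k u j := invOf_pos_at_descent hj
  have hle : invOf k u j ≤ k + 1 - j := invOf_le_of_le huniq hj1 j hj1 (le_refl _) hj2
  have hz : nZeta k u j = (k + 1 - j) - invOf k u j := by
    rw [nZeta_eq j hj1 hj2, h0]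
    omega
  rw [nTheta, hz, Nat.mod_eq_of_lt (by omega)]

include hj huniq in
lemma nTheta_of_lt (i : ℕ) (h1 : 1 ≤ i) (hij : i < j) :
    nTheta k u i = invOf k u (i + 1) - invOf k u i := by
  obtain ⟨⟨hj1, hj2⟩, -⟩ := id hj
  have hmono : invOf k u i ≤ invOf k u (i+1) := invOf_mono huniq i h1 hij hj2
  have hle : invOf k u (i+1) ≤ k + 1 - j :=
    invOf_le_of_le huniq hj1 (i+1) (by omega) (by omega) hj2
  have hz : nZeta k u i = (k + 1 - i) + (invOf k u (i + 1) - invOf k u i) := by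
    rw [nZeta_eq i h1 (by omega)]
    omega
  rw [nTheta, hz, Nat.add_mod_left, Nat.mod_eq_of_lt (by omega)]

end SingleDescent

lemma thetaCol_step (k : ℕ) (u : Equiv.Perm (Fin (k+1))) (c : ℕ) (hc : c ≤ k) :
    thetaCol k u c = nTheta k u c + thetaCol k u (c + 1) := by
  have h : Finset.Icc c k = insert c (Finset.Icc (c+1) k) := by
    ext x
    simp only [Finset.mem_Icc, Finset.mem_insert]
    omega
  rw [thetaCol, h, Finset.sum_insert (by simp), thetaCol]

/-- Let `u ∈ S_{k+1}` have exactly one descent, at position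
`j`.  Then the conjugate partition of `θ(u)` is
`θ(u)' = (k+1-j-Inv_1(u), k+1-j-Inv_2(u), …, k+1-j-Inv_j(u))`
(in particular its columns of index `> j` are empty). -/
theorem thetaCol_of_single_descent (k : ℕ) (hk : 1 ≤ k)
    (u : Equiv.Perm (Fin (k + 1))) (j : ℕ)
    (hj : isDescent k u j) (huniq : ∀ i, isDescent k u i → i = j) :
    (∀ c, 1 ≤ c → c ≤ j →
      (thetaCol k u c : ℤ) = (k : ℤ) + 1 - j - (invOf k u c : ℤ)) ∧
    (∀ c, j < c → thetaCol k u c = 0) := by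
  obtain ⟨⟨hj1, hj2⟩, -⟩ := id hj
  have part2 : ∀ c, j < c → thetaCol k u c = 0 := by
    intro c hc
    rw [thetaCol]
    apply Finset.sum_eq_zero
    intro x hx
    simp only [Finset.mem_Icc] at hx
    exact nTheta_of_gt hj huniq x (by omega) hx.2
  refine ⟨?_, part2⟩
  have key : ∀ d c, 1 ≤ c → c + d = j →
      (thetaCol k u c : ℤ) = (k : ℤ) + 1 - j - (invOf k u c : ℤ) := by
    intro d
    induction d with
    | zero =>
      intro c hc1 hcj
      have hcj' : c = j := by omega
      subst hcj'
      have hs := thetaCol_step k u c hj2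
      rw [part2 (c+1) (by omega)] at hs
      have hn := nTheta_at_descent hj huniq
      have hpos : 1 ≤ invOf k u c := invOf_pos_at_descent hj
      have hle : invOf k u c ≤ k + 1 - c := invOf_le_of_le huniq hj1 c hj1 (le_refl _) hj2
      omega
    | succ d ih =>
      intro c hc1 hcj
      have hcj' : c < j := by omega
      have hs := thetaCol_step k u c (by omega)
      have hn := nTheta_of_lt hj huniq c hc1 hcj'
      have hmono : invOf k u c ≤ invOf k u (c+1) := invOf_mono huniq c hc1 hcj' hj2
      have hih := ih (c+1) (by omega) (by omega)
      omega
  intro c hc1 hc2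
  exact key (j - c) c hc1 (by omega)

end
end

section
/- Let (Ψ,η) be an indexed root ideal of length ℓ, r ∈ [ℓ], p ∈ [r], and suppose: (1) η_r ≥ η_{r+1} ≥ … ≥ η_ℓ; (2) nr(Ψ)_i ≥ r−i for all i ∈ [r]; (3) style(Ψ,η)_i ≤ k for i ≤ r and style(Ψ,η)_i = min(k, ℓ−i+η_i) for i > r; (4) style(Ψ,η)_p < k; (5) if p < r and nr(Ψ)_p = nr(Ψ)_{p+1}, then nr(Ψ)_{p+1} ≤ nr(Ψ)_{p+2} and η_p = η_{p+1} − 1. Then H(Ψ;η) = Σ_{z ∈ downpath_Ψ(p), z = p or η_z > η_{z+1}} t^{B_Ψ(p,z)} H(Ψ^z; η + ε_p − ε_z), where Ψ^z := Ψ∖{(z, down_Ψ(z))} for z ≠ max(downpath_Ψ(p)), Ψ^z := Ψ for z = max(downpath_Ψ(p)), and η_{ℓ+1} := 0 in the condition for z = ℓ. -/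
open scoped BigOperators Classical

noncomputable section

section Bounce

/-- `down_Ψ(x) = y`, i.e. `(x,y)` is a removable root of the root ideal `Ψ`. -/
def downRel {ℓ : ℕ} (Ψ : Finset (Fin ℓ × Fin ℓ)) (x y : Fin ℓ) : Prop :=
  (x, y) ∈ Ψ ∧ IsRootIdeal (Ψ.erase (x, y))

/-- The set of `y` with `down_Ψ(x) = y` (a singleton or empty, for a root ideal). -/
def downSet {ℓ : ℕ} (Ψ : Finset (Fin ℓ × Fin ℓ)) (x : Fin ℓ) : Finset (Fin ℓ) :=
  Finset.univ.filter fun y => downRel Ψ x y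

/-- `z ∈ downpath_Ψ(p)`: `z` is obtained from `p` by iterating `down_Ψ`. -/
def inDownpath {ℓ : ℕ} (Ψ : Finset (Fin ℓ × Fin ℓ)) (p z : Fin ℓ) : Prop :=
  Relation.ReflTransGen (downRel Ψ) p z

/-- The bounce `B_Ψ(p,z)`, the number of `down_Ψ` steps from `p` to `z`. -/
def bounceCount {ℓ : ℕ} (Ψ : Finset (Fin ℓ × Fin ℓ)) (p z : Fin ℓ) : ℕ :=
  Set.ncard {y | inDownpath Ψ p y ∧ inDownpath Ψ y z} - 1

/-- `Ψ^z`: `Ψ` with the removable root `(z, down_Ψ(z))` removed (and `Ψ^z = Ψ`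
when `z` is the final element of its bounce path, i.e. row `z` has no removable root). -/
def PsiZ {ℓ : ℕ} (Ψ : Finset (Fin ℓ × Fin ℓ)) (z : Fin ℓ) : Finset (Fin ℓ × Fin ℓ) :=
  Ψ \ (downSet Ψ z).image fun y => (z, y)

end Bounce

namespace CatProof

variable {ℓ : ℕ}

/-- The weight shift produced by a configuration of raising-operator multiplicities. -/
def shiftW (n : Fin ℓ × Fin ℓ → ℕ) (a : Fin ℓ) : ℤ :=
  ∑ p : Fin ℓ × Fin ℓ,
    (n p : ℤ) * ((if p.1 = a then 1 else 0) - (if p.2 = a then 1 else 0))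

/-- A single summand of the Catalan function. -/
def termF (Ψ : Finset (Fin ℓ × Fin ℓ)) (γ : Fin ℓ → ℤ) (n : Fin ℓ × Fin ℓ → ℕ) : SymF :=
  if ∀ p, p ∉ Ψ → n p = 0 then
    tC ^ (∑ p : Fin ℓ × Fin ℓ, n p) * schur (fun a => γ a + shiftW n a)
  else 0

lemma catalanFn_eq_finsum (Ψ : Finset (Fin ℓ × Fin ℓ)) (γ : Fin ℓ → ℤ) :
    catalanFn Ψ γ = ∑ᶠ n, termF Ψ γ n := rfl

lemma hh_of_neg {d : ℤ} (h : d < 0) : hh d = 0 := if_pos h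

lemma schur_eq_zero_of_row {γ : Fin ℓ → ℤ} (i : Fin ℓ)
    (h : γ i + ((ℓ : ℤ) - 1 - (i : ℤ)) < 0) : schur γ = 0 := by
  apply Matrix.det_eq_zero_of_row_eq_zero i
  intro j
  have hj : (j : ℤ) ≤ (ℓ : ℤ) - 1 := by
    have := j.isLt
    omega
  exact hh_of_neg (by omega)

lemma mem_Dplus_iff {p : Fin ℓ × Fin ℓ} : p ∈ Dplus ℓ ↔ p.1 < p.2 := by
  simp [Dplus]

/-- Key summation identity used for the support bound. -/
lemma sum_mul_shiftW (n : Fin ℓ × Fin ℓ → ℕ) :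
    ∑ a : Fin ℓ, (a : ℤ) * shiftW n a
      = - ∑ p : Fin ℓ × Fin ℓ, (n p : ℤ) * ((p.2 : ℤ) - (p.1 : ℤ)) := by
  unfold shiftW
  simp_rw [Finset.mul_sum]
  rw [Finset.sum_comm]
  rw [← Finset.sum_neg_distrib]
  apply Finset.sum_congr rfl
  intro p _
  have h1 : ∀ a ∈ (Finset.univ : Finset (Fin ℓ)), (a : ℤ) * ((n p : ℤ) *
      ((if p.1 = a then 1 else 0) - (if p.2 = a then 1 else 0)))
      = (if p.1 = a then (n p : ℤ) * (a:ℤ) else 0) - (if p.2 = a then (n p : ℤ) * (a:ℤ) else 0) := by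
    intro a _
    by_cases h1 : p.1 = a <;> by_cases h2 : p.2 = a <;> simp [h1, h2] <;> ring
  rw [Finset.sum_congr rfl h1, Finset.sum_sub_distrib,
    Finset.sum_ite_eq Finset.univ p.1 (fun a => (n p:ℤ) * (a:ℤ)),
    Finset.sum_ite_eq Finset.univ p.2 (fun a => (n p:ℤ) * (a:ℤ))]
  simp
  ring

/-- Finiteness of the support of `termF`. -/
lemma termF_support_finite (Ψ : Finset (Fin ℓ × Fin ℓ)) (hΨ : Ψ ⊆ Dplus ℓ)
    (γ : Fin ℓ → ℤ) : (Function.support (termF Ψ γ)).Finite := by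
  classical
  set Cz : ℤ := (∑ a : Fin ℓ, (a : ℤ) * γ a) + (ℓ : ℤ) * ℓ * ℓ with hCz
  set C : ℕ := Cz.toNat with hC
  have key : ∀ n ∈ Function.support (termF Ψ γ), ∀ q, n q ≤ C := by
    intro n hn q
    have hne : termF Ψ γ n ≠ 0 := hn
    by_cases hsupp : ∀ p, p ∉ Ψ → n p = 0
    swap
    · exact absurd (if_neg hsupp) hne
    have hprod : tC ^ (∑ p : Fin ℓ × Fin ℓ, n p) * schur (fun a => γ a + shiftW n a) ≠ 0 := by
      rwa [termF, if_pos hsupp] at hne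
    have hschur : schur (fun a => γ a + shiftW n a) ≠ 0 := right_ne_zero_of_mul hprod
    set α : Fin ℓ → ℤ := fun a => γ a + shiftW n a with hα
    have hαge : ∀ i : Fin ℓ, -(ℓ : ℤ) ≤ α i := by
      intro i
      by_contra hlt
      push_neg at hlt
      apply hschur
      apply schur_eq_zero_of_row i
      have : (0:ℤ) ≤ (i : ℤ) := Int.ofNat_nonneg _
      omega
    -- the weighted sum bound
    have hWsum : ∑ p : Fin ℓ × Fin ℓ, (n p : ℤ) * ((p.2 : ℤ) - (p.1 : ℤ))
        = (∑ a : Fin ℓ, (a : ℤ) * γ a) - ∑ a : Fin ℓ, (a : ℤ) * α a := by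
      have := sum_mul_shiftW n
      have hsplit : ∑ a : Fin ℓ, (a : ℤ) * α a
          = (∑ a : Fin ℓ, (a : ℤ) * γ a) + ∑ a : Fin ℓ, (a : ℤ) * shiftW n a := by
        rw [← Finset.sum_add_distrib]
        apply Finset.sum_congr rfl
        intro a _
        simp [hα]
        ring
      omega
    have hterm : ∀ a : Fin ℓ, -((ℓ:ℤ) * ℓ) ≤ (a : ℤ) * α a := by
      intro a
      have h1 : (a : ℤ) ≤ ℓ := le_of_lt (by exact_mod_cast a.isLt)
      have h2 : (0:ℤ) ≤ (a : ℤ) := Int.ofNat_nonneg _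
      have h3 := hαge a
      nlinarith
    have hW : ∑ p : Fin ℓ × Fin ℓ, (n p : ℤ) * ((p.2 : ℤ) - (p.1 : ℤ)) ≤ Cz := by
      rw [hWsum, hCz]
      have : -((ℓ:ℤ) * ℓ * ℓ) ≤ ∑ a : Fin ℓ, (a : ℤ) * α a := by
        calc -((ℓ:ℤ) * ℓ * ℓ) ≤ ∑ _a : Fin ℓ, -((ℓ:ℤ) * ℓ) := by
              rw [Finset.sum_const]
              simp only [Finset.card_univ, Fintype.card_fin, nsmul_eq_mul]
              nlinarith [Int.ofNat_nonneg ℓ]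
          _ ≤ ∑ a : Fin ℓ, (a : ℤ) * α a := Finset.sum_le_sum (fun a _ => hterm a)
      omega
    have hnonneg : ∀ p : Fin ℓ × Fin ℓ, p ∈ Finset.univ →
        (0:ℤ) ≤ (n p : ℤ) * ((p.2 : ℤ) - (p.1 : ℤ)) := by
      intro p _
      by_cases hp : n p = 0
      · simp [hp]
      · have hpΨ : p ∈ Ψ := by
          by_contra hc
          exact hp (hsupp p hc)
        have := mem_Dplus_iff.mp (hΨ hpΨ)
        have h12 : (p.1 : ℤ) < (p.2 : ℤ) := by exact_mod_cast this
        have h0 : (0:ℤ) ≤ (p.2 : ℤ) - (p.1 : ℤ) := by omega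
        exact mul_nonneg (Int.ofNat_nonneg _) h0
    have hnq : (n q : ℤ) ≤ ∑ p : Fin ℓ × Fin ℓ, (n p : ℤ) * ((p.2 : ℤ) - (p.1 : ℤ)) := by
      by_cases hq0 : n q = 0
      · rw [hq0]
        exact Finset.sum_nonneg hnonneg
      · have hqΨ : q ∈ Ψ := by
          by_contra hc
          exact hq0 (hsupp q hc)
        have h12 : (q.1 : ℤ) < (q.2 : ℤ) := by exact_mod_cast mem_Dplus_iff.mp (hΨ hqΨ)
        calc (n q : ℤ) ≤ (n q : ℤ) * ((q.2 : ℤ) - (q.1 : ℤ)) := by nlinarith [Int.ofNat_nonneg (n q)]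
          _ ≤ _ := Finset.single_le_sum hnonneg (Finset.mem_univ q)
    have : (n q : ℤ) ≤ Cz := le_trans hnq hW
    omega
  -- now conclude finiteness
  have hsub : Function.support (termF Ψ γ) ⊆
      Set.range (fun (g : Fin ℓ × Fin ℓ → Fin (C+1)) => (fun p => (g p : ℕ))) := by
    intro n hn
    refine ⟨fun p => ⟨n p, Nat.lt_succ_of_le (key n hn p)⟩, rfl⟩
  exact Set.Finite.subset (Set.finite_range _) hsub

end CatProof
namespace CatProof

variable {ℓ : ℕ}

/-- Weight adjusted by `+ε_i - ε_j`. -/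
def adjW (γ : Fin ℓ → ℤ) (i j : Fin ℓ) : Fin ℓ → ℤ :=
  fun a => γ a + ((if i = a then 1 else 0) - (if j = a then 1 else 0))

lemma shiftW_addSingle (δ : Fin ℓ × Fin ℓ) (m : Fin ℓ × Fin ℓ → ℕ) (a : Fin ℓ) :
    shiftW (fun p => m p + if p = δ then 1 else 0) a
      = shiftW m a + ((if δ.1 = a then 1 else 0) - (if δ.2 = a then 1 else 0)) := by
  unfold shiftW
  have h : ∀ p ∈ (Finset.univ : Finset (Fin ℓ × Fin ℓ)),
      ((m p + if p = δ then 1 else 0 : ℕ) : ℤ) *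
        ((if p.1 = a then 1 else 0) - (if p.2 = a then 1 else 0))
      = (m p : ℤ) * ((if p.1 = a then 1 else 0) - (if p.2 = a then 1 else 0))
        + (if p = δ then ((if δ.1 = a then (1:ℤ) else 0) - (if δ.2 = a then 1 else 0)) else 0) := by
    intro p _
    by_cases hp : p = δ
    · subst hp
      simp only [if_pos rfl]
      push_cast
      ring
    · simp [hp]
  rw [Finset.sum_congr rfl h, Finset.sum_add_distrib,
    Finset.sum_ite_eq' Finset.univ δ
      (fun _ => ((if δ.1 = a then (1:ℤ) else 0) - (if δ.2 = a then 1 else 0)))]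
  simp

lemma termF_erase {Ψ : Finset (Fin ℓ × Fin ℓ)} {δ : Fin ℓ × Fin ℓ} (hδ : δ ∈ Ψ)
    (γ : Fin ℓ → ℤ) (n : Fin ℓ × Fin ℓ → ℕ) :
    termF (Ψ.erase δ) γ n = if n δ = 0 then termF Ψ γ n else 0 := by
  unfold termF
  by_cases h0 : n δ = 0
  · have hiff : (∀ p, p ∉ Ψ.erase δ → n p = 0) ↔ (∀ p, p ∉ Ψ → n p = 0) := by
      constructor
      · intro h p hp; exact h p (fun hc => hp (Finset.mem_of_mem_erase hc))
      · intro h p hp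
        by_cases hpδ : p = δ
        · rwa [hpδ]
        · exact h p (fun hc => hp (Finset.mem_erase.mpr ⟨hpδ, hc⟩))
    rw [if_pos h0, if_congr hiff rfl rfl]
  · rw [if_neg h0, if_neg]
    intro hc
    exact h0 (hc δ (fun hmem => (Finset.mem_erase.mp hmem).1 rfl))

/-- The basic splitting identity: removing one root from the product of
geometric series. -/
lemma catalanFn_split (Ψ : Finset (Fin ℓ × Fin ℓ)) (hΨ : Ψ ⊆ Dplus ℓ)
    {δ : Fin ℓ × Fin ℓ} (hδ : δ ∈ Ψ) (γ : Fin ℓ → ℤ) :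
    catalanFn Ψ γ = catalanFn (Ψ.erase δ) γ + tC * catalanFn Ψ (adjW γ δ.1 δ.2) := by
  classical
  have hfin := termF_support_finite Ψ hΨ γ
  have hfin' := termF_support_finite (Ψ.erase δ) ((Finset.erase_subset δ Ψ).trans hΨ) γ
  have hfinadj := termF_support_finite Ψ hΨ (adjW γ δ.1 δ.2)
  rw [catalanFn_eq_finsum, catalanFn_eq_finsum, catalanFn_eq_finsum]
  have hpt : ∀ n, termF Ψ γ n
      = termF (Ψ.erase δ) γ n + (if n δ = 0 then 0 else termF Ψ γ n) := by
    intro n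
    rw [termF_erase hδ]
    by_cases h0 : n δ = 0 <;> simp [h0]
  rw [finsum_congr hpt]
  have hfin2 : (Function.support fun n => (if n δ = 0 then 0 else termF Ψ γ n)).Finite := by
    apply hfin.subset
    intro n hn
    simp only [Function.mem_support] at hn ⊢
    intro hc
    apply hn
    rw [hc]
    simp
  rw [finsum_add_distrib hfin' hfin2]
  congr 1
  have hmem : (∑ᶠ n, (if n δ = 0 then 0 else termF Ψ γ n))
      = ∑ᶠ n ∈ {n : Fin ℓ × Fin ℓ → ℕ | n δ ≠ 0}, termF Ψ γ n := by
    rw [finsum_mem_def]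
    apply finsum_congr
    intro n
    by_cases h : n δ = 0 <;> simp [Set.indicator, h]
  have hbij : Set.BijOn (fun (m : Fin ℓ × Fin ℓ → ℕ) => (fun p => m p + if p = δ then 1 else 0))
      Set.univ {n : Fin ℓ × Fin ℓ → ℕ | n δ ≠ 0} := by
    refine ⟨?_, ?_, ?_⟩
    · intro m _
      simp [Set.mem_setOf_eq]
    · intro m _ m' _ hmm'
      funext p
      have h := congrFun hmm' p
      dsimp only at h
      omega
    · intro n hn
      have hnδ : n δ ≠ 0 := hn
      refine ⟨fun p => n p - (if p = δ then 1 else 0), Set.mem_univ _, ?_⟩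
      funext p
      dsimp only
      by_cases hp : p = δ
      · subst hp
        simp only [eq_self_iff_true, if_true]
        omega
      · simp [hp]
  have hcomp : ∀ m ∈ (Set.univ : Set (Fin ℓ × Fin ℓ → ℕ)),
      tC * termF Ψ (adjW γ δ.1 δ.2) m = termF Ψ γ (fun p => m p + if p = δ then 1 else 0) := by
    intro m _
    unfold termF
    have hiff : (∀ p, p ∉ Ψ → m p = 0) ↔ (∀ p, p ∉ Ψ → (m p + if p = δ then 1 else 0) = 0) := by
      constructor
      · intro h p hp
        have hpδ : p ≠ δ := fun hc => hp (hc ▸ hδ)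
        simp [hpδ, h p hp]
      · intro h p hp
        have := h p hp
        omega
    by_cases hcond : ∀ p, p ∉ Ψ → m p = 0
    · rw [if_pos hcond, if_pos (hiff.mp hcond)]
      have hsum : (∑ p : Fin ℓ × Fin ℓ, (m p + if p = δ then 1 else 0))
          = (∑ p : Fin ℓ × Fin ℓ, m p) + 1 := by
        rw [Finset.sum_add_distrib, Finset.sum_ite_eq' Finset.univ δ (fun _ => 1)]
        simp
      have hw : (fun a => γ a + shiftW (fun p => m p + if p = δ then 1 else 0) a)
          = (fun a => adjW γ δ.1 δ.2 a + shiftW m a) := by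
        funext a
        rw [shiftW_addSingle]
        unfold adjW
        ring
      rw [hsum, hw, pow_succ]
      ring
    · rw [if_neg hcond, if_neg (fun hc => hcond (hiff.mpr hc))]
      simp
  calc (∑ᶠ n, (if n δ = 0 then 0 else termF Ψ γ n))
      = ∑ᶠ n ∈ {n : Fin ℓ × Fin ℓ → ℕ | n δ ≠ 0}, termF Ψ γ n := hmem
    _ = ∑ᶠ m ∈ (Set.univ : Set (Fin ℓ × Fin ℓ → ℕ)), tC * termF Ψ (adjW γ δ.1 δ.2) m :=
        (finsum_mem_eq_of_bijOn _ hbij hcomp).symm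
    _ = ∑ᶠ m, tC * termF Ψ (adjW γ δ.1 δ.2) m := by rw [finsum_mem_univ]
    _ = tC * ∑ᶠ m, termF Ψ (adjW γ δ.1 δ.2) m := (mul_finsum _ tC).symm

/-- Adding a root instead of removing one. -/
lemma catalanFn_insert (Φ : Finset (Fin ℓ × Fin ℓ)) (hΦ : Φ ⊆ Dplus ℓ)
    {δ : Fin ℓ × Fin ℓ} (hδ : δ ∉ Φ) (hδD : δ ∈ Dplus ℓ) (γ : Fin ℓ → ℤ) :
    catalanFn Φ γ = catalanFn (insert δ Φ) γ - tC * catalanFn (insert δ Φ) (adjW γ δ.1 δ.2) := by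
  have h := catalanFn_split (insert δ Φ) (by
      intro p hp
      rcases Finset.mem_insert.mp hp with h | h
      · exact h ▸ hδD
      · exact hΦ h) (Finset.mem_insert_self δ Φ) γ
  rw [Finset.erase_insert hδ] at h
  rw [h]
  ring

lemma schur_swap (z w : Fin ℓ) (hne : z ≠ w) (β : Fin ℓ → ℤ) :
    schur (fun a => β (Equiv.swap z w a) + ((a : ℤ) - ((Equiv.swap z w a : Fin ℓ) : ℤ)))
      = - schur β := by
  unfold schur
  have hM : (Matrix.of fun i j : Fin ℓ =>
        hh ((β (Equiv.swap z w i) + ((i:ℤ) - ((Equiv.swap z w i : Fin ℓ) : ℤ))) + (j : ℤ) - (i : ℤ)))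
      = ((Matrix.of fun i j : Fin ℓ => hh (β i + (j:ℤ) - (i:ℤ))).submatrix (Equiv.swap z w) id) := by
    ext i j
    simp only [Matrix.of_apply, Matrix.submatrix_apply, id_eq]
    congr 1
    ring
  rw [hM, Matrix.det_permute, Equiv.Perm.sign_swap hne]
  simp only [Units.val_neg, Units.val_one, Int.cast_neg, Int.cast_one]
  ring

/-- The mirror (straightening) lemma: antisymmetry kills the Catalan function. -/
lemma catalanFn_mirror (Φ : Finset (Fin ℓ × Fin ℓ)) (hΦ : Φ ⊆ Dplus ℓ) (γ : Fin ℓ → ℤ)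
    (z w : Fin ℓ) (hzw : (w : ℕ) = (z : ℕ) + 1)
    (hnotin : (z, w) ∉ Φ)
    (hrow : ∀ j, ((z, j) ∈ Φ ↔ (w, j) ∈ Φ))
    (hcol : ∀ i, ((i, z) ∈ Φ ↔ (i, w) ∈ Φ))
    (hγ : γ z = γ w - 1) :
    catalanFn Φ γ = 0 := by
  classical
  have hzwne : z ≠ w := by
    intro hc
    rw [hc] at hzw
    omega
  have hnotmem : ∀ i j : Fin ℓ, ¬ ((i:ℕ) < (j:ℕ)) → (i, j) ∉ Φ := by
    intro i j hij hc
    exact hij (mem_Dplus_iff.mp (hΦ hc))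
  have hswapf : ∀ a : Fin ℓ, Equiv.swap z w a = if a = z then w else if a = w then z else a := by
    intro a
    by_cases h1 : a = z
    · rw [if_pos h1, h1, Equiv.swap_apply_left]
    · by_cases h2 : a = w
      · rw [if_neg h1, if_pos h2, h2, Equiv.swap_apply_right]
      · rw [if_neg h1, if_neg h2, Equiv.swap_apply_of_ne_of_ne h1 h2]
  have Hσ : ∀ p : Fin ℓ × Fin ℓ, ((Equiv.swap z w p.1, Equiv.swap z w p.2) ∈ Φ ↔ p ∈ Φ) := by
    rintro ⟨i, j⟩
    simp only
    rw [hswapf i, hswapf j]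
    by_cases hi1 : i = z
    · rw [if_pos hi1, hi1]
      by_cases hj1 : j = z
      · rw [if_pos hj1, hj1]
        exact iff_of_false (hnotmem w w (by omega)) (hnotmem z z (by omega))
      · rw [if_neg hj1]
        by_cases hj2 : j = w
        · rw [if_pos hj2, hj2]
          exact iff_of_false (hnotmem w z (by omega)) hnotin
        · rw [if_neg hj2]
          exact (hrow j).symm
    · rw [if_neg hi1]
      by_cases hi2 : i = w
      · rw [if_pos hi2, hi2]
        by_cases hj1 : j = z
        · rw [if_pos hj1, hj1]
          exact iff_of_false hnotin (hnotmem w z (by omega))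
        · rw [if_neg hj1]
          by_cases hj2 : j = w
          · rw [if_pos hj2, hj2]
            exact iff_of_false (hnotmem z z (by omega)) (hnotmem w w (by omega))
          · rw [if_neg hj2]
            exact hrow j
      · rw [if_neg hi2]
        by_cases hj1 : j = z
        · rw [if_pos hj1, hj1]
          exact (hcol i).symm
        · rw [if_neg hj1]
          by_cases hj2 : j = w
          · rw [if_pos hj2, hj2]
            exact hcol i
          · rw [if_neg hj2]
  have hinv : Function.Involutive
      (fun (n : Fin ℓ × Fin ℓ → ℕ) => (fun p : Fin ℓ × Fin ℓ => n (Equiv.swap z w p.1, Equiv.swap z w p.2))) := by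
    intro n
    funext p
    simp [Equiv.swap_apply_self]
  set ι := hinv.toPerm with hι
  have happ : ∀ (n : Fin ℓ × Fin ℓ → ℕ) (p : Fin ℓ × Fin ℓ),
      ι n p = n (Equiv.swap z w p.1, Equiv.swap z w p.2) := fun n p => rfl
  have hneg : ∀ n, termF Φ γ (ι n) = - termF Φ γ n := by
    intro n
    unfold termF
    have hiff : (∀ p, p ∉ Φ → ι n p = 0) ↔ (∀ p, p ∉ Φ → n p = 0) := by
      constructor
      · intro h p hp
        have hq : (Equiv.swap z w p.1, Equiv.swap z w p.2) ∉ Φ := fun hc => hp ((Hσ p).mp hc)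
        have h2 := h (Equiv.swap z w p.1, Equiv.swap z w p.2) hq
        rw [happ] at h2
        simpa [Equiv.swap_apply_self] using h2
      · intro h p hp
        rw [happ]
        exact h _ (fun hc => hp ((Hσ p).mp hc))
    by_cases hcond : ∀ p, p ∉ Φ → n p = 0
    · rw [if_pos hcond, if_pos (hiff.mpr hcond)]
      have hsum : ∑ p : Fin ℓ × Fin ℓ, ι n p = ∑ p : Fin ℓ × Fin ℓ, n p := by
        apply Fintype.sum_equiv (Equiv.prodCongr (Equiv.swap z w) (Equiv.swap z w))
        intro p
        rfl
      have hshift : ∀ a, shiftW (ι n) a = shiftW n (Equiv.swap z w a) := by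
        intro a
        unfold shiftW
        rw [← Equiv.sum_comp (Equiv.prodCongr (Equiv.swap z w) (Equiv.swap z w))
          (fun q : Fin ℓ × Fin ℓ => (n q : ℤ) *
            ((if q.1 = Equiv.swap z w a then 1 else 0) - (if q.2 = Equiv.swap z w a then 1 else 0)))]
        apply Finset.sum_congr rfl
        intro p _
        rw [happ]
        simp only [Equiv.prodCongr_apply, Prod.map]
        congr 2 <;> simp [EmbeddingLike.apply_eq_iff_eq]
      have hfun : (fun a => γ a + shiftW (ι n) a)
          = (fun a => (fun b => γ b + shiftW n b) (Equiv.swap z w a)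
              + ((a : ℤ) - ((Equiv.swap z w a : Fin ℓ) : ℤ))) := by
        funext a
        rw [hshift a]
        simp only
        have hγa : γ a = γ (Equiv.swap z w a) + ((a : ℤ) - ((Equiv.swap z w a : Fin ℓ) : ℤ)) := by
          have hwz : ((w : Fin ℓ) : ℤ) = ((z : Fin ℓ) : ℤ) + 1 := by exact_mod_cast hzw
          by_cases ha1 : a = z
          · subst ha1
            rw [Equiv.swap_apply_left]
            omega
          by_cases ha2 : a = w
          · subst ha2
            rw [Equiv.swap_apply_right]
            omega
          · rw [Equiv.swap_apply_of_ne_of_ne ha1 ha2]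
            ring
        rw [hγa]
        ring
      rw [hsum, hfun, schur_swap z w hzwne (fun b => γ b + shiftW n b)]
      ring
    · rw [if_neg hcond, if_neg (fun hc => hcond (hiff.mp hc))]
      simp
  rw [catalanFn_eq_finsum]
  set S := ∑ᶠ n, termF Φ γ n with hS
  have hSneg : S = -S := by
    calc S = ∑ᶠ n, termF Φ γ (ι n) := (finsum_comp_equiv ι).symm
      _ = ∑ᶠ n, - termF Φ γ n := finsum_congr hneg
      _ = -S := by rw [hS, ← finsum_neg_distrib]
  have h2S : (2 : SymF) * S = 0 := by
    rw [two_mul]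
    nth_rewrite 1 [hSneg]
    ring
  rcases mul_eq_zero.mp h2S with h | h
  · exfalso
    have : ((2:ℤ) : SymF) = 0 := by exact_mod_cast h
    rw [Int.cast_eq_zero] at this
    omega
  · exact h

/-- Last-row vanishing: if the last entry of the weight is negative, the
Catalan function vanishes. -/
lemma catalanFn_lastrow (Φ : Finset (Fin ℓ × Fin ℓ)) (hΦ : Φ ⊆ Dplus ℓ) (γ : Fin ℓ → ℤ)
    (z : Fin ℓ) (hz : (z : ℕ) + 1 = ℓ) (hneg : γ z < 0) :
    catalanFn Φ γ = 0 := by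
  rw [catalanFn_eq_finsum]
  rw [finsum_congr (g := fun _ => (0 : SymF)) ?_, finsum_zero]
  intro n
  unfold termF
  by_cases hcond : ∀ p, p ∉ Φ → n p = 0
  · rw [if_pos hcond]
    have hsh : shiftW n z ≤ 0 := by
      unfold shiftW
      apply Finset.sum_nonpos
      intro p _
      by_cases hp : n p = 0
      · simp [hp]
      · have hpΦ : p ∈ Φ := by
          by_contra hc
          exact hp (hcond p hc)
        have hlt := mem_Dplus_iff.mp (hΦ hpΦ)
        have hp1 : p.1 ≠ z := by
          intro hc
          have := p.2.isLt
          rw [hc] at hlt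
          omega
        rw [if_neg hp1]
        by_cases hp2 : p.2 = z
        · rw [if_pos hp2]
          have : (0:ℤ) ≤ (n p : ℤ) := Int.ofNat_nonneg _
          nlinarith
        · rw [if_neg hp2]
          simp
    have := schur_eq_zero_of_row (γ := fun a => γ a + shiftW n a) z (by
      have : ((z:ℕ):ℤ) = (ℓ:ℤ) - 1 := by omega
      omega)
    rw [this, mul_zero]
  · rw [if_neg hcond]

end CatProof
namespace CatProof

variable {ℓ : ℕ} {Ψ : Finset (Fin ℓ × Fin ℓ)}

/-- The column where row `i` of `Ψ` starts (0-based). -/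
def startN (Ψ : Finset (Fin ℓ × Fin ℓ)) (i : ℕ) : ℕ := i + nrN Ψ i + 1

lemma rootIdeal_lt (hΨ : IsRootIdeal Ψ) {i j : Fin ℓ} (h : (i,j) ∈ Ψ) : (i:ℕ) < (j:ℕ) :=
  mem_Dplus_iff.mp (hΨ.1 h)

lemma rootIdeal_closed (hΨ : IsRootIdeal Ψ) {i j i' j' : Fin ℓ} (h : (i,j) ∈ Ψ)
    (h1 : (i' : ℕ) ≤ (i:ℕ)) (h2 : (j:ℕ) ≤ (j':ℕ)) : (i', j') ∈ Ψ := by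
  have hij := rootIdeal_lt hΨ h
  have hD : (i', j') ∈ Dplus ℓ := mem_Dplus_iff.mpr (by simp only; omega)
  exact hΨ.2 (i,j) h (i',j') hD (by exact_mod_cast h1) (by exact_mod_cast h2)

lemma card_filter_Ico (a b : ℕ) (hb : b ≤ ℓ) :
    (Finset.univ.filter (fun j : Fin ℓ => a ≤ (j:ℕ) ∧ (j:ℕ) < b)).card = b - a := by
  rw [← Nat.card_Ico a b]
  apply Finset.card_bij (fun (j : Fin ℓ) _ => (j:ℕ))
  · intro j hj
    simp only [Finset.mem_filter] at hj
    simp [Finset.mem_Ico, hj.2.1, hj.2.2]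
  · intro j1 h1 j2 h2 h
    exact Fin.ext h
  · intro m hm
    simp only [Finset.mem_Ico] at hm
    exact ⟨⟨m, lt_of_lt_of_le hm.2 hb⟩, by simp [hm.1, hm.2], rfl⟩

lemma nrN_eq_card (i : Fin ℓ) :
    nrN Ψ (i:ℕ)
      = (Finset.univ.filter (fun j : Fin ℓ => (i:ℕ) < (j:ℕ) ∧ (i,j) ∉ Ψ)).card := by
  unfold nrN
  apply Finset.card_bij (fun (p : Fin ℓ × Fin ℓ) _ => p.2)
  · intro p hp
    simp only [Finset.mem_filter, Finset.mem_sdiff, mem_Dplus_iff] at hp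
    obtain ⟨⟨hD, hnot⟩, hfst⟩ := hp
    have hp1 : p.1 = i := Fin.ext hfst
    simp only [Finset.mem_filter, Finset.mem_univ, true_and]
    rw [← hp1]
    exact ⟨hD, by rw [← Prod.mk.eta (p := p)] at hnot; exact hnot⟩
  · intro p1 h1 p2 h2 h
    simp only [Finset.mem_filter, Finset.mem_sdiff] at h1 h2
    have e1 : p1.1 = i := Fin.ext h1.2
    have e2 : p2.1 = i := Fin.ext h2.2
    exact Prod.ext (e1.trans e2.symm) h
  · intro j hj
    simp only [Finset.mem_filter, Finset.mem_univ, true_and] at hj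
    refine ⟨(i, j), ?_, rfl⟩
    simp only [Finset.mem_filter, Finset.mem_sdiff, mem_Dplus_iff]
    exact ⟨⟨hj.1, hj.2⟩, trivial⟩

lemma startN_le (i : Fin ℓ) : startN Ψ (i:ℕ) ≤ ℓ := by
  unfold startN
  have h1 : nrN Ψ (i:ℕ) ≤ ℓ - ((i:ℕ)+1) := by
    rw [nrN_eq_card, ← card_filter_Ico ((i:ℕ)+1) ℓ (le_refl ℓ)]
    apply Finset.card_le_card
    intro j hj
    simp only [Finset.mem_filter, Finset.mem_univ, true_and] at hj ⊢
    exact ⟨hj.1, j.isLt⟩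
  have := i.isLt
  omega

/-- Membership in a root ideal in terms of the start column. -/
lemma mem_iff_start (hΨ : IsRootIdeal Ψ) (i j : Fin ℓ) :
    (i,j) ∈ Ψ ↔ startN Ψ (i:ℕ) ≤ (j:ℕ) := by
  unfold startN
  constructor
  · intro h
    have hij := rootIdeal_lt hΨ h
    have hsub : (Finset.univ.filter (fun j' : Fin ℓ => (i:ℕ) < (j':ℕ) ∧ (i,j') ∉ Ψ))
        ⊆ (Finset.univ.filter (fun j' : Fin ℓ => (i:ℕ)+1 ≤ (j':ℕ) ∧ (j':ℕ) < (j:ℕ))) := by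
      intro j' hj'
      simp only [Finset.mem_filter, Finset.mem_univ, true_and] at hj' ⊢
      refine ⟨hj'.1, ?_⟩
      by_contra hge
      push_neg at hge
      exact hj'.2 (rootIdeal_closed hΨ h (le_refl _) hge)
    have hcard := Finset.card_le_card hsub
    rw [← nrN_eq_card, card_filter_Ico _ _ (le_of_lt j.isLt)] at hcard
    omega
  · intro h
    by_contra hnot
    have hij : (i:ℕ) < (j:ℕ) := by
      have := startN_le (Ψ := Ψ) i
      unfold startN at this
      omega
    have hsub : (Finset.univ.filter (fun j' : Fin ℓ => (i:ℕ)+1 ≤ (j':ℕ) ∧ (j':ℕ) < (j:ℕ)+1))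
        ⊆ (Finset.univ.filter (fun j' : Fin ℓ => (i:ℕ) < (j':ℕ) ∧ (i,j') ∉ Ψ)) := by
      intro j' hj'
      simp only [Finset.mem_filter, Finset.mem_univ, true_and] at hj' ⊢
      refine ⟨hj'.1, ?_⟩
      intro hmem
      exact hnot (rootIdeal_closed hΨ hmem (le_refl _) (by omega))
    have hcard := Finset.card_le_card hsub
    rw [← nrN_eq_card, card_filter_Ico _ _ (by omega : (j:ℕ)+1 ≤ ℓ)] at hcard
    omega

lemma startN_mono (hΨ : IsRootIdeal Ψ) {i i' : Fin ℓ} (h : (i:ℕ) ≤ (i':ℕ)) :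
    startN Ψ (i:ℕ) ≤ startN Ψ (i':ℕ) := by
  rcases Nat.lt_or_ge (startN Ψ (i':ℕ)) ℓ with hlt | hge
  · set j : Fin ℓ := ⟨startN Ψ (i':ℕ), hlt⟩ with hj
    have hmem : (i', j) ∈ Ψ := (mem_iff_start hΨ i' j).mpr (le_refl _)
    have hmem2 : (i, j) ∈ Ψ := rootIdeal_closed hΨ hmem h (le_refl _)
    exact (mem_iff_start hΨ i j).mp hmem2
  · exact le_trans (startN_le i) hge

lemma downRel_of (hΨ : IsRootIdeal Ψ) {x y : Fin ℓ} (hmem : (x,y) ∈ Ψ)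
    (hy : (y:ℕ) = startN Ψ (x:ℕ))
    (hnext : ∀ x' : Fin ℓ, (x':ℕ) = (x:ℕ)+1 → (x', y) ∉ Ψ) : downRel Ψ x y := by
  refine ⟨hmem, (Finset.erase_subset _ _).trans hΨ.1, ?_⟩
  intro q hq r hr h1 h2
  rw [Finset.mem_erase] at hq ⊢
  have hqΨ := hΨ.2 q hq.2 r hr h1 h2
  refine ⟨?_, hqΨ⟩
  intro hcontr
  subst hcontr
  -- r = (x, y); q has q.1 ≥ x, q.2 ≤ y, q ∈ Ψ, q ≠ (x,y)
  have hx1 : (x:ℕ) ≤ (q.1:ℕ) := h1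
  have hy2 : (q.2:ℕ) ≤ (y:ℕ) := h2
  rcases Nat.eq_or_lt_of_le hx1 with heq | hlt
  · -- q.1 = x : then q.2 ≥ start x = y so q = (x,y)
    have hq1 : q.1 = x := Fin.ext heq.symm
    have hq2 : startN Ψ (x:ℕ) ≤ (q.2:ℕ) := by
      have := (mem_iff_start hΨ q.1 q.2).mp hq.2
      rwa [hq1] at this
    have : q.2 = y := Fin.ext (by omega)
    exact hq.1 (Prod.ext hq1 this)
  · -- q.1 > x : then (x+1, y) ∈ Ψ
    have hlt2 : (q.1 : ℕ) < (q.2 : ℕ) := rootIdeal_lt hΨ (show (q.1, q.2) ∈ Ψ from hq.2)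
    have hx1ℓ : (x:ℕ)+1 < ℓ := by
      have := q.2.isLt
      omega
    set x' : Fin ℓ := ⟨(x:ℕ)+1, hx1ℓ⟩ with hx'
    have : (x', y) ∈ Ψ := rootIdeal_closed hΨ
      (show (q.1, q.2) ∈ Ψ from hq.2) (by simp [hx']; omega) hy2
    exact hnext x' rfl this

lemma downRel_start (hΨ : IsRootIdeal Ψ) {x y : Fin ℓ} (h : downRel Ψ x y) :
    (y:ℕ) = startN Ψ (x:ℕ) := by
  have hge := (mem_iff_start hΨ x y).mp h.1
  rcases Nat.eq_or_lt_of_le hge with heq | hlt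
  · omega
  · exfalso
    have hjlt : startN Ψ (x:ℕ) < ℓ := lt_trans hlt y.isLt
    set j' : Fin ℓ := ⟨startN Ψ (x:ℕ), hjlt⟩ with hj'
    have hj'mem : (x, j') ∈ Ψ := (mem_iff_start hΨ x j').mpr (le_refl _)
    have hj'ne : (x, j') ≠ (x, y) := by
      intro hc
      have := congrArg (fun q : Fin ℓ × Fin ℓ => (q.2 : ℕ)) hc
      simp [hj'] at this
      omega
    have herase : (x, j') ∈ Ψ.erase (x,y) := Finset.mem_erase.mpr ⟨hj'ne, hj'mem⟩
    have hD : (x, y) ∈ Dplus ℓ := hΨ.1 h.1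
    have := h.2.2 (x, j') herase (x, y) hD (le_refl _) (by
      show ((j' : Fin ℓ) : ℕ) ≤ (y:ℕ)
      simp [hj']
      omega)
    exact (Finset.mem_erase.mp this).1 rfl

lemma downRel_next (hΨ : IsRootIdeal Ψ) {x y : Fin ℓ} (h : downRel Ψ x y)
    (x' : Fin ℓ) (hx' : (x':ℕ) = (x:ℕ)+1) : (x', y) ∉ Ψ := by
  intro hmem
  have hne : (x', y) ≠ (x, y) := by
    intro hc
    have := congrArg (fun q : Fin ℓ × Fin ℓ => (q.1 : ℕ)) hc
    simp at this
    omega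
  have herase : (x', y) ∈ Ψ.erase (x,y) := Finset.mem_erase.mpr ⟨hne, hmem⟩
  have hD : (x, y) ∈ Dplus ℓ := hΨ.1 h.1
  have := h.2.2 (x', y) herase (x, y) hD (by show (x:ℕ) ≤ (x':ℕ); omega) (le_refl _)
  exact (Finset.mem_erase.mp this).1 rfl

lemma downRel_unique (hΨ : IsRootIdeal Ψ) {x y y' : Fin ℓ}
    (h : downRel Ψ x y) (h' : downRel Ψ x y') : y = y' :=
  Fin.ext ((downRel_start hΨ h).trans (downRel_start hΨ h').symm)

lemma downRel_lt (hΨ : IsRootIdeal Ψ) {x y : Fin ℓ} (h : downRel Ψ x y) :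
    (x:ℕ) < (y:ℕ) := rootIdeal_lt hΨ h.1

lemma downSet_eq_singleton (hΨ : IsRootIdeal Ψ) {x y : Fin ℓ} (h : downRel Ψ x y) :
    downSet Ψ x = {y} := by
  ext y'
  simp only [downSet, Finset.mem_filter, Finset.mem_univ, true_and, Finset.mem_singleton]
  constructor
  · intro h'
    exact (downRel_unique hΨ h' h).symm ▸ rfl
  · intro h'
    rwa [h']

lemma downSet_eq_empty {x : Fin ℓ} (h : ∀ y, ¬ downRel Ψ x y) :
    downSet Ψ x = ∅ := by
  ext y'
  simp only [downSet, Finset.mem_filter, Finset.mem_univ, true_and, Finset.notMem_empty,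
    iff_false]
  exact h y'

lemma PsiZ_of_downRel (hΨ : IsRootIdeal Ψ) {x y : Fin ℓ} (h : downRel Ψ x y) :
    PsiZ Ψ x = Ψ.erase (x, y) := by
  unfold PsiZ
  rw [downSet_eq_singleton hΨ h, Finset.image_singleton]
  ext q
  simp [Finset.mem_sdiff, Finset.mem_erase, and_comm]

lemma PsiZ_of_not {x : Fin ℓ} (h : ∀ y, ¬ downRel Ψ x y) : PsiZ Ψ x = Ψ := by
  unfold PsiZ
  rw [downSet_eq_empty h]
  simp

lemma inDownpath_le (hΨ : IsRootIdeal Ψ) {p z : Fin ℓ} (h : inDownpath Ψ p z) :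
    (p:ℕ) ≤ (z:ℕ) := by
  induction h with
  | refl => exact le_refl _
  | tail _ hstep ih => exact le_trans ih (le_of_lt (downRel_lt hΨ hstep))

lemma inDownpath_total (hΨ : IsRootIdeal Ψ) {p a b : Fin ℓ}
    (h1 : inDownpath Ψ p a) (h2 : inDownpath Ψ p b) :
    inDownpath Ψ a b ∨ inDownpath Ψ b a := by
  induction h1 with
  | refl => exact Or.inl h2
  | tail hpc hstep ih =>
    rename_i c a' -- c intermediate, a' end with downRel c a'
    rcases ih with hcb | hbc
    · rcases Relation.ReflTransGen.cases_head hcb with heq | ⟨d, hd1, hd2⟩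
      · right
        rw [← heq]
        exact Relation.ReflTransGen.single hstep
      · left
        rwa [downRel_unique hΨ hstep hd1]
    · right
      exact hbc.tail hstep

lemma bounceCount_self (hΨ : IsRootIdeal Ψ) (q : Fin ℓ) : bounceCount Ψ q q = 0 := by
  unfold bounceCount
  have : {y | inDownpath Ψ q y ∧ inDownpath Ψ y q} = {q} := by
    ext y
    simp only [Set.mem_setOf_eq, Set.mem_singleton_iff]
    constructor
    · rintro ⟨h1, h2⟩
      have := inDownpath_le hΨ h1
      have := inDownpath_le hΨ h2
      exact Fin.ext (by omega)
    · rintro rfl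
      exact ⟨Relation.ReflTransGen.refl, Relation.ReflTransGen.refl⟩
  rw [this, Set.ncard_singleton]

lemma bounceCount_step (hΨ : IsRootIdeal Ψ) {q y z : Fin ℓ}
    (hqy : downRel Ψ q y) (hyz : inDownpath Ψ y z) :
    bounceCount Ψ q z = bounceCount Ψ y z + 1 := by
  unfold bounceCount
  set Sy := {w | inDownpath Ψ y w ∧ inDownpath Ψ w z} with hSy
  have hq_notin : q ∉ Sy := by
    intro hc
    have := inDownpath_le hΨ hc.1
    have := downRel_lt hΨ hqy
    omega
  have hins : {w | inDownpath Ψ q w ∧ inDownpath Ψ w z} = insert q Sy := by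
    ext w
    simp only [Set.mem_setOf_eq, Set.mem_insert_iff, hSy]
    constructor
    · rintro ⟨h1, h2⟩
      rcases Relation.ReflTransGen.cases_head h1 with heq | ⟨d, hd1, hd2⟩
      · exact Or.inl heq.symm
      · right
        rw [downRel_unique hΨ hd1 hqy] at hd2
        exact ⟨hd2, h2⟩
    · rintro (rfl | ⟨h1, h2⟩)
      · exact ⟨Relation.ReflTransGen.refl, Relation.ReflTransGen.refl.tail hqy |>.trans hyz⟩
      · exact ⟨Relation.ReflTransGen.head hqy h1, h2⟩
  have hfin : Sy.Finite := Set.toFinite _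
  have hy_mem : y ∈ Sy := ⟨Relation.ReflTransGen.refl, hyz⟩
  have hpos : 1 ≤ Sy.ncard := by
    rw [Nat.one_le_iff_ne_zero]
    intro hc
    rw [Set.ncard_eq_zero hfin] at hc
    rw [hc] at hy_mem
    exact hy_mem
  rw [hins, Set.ncard_insert_of_notMem hq_notin hfin]
  omega

end CatProof
namespace CatProof

variable {ℓ : ℕ} {Ψ : Finset (Fin ℓ × Fin ℓ)}

lemma extendFinZ_pos {γ : Fin ℓ → ℤ} {i : ℕ} (h : i < ℓ) : extendFinZ γ i = γ ⟨i, h⟩ :=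
  dif_pos h

lemma extendFinZ_fin (γ : Fin ℓ → ℤ) (i : Fin ℓ) : extendFinZ γ (i:ℕ) = γ i := by
  rw [extendFinZ_pos i.isLt]

lemma styleZN_fin (η : Fin ℓ → ℤ) (i : Fin ℓ) :
    styleZN Ψ η (i:ℕ) = (nrN Ψ (i:ℕ) : ℤ) + η i := by
  unfold styleZN
  rw [extendFinZ_fin]

/-- Any non-initial element of the downpath lies strictly below row `r`. -/
lemma path_gt_r {r p : ℕ} (hΨ : IsRootIdeal Ψ) (P : Fin ℓ) (hP : (P:ℕ) = p) (hp : p ≤ r)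
    (h2 : ∀ i, i ≤ r → r - i ≤ nrN Ψ i) {a : Fin ℓ} (ha : inDownpath Ψ P a) :
    a = P ∨ r < (a:ℕ) := by
  rcases Relation.ReflTransGen.cases_tail ha with heq | ⟨c, hc1, hc2⟩
  · exact Or.inl heq
  · right
    have hstart := downRel_start hΨ hc2
    have hPc := inDownpath_le hΨ hc1
    rcases Nat.lt_or_ge r (c:ℕ) with h | h
    · have := downRel_lt hΨ hc2
      omega
    · have := h2 (c:ℕ) h
      unfold startN at hstart
      omega

/-- The cascade lemma: vanishing after the mirror corrections. -/
lemma cascade (k : ℕ) (hΨ : IsRootIdeal Ψ) (η : Fin ℓ → ℤ)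
    (r p : ℕ) (hr : r < ℓ) (hp : p ≤ r)
    (h1 : ∀ i j, r ≤ i → i ≤ j → j < ℓ → extendFinZ η j ≤ extendFinZ η i)
    (h2 : ∀ i, i ≤ r → r - i ≤ nrN Ψ i)
    (h3b : ∀ i, r < i → i < ℓ →
      styleZN Ψ η i = min (k : ℤ) ((ℓ : ℤ) - 1 - i + extendFinZ η i))
    (h4 : styleZN Ψ η p < (k : ℤ))
    (h5 : p < r → nrN Ψ p = nrN Ψ (p + 1) →
      nrN Ψ (p + 1) ≤ nrN Ψ (p + 2) ∧ extendFinZ η p = extendFinZ η (p + 1) - 1)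
    (P : Fin ℓ) (hP : (P:ℕ) = p) :
    ∀ n : ℕ, ∀ q w : Fin ℓ, (q:ℕ) = n → (w:ℕ) = (q:ℕ)+1 →
      inDownpath Ψ P q →
      ((q:ℕ) = p → p < r) →
      ∀ (Φ : Finset (Fin ℓ × Fin ℓ)) (γ : Fin ℓ → ℤ),
      Φ ⊆ Dplus ℓ →
      (∀ i : Fin ℓ, (i:ℕ) < (q:ℕ) → ∀ j : Fin ℓ, ((i,j) ∈ Φ ↔ (i,j) ∈ Ψ)) →
      (∀ j : Fin ℓ, ((q,j) ∈ Φ ↔ (w,j) ∈ Φ)) →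
      (q, w) ∉ Φ →
      γ q = γ w - 1 →
      (∀ i : Fin ℓ, (i:ℕ) < (q:ℕ) → γ i = η i + (if (i:ℕ) = p then 1 else 0)) →
      catalanFn Φ γ = 0 := by
  intro n
  induction n using Nat.strong_induction_on with
  | _ n IH =>
  intro q w hq hw hpath hqp Φ γ hΦ hv4 hrows hnotin hγ hv5
  by_cases hbad : ∀ i : Fin ℓ, (i:ℕ) < (q:ℕ) → (i,w) ∈ Φ → (i,q) ∈ Φ
  · -- no bad rows: direct mirror
    apply catalanFn_mirror Φ hΦ γ q w hw hnotin hrows _ hγ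
    intro i
    rcases Nat.lt_or_ge (i:ℕ) (q:ℕ) with hlt | hge
    · constructor
      · intro hmem
        have hΨmem : (i, q) ∈ Ψ := (hv4 i hlt q).mp hmem
        have : (i, w) ∈ Ψ := rootIdeal_closed hΨ hΨmem (le_refl _) (by omega)
        exact (hv4 i hlt w).mpr this
      · exact hbad i hlt
    · have hiq : (i, q) ∉ Φ := by
        intro hc
        have := mem_Dplus_iff.mp (hΦ hc)
        simp only at this
        omega
      have hiw : (i, w) ∉ Φ := by
        rcases Nat.eq_or_lt_of_le hge with heq | hlt2
        · have : i = q := Fin.ext heq.symm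
          rwa [this]
        · intro hc
          have := mem_Dplus_iff.mp (hΦ hc)
          simp only at this
          omega
      exact iff_of_false hiq hiw
  · -- there is a bad row
    push_neg at hbad
    obtain ⟨i₀, hi₀lt, hi₀w, hi₀q⟩ := hbad
    have hi₀wΨ : (i₀, w) ∈ Ψ := (hv4 i₀ hi₀lt w).mp hi₀w
    have hi₀qΨ : (i₀, q) ∉ Ψ := fun hc => hi₀q ((hv4 i₀ hi₀lt q).mpr hc)
    have hstart_i₀ : startN Ψ (i₀:ℕ) = (q:ℕ) + 1 := by
      have hle := (mem_iff_start hΨ i₀ w).mp hi₀wΨ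
      have hgt : ¬ startN Ψ (i₀:ℕ) ≤ (q:ℕ) := fun hc =>
        hi₀qΨ ((mem_iff_start hΨ i₀ q).mpr hc)
      omega
    -- q is not the initial vertex P
    have hqP : q ≠ P := by
      intro hc
      subst hc
      have hpr : p < r := hqp hP
      have hh2 := h2 (i₀:ℕ) (by omega)
      unfold startN at hstart_i₀
      omega
    -- predecessor a on the path
    obtain ⟨a, hPa, haq⟩ : ∃ a, inDownpath Ψ P a ∧ downRel Ψ a q := by
      rcases Relation.ReflTransGen.cases_tail hpath with heq | h
      · exact absurd heq hqP
      · exact h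
    have hstart_a : (q:ℕ) = startN Ψ (a:ℕ) := downRel_start hΨ haq
    have haltq : (a:ℕ) < (q:ℕ) := downRel_lt hΨ haq
    have hPalev := inDownpath_le hΨ hPa
    -- bad rows are above a
    have hbad_gt_a : ∀ i : Fin ℓ, (i:ℕ) < (q:ℕ) → (i,w) ∈ Ψ → (i,q) ∉ Ψ →
        (a:ℕ) < (i:ℕ) := by
      intro i hilt hiw hiq
      by_contra hle
      push_neg at hle
      have hmono := startN_mono hΨ hle
      have hstart_i : startN Ψ (i:ℕ) = (q:ℕ) + 1 := by
        have h1' := (mem_iff_start hΨ i w).mp hiw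
        have h2' : ¬ startN Ψ (i:ℕ) ≤ (q:ℕ) := fun hc => hiq ((mem_iff_start hΨ i q).mpr hc)
        omega
      omega
    -- the KEY claim: every bad row equals a+1, and the eta-gap holds
    have hKEY : ∀ i : Fin ℓ, (i:ℕ) < (q:ℕ) → (i,w) ∈ Ψ → (i,q) ∉ Ψ →
        ((i:ℕ) = (a:ℕ) + 1 ∧ η a + (if (a:ℕ) = p then 1 else 0) = η i
          ∧ ((a:ℕ) = p → p < r)) := by
      intro i hilt hiw hiq
      have hia : (a:ℕ) < (i:ℕ) := hbad_gt_a i hilt hiw hiq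
      have hstart_i : startN Ψ (i:ℕ) = (q:ℕ) + 1 := by
        have h1' := (mem_iff_start hΨ i w).mp hiw
        have h2' : ¬ startN Ψ (i:ℕ) ≤ (q:ℕ) := fun hc => hiq ((mem_iff_start hΨ i q).mpr hc)
        omega
      rcases path_gt_r hΨ P hP hp h2 hPa with haP | har
      · -- a = P, i.e. a is the initial vertex p
        subst haP
        -- first: p < r
        have hpr : p < r := by
          by_contra hge
          push_neg at hge
          have hpr' : p = r := le_antisymm hp hge
          -- i > r, use h3b at i and h4 at p for a contradiction
          have hir : r < (i:ℕ) := by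
            -- start_i = q+1 > q = start_a , so i > a; a = P has value p = r
            omega
          have h3bi := h3b (i:ℕ) hir i.isLt
          rw [styleZN_fin] at h3bi
          have hnri : (nrN Ψ (i:ℕ) : ℤ) = (q:ℕ) - (i:ℕ) := by
            unfold startN at hstart_i
            have : nrN Ψ (i:ℕ) = (q:ℕ) - (i:ℕ) := by omega
            omega
          have hetai : η i ≤ extendFinZ η p := by
            have := h1 r (i:ℕ) (le_refl r) (by omega) i.isLt
            rw [extendFinZ_fin] at this
            rw [hpr']
            exact this
          have h4' := h4
          unfold styleZN at h4'
          have hnrp : (nrN Ψ p : ℤ) = (q:ℕ) - p - 1 := by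
            unfold startN at hstart_a
            rw [hP] at hstart_a
            have : nrN Ψ p = (q:ℕ) - p - 1 := by omega
            omega
          have hwlt := w.isLt
          rw [extendFinZ_fin] at h3bi
          omega
        refine ⟨?_, ?_, fun _ => hpr⟩
        · -- i = p + 1
          by_contra hne
          have hip1 : p + 1 < (i:ℕ) := by
            rw [hP] at hia
            omega
          have hp1ℓ : p + 1 < ℓ := lt_trans hip1 i.isLt
          set b : Fin ℓ := ⟨p+1, hp1ℓ⟩ with hb
          have hb_not : (b, q) ∉ Ψ := downRel_next hΨ haq b (by simp [hb, hP])
          have hb_start_gt : (q:ℕ) < startN Ψ (p+1) := by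
            have : ¬ startN Ψ ((b:Fin ℓ):ℕ) ≤ (q:ℕ) := fun hc =>
              hb_not ((mem_iff_start hΨ b q).mpr hc)
            simpa [hb] using this
          have hb_start_le : startN Ψ (p+1) ≤ startN Ψ (i:ℕ) := by
            have := startN_mono hΨ (show ((b:Fin ℓ):ℕ) ≤ (i:ℕ) by simp [hb]; omega)
            simpa [hb] using this
          have hb_start : startN Ψ (p+1) = (q:ℕ) + 1 := by omega
          have hnr_eq : nrN Ψ p = nrN Ψ (p+1) := by
            unfold startN at hb_start hstart_a
            rw [hP] at hstart_a
            omega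
          have hh5 := h5 hpr hnr_eq
          have hstart_p2 : startN Ψ (p+1) + 1 ≤ startN Ψ (p+2) := by
            unfold startN
            omega
          have hp2ℓ : p + 2 < ℓ := by
            rw [hP] at hia
            omega
          have hmono := startN_mono hΨ (show ((⟨p+2, hp2ℓ⟩ : Fin ℓ):ℕ) ≤ (i:ℕ) by simp; omega)
          simp only at hmono
          omega
        · -- eta gap: η p + 1 = η i
          have hip1 : (i:ℕ) = p + 1 := by
            -- we just proved it above...
            by_contra hne
            have hip1 : p + 1 < (i:ℕ) := by
              rw [hP] at hia
              omega
            have hp1ℓ : p + 1 < ℓ := lt_trans hip1 i.isLt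
            set b : Fin ℓ := ⟨p+1, hp1ℓ⟩ with hb
            have hb_not : (b, q) ∉ Ψ := downRel_next hΨ haq b (by simp [hb, hP])
            have hb_start_gt : (q:ℕ) < startN Ψ (p+1) := by
              have : ¬ startN Ψ ((b:Fin ℓ):ℕ) ≤ (q:ℕ) := fun hc =>
                hb_not ((mem_iff_start hΨ b q).mpr hc)
              simpa [hb] using this
            have hb_start_le : startN Ψ (p+1) ≤ startN Ψ (i:ℕ) := by
              have := startN_mono hΨ (show ((b:Fin ℓ):ℕ) ≤ (i:ℕ) by simp [hb]; omega)
              simpa [hb] using this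
            have hb_start : startN Ψ (p+1) = (q:ℕ) + 1 := by omega
            have hnr_eq : nrN Ψ p = nrN Ψ (p+1) := by
              unfold startN at hb_start hstart_a
              rw [hP] at hstart_a
              omega
            have hh5 := h5 hpr hnr_eq
            have hstart_p2 : startN Ψ (p+1) + 1 ≤ startN Ψ (p+2) := by
              unfold startN
              omega
            have hp2ℓ : p + 2 < ℓ := by
              rw [hP] at hia
              omega
            have hmono := startN_mono hΨ (show ((⟨p+2, hp2ℓ⟩ : Fin ℓ):ℕ) ≤ (i:ℕ) by simp; omega)
            simp only at hmono
            omega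
          have hnr_eq : nrN Ψ p = nrN Ψ (p+1) := by
            unfold startN at hstart_i hstart_a
            rw [hP] at hstart_a
            rw [hip1] at hstart_i
            omega
          have hh5 := (h5 hpr hnr_eq).2
          rw [extendFinZ_pos (by omega : p < ℓ), extendFinZ_pos (by omega : p+1 < ℓ)] at hh5
          have he1 : (⟨p, by omega⟩ : Fin ℓ) = a := Fin.ext (by simp [hP])
          have he2 : (⟨p+1, by omega⟩ : Fin ℓ) = i := Fin.ext (by simp [hip1])
          rw [he1, he2] at hh5
          rw [if_pos hP]
          omega
      · -- a > r
        have hqℓ := q.isLt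
        have hwℓ := w.isLt
        have h3ba := h3b (a:ℕ) har a.isLt
        have h3bi := h3b (i:ℕ) (by omega) i.isLt
        rw [styleZN_fin] at h3ba h3bi
        rw [extendFinZ_fin] at h3ba h3bi
        have hnra : (nrN Ψ (a:ℕ) : ℤ) = (q:ℕ) - (a:ℕ) - 1 := by
          unfold startN at hstart_a
          have : nrN Ψ (a:ℕ) = (q:ℕ) - (a:ℕ) - 1 := by omega
          omega
        have hnri : (nrN Ψ (i:ℕ) : ℤ) = (q:ℕ) - (i:ℕ) := by
          unfold startN at hstart_i
          have : nrN Ψ (i:ℕ) = (q:ℕ) - (i:ℕ) := by omega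
          omega
        have heta_le : η i ≤ η a := by
          have := h1 (a:ℕ) (i:ℕ) (by omega) (by omega) i.isLt
          rw [extendFinZ_fin, extendFinZ_fin] at this
          exact this
        have hanp : (a:ℕ) ≠ p := by omega
        rw [if_neg hanp]
        constructor
        · omega
        constructor
        · omega
        · intro hc
          exact absurd hc hanp
    obtain ⟨hi₀val, hgap, hapr⟩ := hKEY i₀ hi₀lt hi₀wΨ hi₀qΨ
    -- insert the root (i₀, q) and split
    have hδD : (i₀, q) ∈ Dplus ℓ := mem_Dplus_iff.mpr (by simp only; omega)
    rw [catalanFn_insert Φ hΦ hi₀q hδD γ]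
    set Φ' := insert (i₀, q) Φ with hΦ'def
    have hΦ' : Φ' ⊆ Dplus ℓ := by
      intro x hx
      rcases Finset.mem_insert.mp hx with h | h
      · exact h ▸ hδD
      · exact hΦ h
    have hne_qw : ∀ j : Fin ℓ, (q, j) ≠ (i₀, q) := by
      intro j hc
      have := congrArg (fun x : Fin ℓ × Fin ℓ => (x.1:ℕ)) hc
      simp only at this
      omega
    have hne_w : ∀ j : Fin ℓ, (w, j) ≠ (i₀, q) := by
      intro j hc
      have := congrArg (fun x : Fin ℓ × Fin ℓ => (x.1:ℕ)) hc
      simp only at this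
      omega
    -- Term 1 vanishes by the mirror at (q, w)
    have hterm1 : catalanFn Φ' γ = 0 := by
      apply catalanFn_mirror Φ' hΦ' γ q w hw
      · intro hc
        rcases Finset.mem_insert.mp hc with h | h
        · exact hne_qw w h
        · exact hnotin h
      · intro j
        rw [hΦ'def, Finset.mem_insert, Finset.mem_insert]
        simp only [hne_qw j, hne_w j, false_or]
        exact hrows j
      · intro i
        rcases Nat.lt_or_ge (i:ℕ) (q:ℕ) with hlt | hge
        · constructor
          · intro hmem
            rcases Finset.mem_insert.mp hmem with h | h
            · -- i = i₀
              have hii₀ : i = i₀ := by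
                have := congrArg (fun x : Fin ℓ × Fin ℓ => x.1) h
                simpa using this
              rw [hΦ'def, Finset.mem_insert]
              right
              rw [hii₀]
              exact hi₀w
            · have hΨmem : (i, q) ∈ Ψ := (hv4 i hlt q).mp h
              have : (i, w) ∈ Ψ := rootIdeal_closed hΨ hΨmem (le_refl _) (by omega)
              rw [hΦ'def, Finset.mem_insert]
              right
              exact (hv4 i hlt w).mpr this
          · intro hmem
            have hiw : (i, w) ∈ Φ := by
              rcases Finset.mem_insert.mp hmem with h | h
              · exfalso
                have := congrArg (fun x : Fin ℓ × Fin ℓ => (x.2:ℕ)) h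
                simp only at this
                omega
              · exact h
            by_cases hiq : (i, q) ∈ Φ
            · rw [hΦ'def, Finset.mem_insert]
              right
              exact hiq
            · -- i is a bad row, so i = i₀
              have hiΨw : (i, w) ∈ Ψ := (hv4 i hlt w).mp hiw
              have hiΨq : (i, q) ∉ Ψ := fun hc => hiq ((hv4 i hlt q).mpr hc)
              have := (hKEY i hlt hiΨw hiΨq).1
              have hii₀ : i = i₀ := Fin.ext (by omega)
              rw [hΦ'def, Finset.mem_insert]
              left
              rw [hii₀]
            
        · have hiq : (i, q) ∉ Φ' := by
            intro hc
            rcases Finset.mem_insert.mp hc with h | h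
            · have := congrArg (fun x : Fin ℓ × Fin ℓ => (x.1:ℕ)) h
              simp only at this
              omega
            · have := mem_Dplus_iff.mp (hΦ h)
              simp only at this
              omega
          have hiw : (i, w) ∉ Φ' := by
            intro hc
            rcases Finset.mem_insert.mp hc with h | h
            · have := congrArg (fun x : Fin ℓ × Fin ℓ => (x.2:ℕ)) h
              simp only at this
              omega
            · rcases Nat.eq_or_lt_of_le hge with heq | hlt2
              · have : i = q := Fin.ext heq.symm
                rw [this] at h
                exact hnotin h
              · have := mem_Dplus_iff.mp (hΦ h)
                simp only at this
                omega
          exact iff_of_false hiq hiw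
      · exact hγ
    -- Term 2 vanishes by the inductive hypothesis at a
    have hterm2 : catalanFn Φ' (adjW γ i₀ q) = 0 := by
      apply IH (a:ℕ) (by omega) a i₀ rfl (by omega) hPa
        (by intro hc; exact hapr hc)
        Φ' (adjW γ i₀ q) hΦ'
      · -- v4 below a
        intro i hilt j
        rw [hΦ'def, Finset.mem_insert]
        have hne : (i, j) ≠ (i₀, q) := by
          intro hc
          have := congrArg (fun x : Fin ℓ × Fin ℓ => (x.1:ℕ)) hc
          simp only at this
          omega
        simp only [hne, false_or]
        exact hv4 i (by omega) j
      · -- rows a and i₀ match in Φ'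
        intro j
        have hrow_a : ((a, j) ∈ Φ' ↔ (q:ℕ) ≤ (j:ℕ)) := by
          rw [hΦ'def, Finset.mem_insert]
          have hne : (a, j) ≠ (i₀, q) := by
            intro hc
            have := congrArg (fun x : Fin ℓ × Fin ℓ => (x.1:ℕ)) hc
            simp only at this
            omega
          simp only [hne, false_or]
          rw [hv4 a haltq j, mem_iff_start hΨ a j]
          omega
        have hrow_i₀ : ((i₀, j) ∈ Φ' ↔ (q:ℕ) ≤ (j:ℕ)) := by
          rw [hΦ'def, Finset.mem_insert]
          rw [hv4 i₀ hi₀lt j, mem_iff_start hΨ i₀ j]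
          constructor
          · intro hc
            rcases hc with h | h
            · have := congrArg (fun x : Fin ℓ × Fin ℓ => (x.2:ℕ)) h
              simp only at this
              omega
            · omega
          · intro hj
            rcases Nat.eq_or_lt_of_le hj with heq | hlt
            · left
              have : j = q := Fin.ext heq.symm
              rw [this]
            · right
              omega
        rw [hrow_a, hrow_i₀]
      · -- (a, i₀) ∉ Φ'
        intro hc
        rw [hΦ'def, Finset.mem_insert] at hc
        rcases hc with h | h
        · have := congrArg (fun x : Fin ℓ × Fin ℓ => (x.1:ℕ)) h
          simp only at this
          omega
        · have := (mem_iff_start hΨ a i₀).mp ((hv4 a haltq i₀).mp h)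
          omega
      · -- weight gap at (a, i₀)
        unfold adjW
        have hai₀ : i₀ ≠ a := by
          intro hc
          have := congrArg (fun x : Fin ℓ => (x:ℕ)) hc
          omega
        have haq' : q ≠ a := by
          intro hc
          have := congrArg (fun x : Fin ℓ => (x:ℕ)) hc
          omega
        have hqi₀ : q ≠ i₀ := by
          intro hc
          have := congrArg (fun x : Fin ℓ => (x:ℕ)) hc
          omega
        rw [if_neg hai₀, if_neg haq', if_pos rfl, if_neg hqi₀]
        have hγa := hv5 a haltq
        have hγi₀ := hv5 i₀ hi₀lt
        have hi₀np : (i₀:ℕ) ≠ p := by omega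
        rw [if_neg hi₀np] at hγi₀
        rw [hγa, hγi₀]
        rw [← hgap]
        ring
      · -- v5 below a
        intro i hilt
        unfold adjW
        have hii₀ : i₀ ≠ i := by
          intro hc
          have := congrArg (fun x : Fin ℓ => (x:ℕ)) hc
          omega
        have hiq' : q ≠ i := by
          intro hc
          have := congrArg (fun x : Fin ℓ => (x:ℕ)) hc
          omega
        rw [if_neg hii₀, if_neg hiq']
        rw [hv5 i (by omega)]
        ring
    rw [hterm1, hterm2]
    ring

end CatProof
namespace CatProof

variable {ℓ : ℕ} {Ψ : Finset (Fin ℓ × Fin ℓ)}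

/-- The weight `η + ε_p - ε_z`. -/
def wtF (η : Fin ℓ → ℤ) (p : ℕ) (z : Fin ℓ) : Fin ℓ → ℤ :=
  fun a => η a + (if (a : ℕ) = p then 1 else 0) - (if a = z then 1 else 0)

lemma catalanFn_split' (hΨD : Ψ ⊆ Dplus ℓ) {i j : Fin ℓ} (hδ : (i,j) ∈ Ψ) (γ : Fin ℓ → ℤ) :
    catalanFn Ψ γ = catalanFn (Ψ.erase (i,j)) γ + tC * catalanFn Ψ (adjW γ i j) :=
  catalanFn_split Ψ hΨD hδ γ

/-- Vanishing of the dropped downpath terms. -/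
lemma vanish (k : ℕ) (hΨ : IsRootIdeal Ψ) (η : Fin ℓ → ℤ)
    (r p : ℕ) (hr : r < ℓ) (hp : p ≤ r)
    (h1 : ∀ i j, r ≤ i → i ≤ j → j < ℓ → extendFinZ η j ≤ extendFinZ η i)
    (h2 : ∀ i, i ≤ r → r - i ≤ nrN Ψ i)
    (h3b : ∀ i, r < i → i < ℓ →
      styleZN Ψ η i = min (k : ℤ) ((ℓ : ℤ) - 1 - i + extendFinZ η i))
    (h4 : styleZN Ψ η p < (k : ℤ))
    (h5 : p < r → nrN Ψ p = nrN Ψ (p + 1) →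
      nrN Ψ (p + 1) ≤ nrN Ψ (p + 2) ∧ extendFinZ η p = extendFinZ η (p + 1) - 1)
    (P : Fin ℓ) (hP : (P:ℕ) = p)
    (z : Fin ℓ) (hz : inDownpath Ψ P z) (hzP : z ≠ P)
    (hncond : ¬ (extendFinZ η ((z:ℕ)+1) < extendFinZ η (z:ℕ))) :
    catalanFn (PsiZ Ψ z) (wtF η p z) = 0 := by
  have hznp : (z:ℕ) ≠ p := by
    intro hc
    exact hzP (Fin.ext (by rw [hP, hc]))
  have hzr : r < (z:ℕ) := by
    rcases path_gt_r hΨ P hP hp h2 hz with h | h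
    · exact absurd h hzP
    · exact h
  have hPsiSub : PsiZ Ψ z ⊆ Ψ := Finset.sdiff_subset
  have hPsiD : PsiZ Ψ z ⊆ Dplus ℓ := hPsiSub.trans hΨ.1
  rcases Nat.eq_or_lt_of_le (Nat.succ_le_of_lt z.isLt) with hzl | hzl
  · -- z is the last row
    apply catalanFn_lastrow _ hPsiD _ z hzl
    have h0 : extendFinZ η ((z:ℕ)+1) = 0 := dif_neg (by omega)
    rw [h0, extendFinZ_fin] at hncond
    push_neg at hncond
    unfold wtF
    rw [if_neg hznp, if_pos rfl]
    omega
  · -- z+1 < ℓ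
    obtain ⟨w, hwval⟩ : ∃ w : Fin ℓ, (w:ℕ) = (z:ℕ)+1 := ⟨⟨(z:ℕ)+1, hzl⟩, rfl⟩
    have heta : η w = η z := by
      have hle := h1 (z:ℕ) ((z:ℕ)+1) (by omega) (by omega) hzl
      rw [← hwval] at hle hncond
      rw [extendFinZ_fin, extendFinZ_fin] at hle
      rw [extendFinZ_fin, extendFinZ_fin] at hncond
      push_neg at hncond
      omega
    have h3bw := h3b ((w:ℕ)) (by omega) w.isLt
    rw [styleZN_fin, extendFinZ_fin] at h3bw
    have hwnp : (w:ℕ) ≠ p := by omega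
    have h3bz := h3b (z:ℕ) hzr z.isLt
    rw [styleZN_fin, extendFinZ_fin] at h3bz
    have hdelta : startN Ψ ((w:ℕ)) = startN Ψ (z:ℕ) ∨
        startN Ψ ((w:ℕ)) = startN Ψ (z:ℕ) + 1 := by
      unfold startN
      rw [heta] at h3bw
      have hwz : ((w:ℕ):ℤ) = ((z:ℕ):ℤ) + 1 := by exact_mod_cast hwval
      omega
    -- gap condition for the cascade, and the v5 condition
    have hγgap : wtF η p z z = wtF η p z w - 1 := by
      unfold wtF
      rw [if_neg hznp, if_pos rfl, if_neg hwnp,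
        if_neg (show w ≠ z from fun hc => by rw [hc] at hwval; omega)]
      omega
    have hv5 : ∀ i : Fin ℓ, (i:ℕ) < (z:ℕ) → wtF η p z i = η i + (if (i:ℕ) = p then 1 else 0) := by
      intro i hilt
      unfold wtF
      rw [if_neg (show i ≠ z from fun hc => by rw [hc] at hilt; omega)]
      ring
    by_cases hex : ∃ y, downRel Ψ z y
    · -- removable root exists in row z
      obtain ⟨y, hy⟩ := hex
      have hyval : (y:ℕ) = startN Ψ (z:ℕ) := downRel_start hΨ hy
      have hynext : (w, y) ∉ Ψ := downRel_next hΨ hy w hwval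
      have hsww : startN Ψ ((w:ℕ)) = startN Ψ (z:ℕ) + 1 := by
        rcases hdelta with h | h
        · exfalso
          exact hynext ((mem_iff_start hΨ w y).mpr (by omega))
        · exact h
      have hzy : (z:ℕ) < (y:ℕ) := downRel_lt hΨ hy
      rw [PsiZ_of_downRel hΨ hy]
      apply cascade k hΨ η r p hr hp h1 h2 h3b h4 h5 P hP (z:ℕ) z w rfl hwval hz
        (fun hc => absurd hc hznp) _ _ ((Finset.erase_subset _ _).trans hΨ.1)
      · -- v4
        intro i hilt j
        rw [Finset.mem_erase]
        constructor
        · exact fun h => h.2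
        · intro h
          refine ⟨?_, h⟩
          intro hc
          have := congrArg (fun x : Fin ℓ × Fin ℓ => (x.1:ℕ)) hc
          simp only at this
          omega
      · -- rows z, w match
        intro j
        rw [Finset.mem_erase, Finset.mem_erase]
        constructor
        · rintro ⟨hne, hmem⟩
          have hj := (mem_iff_start hΨ z j).mp hmem
          have hjy : (j:ℕ) ≠ (y:ℕ) := by
            intro hc
            exact hne (by rw [show j = y from Fin.ext hc])
          refine ⟨?_, (mem_iff_start hΨ w j).mpr (by omega)⟩
          intro hc
          have := congrArg (fun x : Fin ℓ × Fin ℓ => (x.1:ℕ)) hc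
          simp only at this
          omega
        · rintro ⟨hne, hmem⟩
          have hj := (mem_iff_start hΨ w j).mp hmem
          refine ⟨?_, (mem_iff_start hΨ z j).mpr (by omega)⟩
          intro hc
          have := congrArg (fun x : Fin ℓ × Fin ℓ => (x.2:ℕ)) hc
          simp only at this
          omega
      · -- (z, w) not in the erased set
        intro hc
        rw [Finset.mem_erase] at hc
        have hmem := (mem_iff_start hΨ z w).mp hc.2
        have hge : (z:ℕ) + 1 ≤ startN Ψ (z:ℕ) := by
          unfold startN
          omega
        have : w = y := Fin.ext (by omega)
        exact hc.1 (by rw [this])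
      · exact hγgap
      · exact hv5
    · -- no removable root in row z
      have hnone : ∀ y, ¬ downRel Ψ z y := by push_neg at hex; exact hex
      have hsww : startN Ψ ((w:ℕ)) = startN Ψ (z:ℕ) := by
        rcases hdelta with h | h
        · exact h
        · exfalso
          rcases Nat.lt_or_ge (startN Ψ (z:ℕ)) ℓ with hlt | hge
          · obtain ⟨y, hyv⟩ : ∃ y : Fin ℓ, (y:ℕ) = startN Ψ (z:ℕ) :=
              ⟨⟨startN Ψ (z:ℕ), hlt⟩, rfl⟩
            apply hnone y
            apply downRel_of hΨ ((mem_iff_start hΨ z y).mpr (by omega)) hyv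
            intro x' hx'
            have hxw : x' = w := Fin.ext (by omega)
            intro hmem
            have := (mem_iff_start hΨ x' y).mp hmem
            rw [hxw] at this
            omega
          · have := startN_le (Ψ := Ψ) w
            omega
      rw [PsiZ_of_not hnone]
      apply cascade k hΨ η r p hr hp h1 h2 h3b h4 h5 P hP (z:ℕ) z w rfl hwval hz
        (fun hc => absurd hc hznp) _ _ hΨ.1
      · intro i _ j
        exact Iff.rfl
      · intro j
        rw [mem_iff_start hΨ z j, mem_iff_start hΨ w j]
        omega
      · intro hc
        have hmem := (mem_iff_start hΨ z w).mp hc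
        have hge : (z:ℕ) + 1 ≤ startN Ψ (z:ℕ) := by
          unfold startN
          omega
        have hstz : startN Ψ (z:ℕ) = (z:ℕ) + 1 := by omega
        apply hnone w
        apply downRel_of hΨ hc (by omega)
        intro x' hx'
        have hxw : x' = w := Fin.ext (by omega)
        rw [hxw]
        intro hmem2
        have := rootIdeal_lt hΨ hmem2
        omega
      · exact hγgap
      · exact hv5

/-- The telescoping expansion along the downpath. -/
lemma telescope (hΨ : IsRootIdeal Ψ) (η : Fin ℓ → ℤ) (p : ℕ) (P : Fin ℓ) (hP : (P:ℕ) = p)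
    (Hv : ∀ z : Fin ℓ, inDownpath Ψ P z → z ≠ P →
      ¬ (extendFinZ η ((z:ℕ)+1) < extendFinZ η (z:ℕ)) →
      catalanFn (PsiZ Ψ z) (wtF η p z) = 0) :
    ∀ n : ℕ, ∀ q : Fin ℓ, ℓ - (q:ℕ) = n → inDownpath Ψ P q →
    catalanFn Ψ (wtF η p q) = ∑ z ∈ Finset.univ.filter (fun z : Fin ℓ =>
        inDownpath Ψ q z ∧ (z = q ∨ extendFinZ η ((z:ℕ)+1) < extendFinZ η (z:ℕ))),
      tC ^ bounceCount Ψ q z * catalanFn (PsiZ Ψ z) (wtF η p z) := by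
  intro n
  induction n using Nat.strong_induction_on with
  | _ n IH =>
  intro q hn hq
  by_cases hex : ∃ y, downRel Ψ q y
  · obtain ⟨y, hy⟩ := hex
    have hqylt := downRel_lt hΨ hy
    have hPq := inDownpath_le hΨ hq
    have hPy : inDownpath Ψ P y := hq.tail hy
    have hsplit := catalanFn_split' hΨ.1 hy.1 (wtF η p q)
    have hadj : adjW (wtF η p q) q y = wtF η p y := by
      funext a
      unfold adjW wtF
      by_cases haq : a = q
      · rw [haq, if_pos rfl,
          if_neg (show q ≠ y from fun hc => by rw [hc] at hqylt; omega),
          if_neg (show y ≠ q from fun hc => by rw [← hc] at hqylt; omega)]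
        ring
      · rw [if_neg haq, if_neg (show q ≠ a from fun hc => haq hc.symm)]
        by_cases hay : a = y
        · rw [hay, if_pos rfl]
          ring
        · rw [if_neg hay, if_neg (show y ≠ a from fun hc => hay hc.symm)]
          ring
    rw [hadj] at hsplit
    have hIH := IH (ℓ - (y:ℕ)) (by have := y.isLt; omega) y rfl hPy
    -- reduce the IH sum over F_y to the sum over F_y'
    have hsum_y : (∑ z ∈ Finset.univ.filter (fun z : Fin ℓ =>
          inDownpath Ψ y z ∧ (z = y ∨ (extendFinZ η ((z:ℕ)+1) < extendFinZ η (z:ℕ)))),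
            tC ^ bounceCount Ψ y z * (catalanFn (PsiZ Ψ z) (wtF η p z)))
        = ∑ z ∈ Finset.univ.filter (fun z : Fin ℓ => inDownpath Ψ y z ∧ (extendFinZ η ((z:ℕ)+1) < extendFinZ η (z:ℕ))),
            tC ^ bounceCount Ψ y z * (catalanFn (PsiZ Ψ z) (wtF η p z)) := by
      symm
      apply Finset.sum_subset
      · intro z hzmem
        simp only [Finset.mem_filter, Finset.mem_univ, true_and] at hzmem ⊢
        exact ⟨hzmem.1, Or.inr hzmem.2⟩
      · intro z hzmem hznot
        simp only [Finset.mem_filter, Finset.mem_univ, true_and] at hzmem hznot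
        have hzy : z = y := by
          rcases hzmem.2 with h | h
          · exact h
          · exact absurd ⟨hzmem.1, h⟩ hznot
        subst hzy
        have hznc : ¬ (extendFinZ η ((z:ℕ)+1) < extendFinZ η (z:ℕ)) := fun hc => hznot ⟨hzmem.1, hc⟩
        have hzP : z ≠ P := by
          intro hc
          rw [hc] at hqylt
          omega
        rw [Hv z hPy hzP hznc, mul_zero]
    rw [hsum_y] at hIH
    rw [hsplit, ← PsiZ_of_downRel hΨ hy, hIH]
    -- now rearrange the target sum
    have hqny : q ∉ Finset.univ.filter (fun z : Fin ℓ => inDownpath Ψ y z ∧ (extendFinZ η ((z:ℕ)+1) < extendFinZ η (z:ℕ))) := by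
      simp only [Finset.mem_filter, Finset.mem_univ, true_and]
      rintro ⟨hdp, -⟩
      have := inDownpath_le hΨ hdp
      omega
    have hFq : Finset.univ.filter (fun z : Fin ℓ =>
          inDownpath Ψ q z ∧ (z = q ∨ (extendFinZ η ((z:ℕ)+1) < extendFinZ η (z:ℕ))))
        = insert q (Finset.univ.filter (fun z : Fin ℓ => inDownpath Ψ y z ∧ (extendFinZ η ((z:ℕ)+1) < extendFinZ η (z:ℕ)))) := by
      ext z
      simp only [Finset.mem_filter, Finset.mem_univ, true_and, Finset.mem_insert]
      constructor
      · rintro ⟨hdp, hor⟩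
        rcases Relation.ReflTransGen.cases_head hdp with heq | ⟨d, hd1, hd2⟩
        · exact Or.inl heq.symm
        · right
          rw [downRel_unique hΨ hd1 hy] at hd2
          refine ⟨hd2, ?_⟩
          rcases hor with h | h
          · exfalso
            have := inDownpath_le hΨ hd2
            rw [h] at this
            omega
          · exact h
      · rintro (rfl | ⟨hdp, hcond⟩)
        · exact ⟨Relation.ReflTransGen.refl, Or.inl rfl⟩
        · exact ⟨Relation.ReflTransGen.head hy hdp, Or.inr hcond⟩
    rw [hFq, Finset.sum_insert hqny, bounceCount_self hΨ, pow_zero, one_mul]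
    congr 1
    rw [Finset.mul_sum]
    apply Finset.sum_congr rfl
    intro z hzmem
    simp only [Finset.mem_filter, Finset.mem_univ, true_and] at hzmem
    rw [bounceCount_step hΨ hy hzmem.1, pow_succ]
    ring
  · have hnone : ∀ y, ¬ downRel Ψ q y := by push_neg at hex; exact hex
    have hfilter : Finset.univ.filter (fun z : Fin ℓ =>
          inDownpath Ψ q z ∧ (z = q ∨ extendFinZ η ((z:ℕ)+1) < extendFinZ η (z:ℕ)))
        = {q} := by
      ext z
      simp only [Finset.mem_filter, Finset.mem_univ, true_and, Finset.mem_singleton]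
      constructor
      · rintro ⟨hdp, -⟩
        rcases Relation.ReflTransGen.cases_head hdp with heq | ⟨d, hd1, _⟩
        · exact heq.symm
        · exact absurd hd1 (hnone d)
      · rintro rfl
        exact ⟨Relation.ReflTransGen.refl, Or.inl rfl⟩
    rw [hfilter, Finset.sum_singleton, bounceCount_self hΨ, pow_zero, one_mul,
      PsiZ_of_not hnone]

end CatProof
/-- downpath expansion lemma.  Let `(Ψ,η)` be an indexed root
ideal of length `ℓ`, `r ∈ [ℓ]`, `p ∈ [r]` (0-based indices `p ≤ r < ℓ` below),
satisfying conditions (1)–(5).  Then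
`H(Ψ;η) = ∑_{z ∈ downpath_Ψ(p), z = p or η_z > η_{z+1}}
t^{B_Ψ(p,z)} H(Ψ^z; η + ε_p - ε_z)`, with the convention `η_{ℓ+1} = 0`. -/
theorem catalanFn_downpath_expansion (k : ℕ) (hk : 1 ≤ k) {ℓ : ℕ}
    (Ψ : Finset (Fin ℓ × Fin ℓ)) (hΨ : IsRootIdeal Ψ) (η : Fin ℓ → ℤ)
    (r p : ℕ) (hr : r < ℓ) (hp : p ≤ r)
    (h1 : ∀ i j, r ≤ i → i ≤ j → j < ℓ → extendFinZ η j ≤ extendFinZ η i)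
    (h2 : ∀ i, i ≤ r → r - i ≤ nrN Ψ i)
    (h3a : ∀ i, i ≤ r → styleZN Ψ η i ≤ (k : ℤ))
    (h3b : ∀ i, r < i → i < ℓ →
      styleZN Ψ η i = min (k : ℤ) ((ℓ : ℤ) - 1 - i + extendFinZ η i))
    (h4 : styleZN Ψ η p < (k : ℤ))
    (h5 : p < r → nrN Ψ p = nrN Ψ (p + 1) →
      nrN Ψ (p + 1) ≤ nrN Ψ (p + 2) ∧ extendFinZ η p = extendFinZ η (p + 1) - 1) :
    catalanFn Ψ η =
      ∑ z ∈ Finset.univ.filter (fun z : Fin ℓ =>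
          inDownpath Ψ ⟨p, lt_of_le_of_lt hp hr⟩ z ∧
            ((z : ℕ) = p ∨ extendFinZ η ((z : ℕ) + 1) < extendFinZ η (z : ℕ))),
        tC ^ bounceCount Ψ ⟨p, lt_of_le_of_lt hp hr⟩ z *
          catalanFn (PsiZ Ψ z)
            (fun a => η a + (if (a : ℕ) = p then 1 else 0) -
              (if a = z then 1 else 0)) := by
  classical
  set P : Fin ℓ := ⟨p, lt_of_le_of_lt hp hr⟩ with hPdef
  have hP : (P:ℕ) = p := rfl
  have Hv : ∀ z : Fin ℓ, inDownpath Ψ P z → z ≠ P →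
      ¬ (extendFinZ η ((z:ℕ)+1) < extendFinZ η (z:ℕ)) →
      catalanFn (PsiZ Ψ z) (CatProof.wtF η p z) = 0 :=
    fun z hz hzP hnc =>
      CatProof.vanish k hΨ η r p hr hp h1 h2 h3b h4 h5 P hP z hz hzP hnc
  have ht := CatProof.telescope hΨ η p P hP Hv (ℓ - p) P rfl Relation.ReflTransGen.refl
  have hwtP : CatProof.wtF η p P = η := by
    funext a
    unfold CatProof.wtF
    by_cases ha : (a:ℕ) = p
    · rw [if_pos ha, if_pos (show a = P from Fin.ext (ha.trans hP.symm))]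
      ring
    · rw [if_neg ha, if_neg (show a ≠ P from fun hc => ha (by rw [hc, hP]))]
      ring
  rw [hwtP] at ht
  rw [ht]
  apply Finset.sum_congr
  · ext z
    simp only [Finset.mem_filter, Finset.mem_univ, true_and]
    constructor
    · rintro ⟨hdp, hor⟩
      refine ⟨hdp, ?_⟩
      rcases hor with h | h
      · left
        rw [h, hP]
      · right
        exact h
    · rintro ⟨hdp, hor⟩
      refine ⟨hdp, ?_⟩
      rcases hor with h | h
      · left
        exact Fin.ext (h.trans hP.symm)
      · right
        exact h
  · intro z _
    rfl


end
end
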